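/- arXiv:2102.08681 — 7 statements merged into one kernel-verified Lean document; each statement's English description precedes it below -/
import Mathlib

section
/- Let p > 1, K ≥ 1, and let w̃ be an A_p weight on ℝ with constant K. Let Ω ⊆ ℝ be a nonempty open set and E ⊊ Ω a relatively closed subset such that no connected component of Ω is contained in E. Then every bounded w̃-harmonic function on Ω \ E has a (not necessarily bounded) w̃-harmonic extension to Ω if and only if I \ E is connected for every connected component I of Ω. Moreover, whenever such an extension exists, it is unique. -/
open MeasureTheory Set

/-- `v : ℝ → (0,∞)` is an `A_q` weight on `ℝ` with constant `K`:
for every bounded open interval `I`,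
`((1/|I|)∫_I v) · ((1/|I|)∫_I v^{1/(1-q)})^{q-1} ≤ K`. -/
def IsAqWeight (q K : ℝ) (v : ℝ → ℝ) : Prop :=
  Measurable v ∧ (∀ x, 0 < v x) ∧
    ∀ a b : ℝ, a < b →
      ((∫⁻ x in Set.Ioo a b, ENNReal.ofReal (v x)) / ENNReal.ofReal (b - a)) *
        ((∫⁻ x in Set.Ioo a b, ENNReal.ofReal (v x ^ (1 / (1 - q)))) /
            ENNReal.ofReal (b - a)) ^ (q - 1) ≤
      ENNReal.ofReal K

/-- `u` is `w`-harmonic on the open set `U ⊆ ℝ` (with exponent `p`): on every connected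
component of `U` there are constants `a, b` with `u x = b + a ∫₀ˣ w(t)^{1/(1-p)} dt`. -/
def WHarmonicOn (p : ℝ) (w : ℝ → ℝ) (U : Set ℝ) (u : ℝ → ℝ) : Prop :=
  ∀ x ∈ U, ∃ a b : ℝ, ∀ y ∈ connectedComponentIn U x,
    u y = b + a * ∫ t in (0:ℝ)..y, w t ^ (1 / (1 - p))

/-- `u` is bounded on `S`. -/
def BddOnSet (u : ℝ → ℝ) (S : Set ℝ) : Prop := ∃ M : ℝ, ∀ x ∈ S, |u x| ≤ M


lemma aux_int (p K : ℝ) (hp : 1 < p) (w : ℝ → ℝ)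
    (hmeas : Measurable w) (hpos : ∀ x, 0 < w x)
    (hAp : ∀ a b : ℝ, a < b →
      ((∫⁻ x in Set.Ioo a b, ENNReal.ofReal (w x)) / ENNReal.ofReal (b - a)) *
        ((∫⁻ x in Set.Ioo a b, ENNReal.ofReal (w x ^ (1 / (1 - p)))) /
            ENNReal.ofReal (b - a)) ^ (p - 1) ≤ ENNReal.ofReal K)
    (a b : ℝ) (hab : a < b) :
    IntegrableOn (fun t => w t ^ (1 / (1 - p))) (Ioo a b) := by
  have hfm : Measurable (fun t => w t ^ (1 / (1 - p))) := by fun_prop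
  have hfpos : ∀ t, 0 < w t ^ (1 / (1 - p)) := fun t => Real.rpow_pos_of_pos (hpos t) _
  have hfin : (∫⁻ x in Set.Ioo a b, ENNReal.ofReal (w x ^ (1 / (1 - p)))) < ⊤ := by
    by_contra htop
    push_neg at htop
    have hBtop : (∫⁻ x in Set.Ioo a b, ENNReal.ofReal (w x ^ (1 / (1 - p)))) = ⊤ :=
      top_le_iff.mp htop
    have hd : ENNReal.ofReal (b - a) ≠ ⊤ := ENNReal.ofReal_ne_top
    have hd0 : ENNReal.ofReal (b - a) ≠ 0 := by
      simp [ENNReal.ofReal_eq_zero]; linarith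
    have hB : (∫⁻ x in Set.Ioo a b, ENNReal.ofReal (w x ^ (1 / (1 - p)))) /
        ENNReal.ofReal (b - a) = ⊤ := by
      rw [hBtop]; exact ENNReal.top_div_of_ne_top hd
    have hA0 : 0 < (∫⁻ x in Set.Ioo a b, ENNReal.ofReal (w x)) := by
      rw [lintegral_pos_iff_support (hmeas.ennreal_ofReal)]
      have : Function.support (fun x => ENNReal.ofReal (w x)) = univ := by
        ext x; simp [Function.mem_support, ENNReal.ofReal_eq_zero, not_le, hpos x]
      rw [this]
      simp [Measure.restrict_apply, Real.volume_Ioo]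
      linarith
    have hAq : 0 < (∫⁻ x in Set.Ioo a b, ENNReal.ofReal (w x)) / ENNReal.ofReal (b - a) :=
      ENNReal.div_pos hA0.ne' hd
    have := hAp a b hab
    rw [hB] at this
    rw [ENNReal.top_rpow_of_pos (by linarith)] at this
    rw [ENNReal.mul_top hAq.ne'] at this
    exact (lt_irrefl ⊤ (lt_of_le_of_lt this ENNReal.ofReal_lt_top)).elim
  constructor
  · exact hfm.aestronglyMeasurable.restrict
  · rw [hasFiniteIntegral_iff_ofReal (Filter.Eventually.of_forall (fun t => (hfpos t).le))]
    exact hfin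

lemma aux_ii (f : ℝ → ℝ) (h : ∀ a b : ℝ, a < b → IntegrableOn f (Ioo a b))
    (a b : ℝ) : IntervalIntegrable f volume a b := by
  rw [intervalIntegrable_iff]
  have h1 : uIoc a b ⊆ Ioo (min a b - 1) (max a b + 1) := by
    intro x hx
    rcases hx with ⟨h1, h2⟩
    have hm : min a b ≤ a ∧ min a b ≤ b := ⟨min_le_left a b, min_le_right a b⟩
    have hM : a ≤ max a b ∧ b ≤ max a b := ⟨le_max_left a b, le_max_right a b⟩
    simp only [mem_Ioo]
    exact ⟨by linarith, by linarith⟩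
  exact (h _ _ (by have := min_le_max (a := a) (b := b); linarith)).mono_set h1

lemma aux_sm (f : ℝ → ℝ) (hpos : ∀ t, 0 < f t)
    (h : ∀ a b : ℝ, a < b → IntegrableOn f (Ioo a b)) :
    StrictMono (fun y => ∫ t in (0:ℝ)..y, f t) := by
  intro y1 y2 hy
  have h1 : IntervalIntegrable f volume 0 y1 := aux_ii f h 0 y1
  have h2 : IntervalIntegrable f volume 0 y2 := aux_ii f h 0 y2
  have h3 : IntervalIntegrable f volume y1 y2 := aux_ii f h y1 y2
  have key : (0:ℝ) < ∫ t in y1..y2, f t :=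
    intervalIntegral.intervalIntegral_pos_of_pos_on h3 (fun x _ => hpos x) hy
  have heq := intervalIntegral.integral_interval_sub_left h2 h1
  simp only []
  linarith [heq ▸ key]

lemma aux_two (S : Set ℝ) (hS : IsOpen S) (hne : S.Nonempty) :
    ∃ y1 y2, y1 ∈ S ∧ y2 ∈ S ∧ y1 < y2 := by
  obtain ⟨x, hx⟩ := hne
  obtain ⟨ε, hε, hball⟩ := Metric.isOpen_iff.mp hS x hx
  refine ⟨x, x + ε/2, hx, ?_, by linarith⟩
  apply hball
  simp only [Metric.mem_ball, Real.dist_eq, add_sub_cancel_left]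
  rw [abs_of_nonneg (by linarith)]
  linarith

lemma aux_unique (g : ℝ → ℝ) (a1 b1 a2 b2 y1 y2 : ℝ) (hne : g y1 ≠ g y2)
    (h1 : b1 + a1 * g y1 = b2 + a2 * g y1) (h2 : b1 + a1 * g y2 = b2 + a2 * g y2) :
    a1 = a2 ∧ b1 = b2 := by
  have ha : a1 = a2 := by
    have h3 : (a1 - a2) * (g y1 - g y2) = 0 := by nlinarith [h1, h2]
    rcases mul_eq_zero.mp h3 with h | h
    · linarith
    · exact absurd (by linarith : g y1 = g y2) hne
  refine ⟨ha, ?_⟩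
  rw [ha] at h1; linarith

/-- **Weak removability for bounded `w̃`-harmonic functions on weighted `ℝ`.**
Every bounded `w̃`-harmonic function on `Ω \ E` has a (not necessarily bounded)
`w̃`-harmonic extension to `Ω` if and only if `I \ E` is connected for every
connected component `I` of `Ω`. Moreover, such extensions, whenever they exist,
are unique. -/
theorem weakly_removable_bounded_wharmonic_on_weighted_R
    (p K : ℝ) (hp : 1 < p) (hK : 1 ≤ K) (w : ℝ → ℝ) (hw : IsAqWeight p K w)
    (Ω E : Set ℝ) (hΩopen : IsOpen Ω) (hΩne : Ω.Nonempty)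
    (hE : E ⊂ Ω) (hEclosed : Ω ∩ closure E ⊆ E)
    (hcomp : ∀ x ∈ Ω, ¬ connectedComponentIn Ω x ⊆ E) :
    ((∀ u : ℝ → ℝ, WHarmonicOn p w (Ω \ E) u → BddOnSet u (Ω \ E) →
        ∃ U : ℝ → ℝ, WHarmonicOn p w Ω U ∧ ∀ x ∈ Ω \ E, U x = u x) ↔
      ∀ x ∈ Ω, IsPreconnected (connectedComponentIn Ω x \ E)) ∧
    (∀ u U₁ U₂ : ℝ → ℝ, WHarmonicOn p w (Ω \ E) u →
      WHarmonicOn p w Ω U₁ → WHarmonicOn p w Ω U₂ →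
      (∀ x ∈ Ω \ E, U₁ x = u x) → (∀ x ∈ Ω \ E, U₂ x = u x) →
      ∀ x ∈ Ω, U₁ x = U₂ x) := by
  classical
  obtain ⟨hmeas, hpos, hAp⟩ := hw
  set g : ℝ → ℝ := fun y => ∫ t in (0:ℝ)..y, w t ^ (1 / (1 - p)) with hg
  have hint : ∀ a b : ℝ, a < b → IntegrableOn (fun t => w t ^ (1 / (1 - p))) (Ioo a b) :=
    fun a b hab => aux_int p K hp w hmeas hpos hAp a b hab
  have hsm : StrictMono g :=
    aux_sm _ (fun t => Real.rpow_pos_of_pos (hpos t) _) hint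
  -- openness of Ω \ E
  have hΩEeq : Ω \ E = Ω ∩ (closure E)ᶜ := by
    ext y
    constructor
    · rintro ⟨h1, h2⟩
      exact ⟨h1, fun hc => h2 (hEclosed ⟨h1, hc⟩)⟩
    · rintro ⟨h1, h2⟩
      exact ⟨h1, fun he => h2 (subset_closure he)⟩
  have hΩEopen : IsOpen (Ω \ E) := by
    rw [hΩEeq]; exact hΩopen.inter isClosed_closure.isOpen_compl
  -- nonemptiness of comp \ E
  have hcompne : ∀ x ∈ Ω, (connectedComponentIn Ω x \ E).Nonempty := by
    intro x hx
    obtain ⟨y, hy1, hy2⟩ := Set.not_subset.mp (hcomp x hx)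
    exact ⟨y, hy1, hy2⟩
  have hcESub : ∀ x : ℝ, connectedComponentIn Ω x \ E ⊆ Ω \ E :=
    fun x => diff_subset_diff_left (connectedComponentIn_subset Ω x)
  have hcompEopen : ∀ x ∈ Ω, IsOpen (connectedComponentIn Ω x \ E) := by
    intro x hx
    have : connectedComponentIn Ω x \ E = connectedComponentIn Ω x ∩ (Ω \ E) := by
      ext y
      constructor
      · rintro ⟨h1, h2⟩; exact ⟨h1, connectedComponentIn_subset Ω x h1, h2⟩
      · rintro ⟨h1, h2, h3⟩; exact ⟨h1, h3⟩
    rw [this]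
    exact (hΩopen.connectedComponentIn).inter hΩEopen
  -- two points with distinct g values in comp \ E
  have htwo : ∀ x ∈ Ω, ∃ y1 y2, y1 ∈ connectedComponentIn Ω x \ E ∧
      y2 ∈ connectedComponentIn Ω x \ E ∧ g y1 ≠ g y2 := by
    intro x hx
    obtain ⟨y1, y2, h1, h2, h12⟩ := aux_two _ (hcompEopen x hx) (hcompne x hx)
    exact ⟨y1, y2, h1, h2, (hsm h12).ne⟩
  -- uniqueness (shared)
  have uniq : ∀ U₁ U₂ : ℝ → ℝ, WHarmonicOn p w Ω U₁ → WHarmonicOn p w Ω U₂ →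
      (∀ x ∈ Ω \ E, U₁ x = U₂ x) → ∀ x ∈ Ω, U₁ x = U₂ x := by
    intro U₁ U₂ h1 h2 hag x hx
    obtain ⟨a1, b1, hab1⟩ := h1 x hx
    obtain ⟨a2, b2, hab2⟩ := h2 x hx
    obtain ⟨y1, y2, hy1, hy2, hgne⟩ := htwo x hx
    have e1 : b1 + a1 * g y1 = b2 + a2 * g y1 := by
      rw [← hab1 y1 hy1.1, ← hab2 y1 hy1.1]
      exact hag y1 (hcESub x hy1)
    have e2 : b1 + a1 * g y2 = b2 + a2 * g y2 := by
      rw [← hab1 y2 hy2.1, ← hab2 y2 hy2.1]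
      exact hag y2 (hcESub x hy2)
    obtain ⟨ha, hb⟩ := aux_unique g a1 b1 a2 b2 y1 y2 hgne e1 e2
    have hxc : x ∈ connectedComponentIn Ω x := mem_connectedComponentIn hx
    rw [hab1 x hxc, hab2 x hxc, ha, hb]
  constructor
  · constructor
    · -- forward: extension property implies connectivity
      intro hext x hx
      by_contra hnc
      obtain ⟨x₀, hx₀c, hx₀E⟩ := hcompne x hx
      have hx₀Ω : x₀ ∈ Ω := connectedComponentIn_subset Ω x hx₀c
      have hx₀ΩE : x₀ ∈ Ω \ E := ⟨hx₀Ω, hx₀E⟩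
      set C := connectedComponentIn (Ω \ E) x₀ with hC
      have hCsub : C ⊆ connectedComponentIn Ω x \ E := by
        intro z hz
        have hzΩE : z ∈ Ω \ E := connectedComponentIn_subset _ _ hz
        have h1 : C ⊆ connectedComponentIn Ω x₀ :=
          (isPreconnected_connectedComponentIn).subset_connectedComponentIn
            (mem_connectedComponentIn hx₀ΩE)
            ((connectedComponentIn_subset _ _).trans diff_subset)
        have h2 : connectedComponentIn Ω x = connectedComponentIn Ω x₀ :=
          connectedComponentIn_eq hx₀c
        exact ⟨h2 ▸ h1 hz, hzΩE.2⟩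
      have hCne : C ≠ connectedComponentIn Ω x \ E := by
        intro h
        exact hnc (h ▸ isPreconnected_connectedComponentIn)
      obtain ⟨z, hzc, hzC⟩ := Set.not_subset.mp
        (fun habs => hCne (le_antisymm hCsub habs))
      -- the test function
      set u : ℝ → ℝ := fun y => if y ∈ C then 1 else 0 with hu
      have huh : WHarmonicOn p w (Ω \ E) u := by
        intro y hy
        by_cases hyC : y ∈ C
        · refine ⟨0, 1, fun z' hz' => ?_⟩
          have hCy : C = connectedComponentIn (Ω \ E) y := connectedComponentIn_eq hyC
          have : z' ∈ C := hCy ▸ hz'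
          simp [hu, this]
        · refine ⟨0, 0, fun z' hz' => ?_⟩
          have hz'C : z' ∉ C := by
            intro hz'C
            have h1 : C = connectedComponentIn (Ω \ E) z' := connectedComponentIn_eq hz'C
            have h2 : connectedComponentIn (Ω \ E) y = connectedComponentIn (Ω \ E) z' :=
              connectedComponentIn_eq hz'
            exact hyC (h1 ▸ h2 ▸ mem_connectedComponentIn hy)
          simp [hu, hz'C]
      have hubdd : BddOnSet u (Ω \ E) := by
        refine ⟨1, fun y _ => ?_⟩
        by_cases hyC : y ∈ C <;> simp [hu, hyC]
      obtain ⟨U, hUh, hUeq⟩ := hext u huh hubdd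
      obtain ⟨a, b, hab⟩ := hUh x hx
      -- two points in C
      have hCopen : IsOpen C := hΩEopen.connectedComponentIn
      obtain ⟨y1, y2, hy1, hy2, h12⟩ := aux_two C hCopen ⟨x₀, mem_connectedComponentIn hx₀ΩE⟩
      have hgne : g y1 ≠ g y2 := (hsm h12).ne
      have e1 : b + a * g y1 = 1 := by
        rw [← hab y1 (hCsub hy1).1]
        rw [hUeq y1 (hcESub x (hCsub hy1))]
        simp [hu, hy1]
      have e2 : b + a * g y2 = 1 := by
        rw [← hab y2 (hCsub hy2).1]
        rw [hUeq y2 (hcESub x (hCsub hy2))]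
        simp [hu, hy2]
      obtain ⟨ha, hb⟩ := aux_unique g a b 0 1 y1 y2 hgne (by linarith) (by linarith)
      have ez : b + a * g z = 0 := by
        rw [← hab z hzc.1]
        rw [hUeq z (hcESub x hzc)]
        simp [hu, hzC]
      rw [ha, hb] at ez
      norm_num at ez
    · -- backward: connectivity implies extension
      intro hpre u hu _hbdd
      have hex : ∀ x, x ∈ Ω → ∃ ab : ℝ × ℝ,
          ∀ z ∈ connectedComponentIn Ω x \ E, u z = ab.2 + ab.1 * g z := by
        intro x hx
        obtain ⟨y, hyc, hyE⟩ := hcompne x hx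
        have hyΩ : y ∈ Ω := connectedComponentIn_subset Ω x hyc
        have hset : connectedComponentIn (Ω \ E) y = connectedComponentIn Ω x \ E := by
          apply le_antisymm
          · intro z hz
            have hzΩE : z ∈ Ω \ E := connectedComponentIn_subset _ _ hz
            have h1 : connectedComponentIn (Ω \ E) y ⊆ connectedComponentIn Ω y :=
              (isPreconnected_connectedComponentIn).subset_connectedComponentIn
                (mem_connectedComponentIn ⟨hyΩ, hyE⟩)
                ((connectedComponentIn_subset _ _).trans diff_subset)
            have h2 : connectedComponentIn Ω x = connectedComponentIn Ω y :=
              connectedComponentIn_eq hyc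
            exact ⟨h2 ▸ h1 hz, hzΩE.2⟩
          · exact (hpre x hx).subset_connectedComponentIn ⟨hyc, hyE⟩ (hcESub x)
        obtain ⟨a, b, hab⟩ := hu y ⟨hyΩ, hyE⟩
        exact ⟨(a, b), fun z hz => hab z (hset ▸ hz)⟩
      choose F hF using hex
      refine ⟨fun y => if hy : y ∈ Ω then (F y hy).2 + (F y hy).1 * g y else 0, ?_, ?_⟩
      · intro x hx
        refine ⟨(F x hx).1, (F x hx).2, fun z hz => ?_⟩
        have hzΩ : z ∈ Ω := connectedComponentIn_subset Ω x hz
        have hcc : connectedComponentIn Ω x = connectedComponentIn Ω z :=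
          connectedComponentIn_eq hz
        obtain ⟨y1, y2, hy1, hy2, hgne⟩ := htwo x hx
        have e1 : (F z hzΩ).2 + (F z hzΩ).1 * g y1 = (F x hx).2 + (F x hx).1 * g y1 := by
          rw [← hF z hzΩ y1 (hcc ▸ hy1), ← hF x hx y1 hy1]
        have e2 : (F z hzΩ).2 + (F z hzΩ).1 * g y2 = (F x hx).2 + (F x hx).1 * g y2 := by
          rw [← hF z hzΩ y2 (hcc ▸ hy2), ← hF x hx y2 hy2]
        obtain ⟨ha, hb⟩ := aux_unique g _ _ _ _ y1 y2 hgne e1 e2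
        simp only [dif_pos hzΩ]
        rw [ha, hb]
      · intro x hxΩE
        simp only [dif_pos hxΩE.1]
        exact (hF x hxΩE.1 x ⟨mem_connectedComponentIn hxΩE.1, hxΩE.2⟩).symm
  · -- uniqueness
    intro u U₁ U₂ _hu h1 h2 he1 he2
    exact uniq U₁ U₂ h1 h2 (fun x hx => (he1 x hx).trans (he2 x hx).symm)
end

section
/- Let p > 1, let Ω ⊆ ℝ be a nonempty open set, and let E ⊊ Ω be a relatively closed subset such that no connected component of Ω is contained in E. Assume that for every constant C there exists a connected component I of Ω such that either I \ E is disconnected or |I| > C |I \ E| (Lebesgue measure). Then there exists a bounded function u on Ω \ E which is affine on every connected component of Ω \ E (hence p-harmonic on Ω \ E), such that for no Q ≥ 1 does u have a bounded Q-quasiharmonic extension to Ω. -/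
open MeasureTheory Set

/-- `u` is locally absolutely continuous on the open set `U ⊆ ℝ` with derivative `du`:
on every compact subinterval of `U`, `du` is integrable and the fundamental theorem
of calculus holds for `u` with integrand `du`. -/
def LocACWith (U : Set ℝ) (u du : ℝ → ℝ) : Prop :=
  ∀ a b : ℝ, a ≤ b → Set.Icc a b ⊆ U →
    MeasureTheory.IntegrableOn du (Set.Icc a b) ∧
      ∀ x ∈ Set.Icc a b, u x = u a + ∫ t in a..x, du t

/-- `du ∈ L^p_loc(U)`: `|du|^p` is integrable on every compact subinterval of `U`. -/
def LpLocOn (p : ℝ) (U : Set ℝ) (du : ℝ → ℝ) : Prop :=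
  ∀ a b : ℝ, a ≤ b → Set.Icc a b ⊆ U →
    MeasureTheory.IntegrableOn (fun t => |du t| ^ p) (Set.Icc a b)

/-- `u` is a `Q`-quasiminimizer on the open set `U ⊆ ℝ` (unweighted, exponent `p`),
witnessed by the derivative `du`: `u` is locally absolutely continuous with derivative
`du ∈ L^p_loc(U)`, and for every open `G` with compact closure contained in `U` and
every competitor `v` (locally absolutely continuous with derivative `dv ∈ L^p_loc(U)`)
agreeing with `u` on `U \ G`, one has `∫_G |u'|^p ≤ Q ∫_G |v'|^p`. -/
def IsQuasiminimizerWith (p Q : ℝ) (U : Set ℝ) (u du : ℝ → ℝ) : Prop :=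
  Measurable du ∧ LocACWith U u du ∧ LpLocOn p U du ∧
    ∀ G : Set ℝ, IsOpen G → IsCompact (closure G) → closure G ⊆ U →
      ∀ v dv : ℝ → ℝ, Measurable dv → LocACWith U v dv → LpLocOn p U dv →
        (∀ x ∈ U \ G, v x = u x) →
        ∫⁻ x in G, ENNReal.ofReal (|du x| ^ p) ≤
          ENNReal.ofReal Q * ∫⁻ x in G, ENNReal.ofReal (|dv x| ^ p)

/-- `u` is a `Q`-quasiminimizer on `U` (unweighted, exponent `p`). -/
def IsQuasiminimizerOn (p Q : ℝ) (U : Set ℝ) (u : ℝ → ℝ) : Prop :=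
  ∃ du : ℝ → ℝ, IsQuasiminimizerWith p Q U u du

/-- `u` is `Q`-quasiharmonic on `U`: a continuous `Q`-quasiminimizer. -/
def IsQuasiharmonicOn (p Q : ℝ) (U : Set ℝ) (u : ℝ → ℝ) : Prop :=
  ContinuousOn u U ∧ IsQuasiminimizerOn p Q U u

lemma clamp_Ioc_eq {a b c x : ℝ} (hab : a ≤ b) (hcx : c ≤ x) :
    Ioc (a ⊔ c) (b ⊓ x) = Ioc (max a (min c b)) (max a (min x b)) := by
  rcases le_total x a with hxa | hax
  · have hxb : x ≤ b := hxa.trans hab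
    have hcb : c ≤ b := hcx.trans hxb
    rw [sup_eq_left.2 (hcx.trans hxa), inf_eq_right.2 hxb, min_eq_left hcb, min_eq_left hxb,
      max_eq_left (hcx.trans hxa), max_eq_left hxa, Ioc_self, Ioc_eq_empty_of_le hxa]
  · rcases le_total b c with hbc | hcb
    · have hbx : b ≤ x := hbc.trans hcx
      rw [sup_eq_right.2 (hab.trans hbc), inf_eq_left.2 hbx, min_eq_right hbc,
        min_eq_right hbx, max_eq_right hab, Ioc_self, Ioc_eq_empty_of_le hbc]
    · rw [min_eq_left hcb, max_eq_right (le_min hax hab), min_comm b x]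

lemma indicator_intervalIntegral (g : ℝ → ℝ) {a b c x : ℝ} (hab : a ≤ b) (hcx : c ≤ x) :
    ∫ t in c..x, (Ioc a b).indicator g t
      = ∫ t in (max a (min c b))..(max a (min x b)), g t := by
  have hmm : max a (min c b) ≤ max a (min x b) := max_le_max le_rfl (min_le_min hcx le_rfl)
  rw [intervalIntegral.integral_of_le hcx, intervalIntegral.integral_of_le hmm,
    integral_indicator measurableSet_Ioc (μ := volume.restrict (Ioc c x)),
    Measure.restrict_restrict measurableSet_Ioc,
    Ioc_inter_Ioc, clamp_Ioc_eq hab hcx]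

lemma locAC_competitor {Ω : Set ℝ} {U du : ℝ → ℝ} (hAC : LocACWith Ω U du)
    {a b : ℝ} (hab : a < b) (hsub : Icc a b ⊆ Ω) :
    LocACWith Ω (fun t => if t ∈ Icc a b then U a + (U b - U a)/(b-a) * (t - a) else U t)
      (fun t => if t ∈ Ioc a b then (U b - U a)/(b-a) else du t) := by
  have hba : b - a ≠ 0 := by intro h; exact absurd (by linarith : b ≤ a) (not_le.2 hab)
  set k := (U b - U a)/(b-a) with hk
  have hkba : k * (b - a) = U b - U a := div_mul_cancel₀ _ hba
  -- the derivative as a sum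
  have hveq : (fun t => if t ∈ Ioc a b then k else du t)
      = fun t => du t + (Ioc a b).indicator (fun s => k - du s) t := by
    funext t
    by_cases h : t ∈ Ioc a b
    · simp [h]
    · simp [h]
  -- clamp function
  set m : ℝ → ℝ := fun t => max a (min t b) with hm
  have hmIcc : ∀ t, m t ∈ Icc a b := fun t =>
    ⟨le_max_left _ _, max_le (le_of_lt hab) (min_le_right _ _)⟩
  have hmono : ∀ {s t : ℝ}, s ≤ t → m s ≤ m t := fun h =>
    max_le_max le_rfl (min_le_min h le_rfl)
  -- the function as a correction of U
  have hv : ∀ t, (if t ∈ Icc a b then U a + k * (t - a) else U t)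
      = U t - U (m t) + U a + k * (m t - a) := by
    intro t
    by_cases h : t ∈ Icc a b
    · have : m t = t := by
        rw [hm]; dsimp only; rw [min_eq_left h.2, max_eq_right h.1]
      rw [if_pos h, this]; ring
    · rcases lt_or_ge t a with h1 | h1
      · have : m t = a := by
          rw [hm]; dsimp only; rw [min_eq_left (by linarith : t ≤ b), max_eq_left (le_of_lt h1)]
        rw [if_neg h, this]; ring
      · have h2 : b < t := by
          by_contra h2
          exact h ⟨h1, not_lt.1 h2⟩
        have : m t = b := by
          rw [hm]; dsimp only; rw [min_eq_right (le_of_lt h2), max_eq_right (le_of_lt hab)]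
        rw [if_neg h, this, hkba]; ring
  intro c e hce hIcc
  obtain ⟨hdu, hftc⟩ := hAC c e hce hIcc
  obtain ⟨hduab, hftcab⟩ := hAC a b (le_of_lt hab) hsub
  constructor
  · rw [hveq]
    exact hdu.add (((integrable_const k).sub hdu).indicator measurableSet_Ioc)
  · intro x hx
    have hcx : c ≤ x := hx.1
    have hsub1 : Icc c x ⊆ Icc c e := Icc_subset_Icc le_rfl hx.2
    have hU1 : U x = U c + ∫ t in c..x, du t := hftc x hx
    -- FTC for U on [m c, m x]
    have hsub2 : Icc (m c) (m x) ⊆ Ω :=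
      fun t ht => hsub ⟨le_trans (hmIcc c).1 ht.1, le_trans ht.2 (hmIcc x).2⟩
    obtain ⟨hdu2, hftc2⟩ := hAC (m c) (m x) (hmono hcx) hsub2
    have hU2 : U (m x) = U (m c) + ∫ t in (m c)..(m x), du t :=
      hftc2 (m x) ⟨hmono hcx, le_rfl⟩
    -- compute the integral of dv
    have hi1 : IntervalIntegrable du volume c x := by
      rw [intervalIntegrable_iff_integrableOn_Icc_of_le hcx]
      exact hdu.mono_set hsub1
    have hi2 : IntervalIntegrable ((Ioc a b).indicator (fun s => k - du s)) volume c x := by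
      rw [intervalIntegrable_iff_integrableOn_Icc_of_le hcx]
      exact (((integrable_const k).sub (hdu.mono_set hsub1)).indicator measurableSet_Ioc)
    have hi3 : IntervalIntegrable du volume (m c) (m x) := by
      rw [intervalIntegrable_iff_integrableOn_Icc_of_le (hmono hcx)]
      exact hdu2
    have hint : ∫ t in c..x, (if t ∈ Ioc a b then k else du t)
        = (∫ t in c..x, du t) + (k * (m x - m c) - ∫ t in (m c)..(m x), du t) := by
      rw [hveq, intervalIntegral.integral_add hi1 hi2,
        indicator_intervalIntegral (fun s => k - du s) (le_of_lt hab) hcx,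
        intervalIntegral.integral_sub intervalIntegrable_const hi3,
        intervalIntegral.integral_const]
      rw [smul_eq_mul]
      ring
    dsimp only
    rw [hv x, hv c, hint, hU1, hU2]
    ring

lemma holder_lower {p : ℝ} (hp : 1 < p) {du : ℝ → ℝ} (hmeas : Measurable du)
    {c d : ℝ} (hcd : c ≤ d) (hint : IntegrableOn du (Icc c d)) (V : ℝ)
    (hV : V = ∫ t in c..d, du t) :
    ENNReal.ofReal (|V| ^ p) ≤
      (∫⁻ x in Ioo c d, ENNReal.ofReal (|du x| ^ p)) * ENNReal.ofReal (d - c) ^ (p - 1) := by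
  have hp0 : (0:ℝ) < p := lt_trans zero_lt_one hp
  set q := Real.conjExponent p with hq
  have hpq : p.HolderConjugate q := Real.HolderConjugate.conjExponent hp
  set μ := volume.restrict (Ioo c d) with hμ
  have hint' : IntegrableOn (fun t => |du t|) (Ioc c d) :=
    (hint.mono_set Ioc_subset_Icc_self).abs
  have h1 : ENNReal.ofReal |V| ≤ ∫⁻ x, ENNReal.ofReal |du x| ∂μ := by
    have habs : |V| ≤ ∫ t in Ioc c d, |du t| := by
      rw [hV, ← intervalIntegral.integral_of_le hcd]
      exact intervalIntegral.abs_integral_le_integral_abs hcd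
    calc ENNReal.ofReal |V| ≤ ENNReal.ofReal (∫ t in Ioc c d, |du t|) :=
          ENNReal.ofReal_le_ofReal habs
      _ = ∫⁻ x in Ioc c d, ENNReal.ofReal (|du x|) :=
          ofReal_integral_eq_lintegral_ofReal hint'
            (Filter.Eventually.of_forall fun t => abs_nonneg _)
      _ = ∫⁻ x, ENNReal.ofReal (|du x|) ∂μ := by
          rw [hμ]
          exact (setLIntegral_congr (Ioo_ae_eq_Ioc (μ := volume) (a := c) (b := d))).symm
  have h2 : ∫⁻ x, ENNReal.ofReal (|du x|) ∂μ ≤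
      (∫⁻ x, ENNReal.ofReal (|du x|) ^ p ∂μ) ^ (1 / p) * (μ univ) ^ (1 / q) := by
    have := ENNReal.lintegral_mul_le_Lp_mul_Lq μ hpq
      (f := fun x => ENNReal.ofReal (|du x|)) (g := fun _ => 1)
      ((hmeas.abs.ennreal_ofReal).aemeasurable) aemeasurable_const
    simpa [ENNReal.one_rpow, lintegral_one] using this
  have hμuniv : μ univ = ENNReal.ofReal (d - c) := by
    rw [hμ, Measure.restrict_apply_univ, Real.volume_Ioo]
  have h3 : ENNReal.ofReal |V| ≤
      (∫⁻ x, ENNReal.ofReal (|du x|) ^ p ∂μ) ^ (1 / p) * ENNReal.ofReal (d - c) ^ (1 / q) := by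
    rw [← hμuniv]; exact le_trans h1 h2
  have h4 := ENNReal.rpow_le_rpow h3 (le_of_lt hp0)
  rw [ENNReal.mul_rpow_of_nonneg _ _ (le_of_lt hp0), ← ENNReal.rpow_mul, ← ENNReal.rpow_mul] at h4
  have e1 : 1 / p * p = 1 := by field_simp
  have e2 : 1 / q * p = p - 1 := by
    have hq' : q = p / (p - 1) := rfl
    rw [hq', one_div_div, div_mul_cancel₀ _ (ne_of_gt hp0)]
  rw [e1, e2, ENNReal.rpow_one] at h4
  calc ENNReal.ofReal (|V| ^ p) = ENNReal.ofReal |V| ^ p :=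
        (ENNReal.ofReal_rpow_of_nonneg (abs_nonneg _) (le_of_lt hp0)).symm
    _ ≤ (∫⁻ x, ENNReal.ofReal (|du x|) ^ p ∂μ) * ENNReal.ofReal (d - c) ^ (p - 1) := h4
    _ = (∫⁻ x, ENNReal.ofReal (|du x| ^ p) ∂μ) * ENNReal.ofReal (d - c) ^ (p - 1) := by
        congr 1
        refine lintegral_congr fun x => ?_
        exact ENNReal.ofReal_rpow_of_nonneg (abs_nonneg _) (le_of_lt hp0)

lemma star_estimate {p Q : ℝ} (hp : 1 < p) (hQ : 1 ≤ Q) {Ω : Set ℝ}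
    {U du : ℝ → ℝ} (hmeas : Measurable du) (hAC : LocACWith Ω U du) (hLp : LpLocOn p Ω du)
    (hqm : ∀ G : Set ℝ, IsOpen G → IsCompact (closure G) → closure G ⊆ Ω →
      ∀ v dv : ℝ → ℝ, Measurable dv → LocACWith Ω v dv → LpLocOn p Ω dv →
        (∀ x ∈ Ω \ G, v x = U x) →
        ∫⁻ x in G, ENNReal.ofReal (|du x| ^ p) ≤
          ENNReal.ofReal Q * ∫⁻ x in G, ENNReal.ofReal (|dv x| ^ p))
    {a b c d : ℝ} (hab : a < b) (hac : a ≤ c) (hcd : c < d) (hdb : d ≤ b)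
    (hsub : Icc a b ⊆ Ω) :
    |U d - U c| ^ p * (b - a) ^ (p - 1) ≤ Q * (|U b - U a| ^ p * (d - c) ^ (p - 1)) := by
  have hp0 : (0:ℝ) < p := lt_trans zero_lt_one hp
  have hba0 : (0:ℝ) < b - a := by linarith
  have hdc0 : (0:ℝ) < d - c := by linarith
  have hQ0 : (0:ℝ) ≤ Q := by linarith
  set k := (U b - U a) / (b - a) with hk
  -- lower bound
  have hcdΩ : Icc c d ⊆ Ω := fun t ht => hsub ⟨by linarith [ht.1], by linarith [ht.2]⟩
  obtain ⟨hducd, hftccd⟩ := hAC c d (le_of_lt hcd) hcdΩ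
  have hV : U d - U c = ∫ t in c..d, du t := by
    have := hftccd d ⟨le_of_lt hcd, le_rfl⟩
    linarith
  have hlow := holder_lower hp hmeas (le_of_lt hcd) hducd (U d - U c) hV
  have hmono : (∫⁻ x in Ioo c d, ENNReal.ofReal (|du x| ^ p)) ≤
      ∫⁻ x in Ioo a b, ENNReal.ofReal (|du x| ^ p) :=
    lintegral_mono_set (Ioo_subset_Ioo hac hdb)
  -- the competitor
  set v : ℝ → ℝ := fun t => if t ∈ Icc a b then U a + k * (t - a) else U t with hv
  set dv : ℝ → ℝ := fun t => if t ∈ Ioc a b then k else du t with hdv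
  have hdvmeas : Measurable dv := Measurable.ite measurableSet_Ioc measurable_const hmeas
  have hdvAC : LocACWith Ω v dv := locAC_competitor hAC hab hsub
  have hdvLp : LpLocOn p Ω dv := by
    intro c' e' hce hsub'
    refine Integrable.mono' ((integrable_const (|k| ^ p)).add (hLp c' e' hce hsub'))
      ((by fun_prop : Measurable fun t => |dv t| ^ p).aestronglyMeasurable) ?_
    refine Filter.Eventually.of_forall fun t => ?_
    rw [Real.norm_eq_abs, abs_of_nonneg (Real.rpow_nonneg (abs_nonneg _) _)]
    simp only [hdv]
    split_ifs with h
    · exact le_add_of_nonneg_right (Real.rpow_nonneg (abs_nonneg _) _)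
    · exact le_add_of_nonneg_left (Real.rpow_nonneg (abs_nonneg _) _)
  have hveq : ∀ x ∈ Ω \ Ioo a b, v x = U x := by
    intro x hx
    by_cases h : x ∈ Icc a b
    · rcases eq_or_lt_of_le h.1 with h1 | h1
      · rw [hv]; dsimp only; rw [if_pos h, ← h1]; ring
      · have h2 : x = b := le_antisymm h.2 (by
          by_contra h3
          exact hx.2 ⟨h1, lt_of_not_ge h3⟩)
        rw [hv]; dsimp only
        rw [if_pos h, h2, div_mul_cancel₀ _ (ne_of_gt hba0)]
        ring
    · rw [hv]; dsimp only; rw [if_neg h]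
  have hclos : closure (Ioo a b) = Icc a b := closure_Ioo (ne_of_lt hab)
  have hup := hqm (Ioo a b) isOpen_Ioo (by rw [hclos]; exact isCompact_Icc)
    (by rw [hclos]; exact hsub) v dv hdvmeas hdvAC hdvLp hveq
  have hconst : (∫⁻ x in Ioo a b, ENNReal.ofReal (|dv x| ^ p))
      = ENNReal.ofReal (|k| ^ p * (b - a)) := by
    have hdvx : ∀ x ∈ Ioo a b, ENNReal.ofReal (|dv x| ^ p) = ENNReal.ofReal (|k| ^ p) := by
      intro x hx
      simp only [hdv]
      rw [if_pos (Ioo_subset_Ioc_self hx)]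
    rw [setLIntegral_congr_fun measurableSet_Ioo hdvx,
      setLIntegral_const, Real.volume_Ioo,
      ← ENNReal.ofReal_mul (Real.rpow_nonneg (abs_nonneg _) _)]
  -- combine
  have hkey : ENNReal.ofReal (|U d - U c| ^ p) ≤
      ENNReal.ofReal (Q * (|k| ^ p * (b - a)) * (d - c) ^ (p - 1)) := by
    calc ENNReal.ofReal (|U d - U c| ^ p)
        ≤ (∫⁻ x in Ioo c d, ENNReal.ofReal (|du x| ^ p)) * ENNReal.ofReal (d - c) ^ (p - 1) :=
          hlow
      _ ≤ (∫⁻ x in Ioo a b, ENNReal.ofReal (|du x| ^ p)) * ENNReal.ofReal (d - c) ^ (p - 1) :=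
          mul_le_mul_left hmono _
      _ ≤ (ENNReal.ofReal Q * ENNReal.ofReal (|k| ^ p * (b - a)))
            * ENNReal.ofReal (d - c) ^ (p - 1) := by
          rw [← hconst]; exact mul_le_mul_left hup _
      _ = ENNReal.ofReal (Q * (|k| ^ p * (b - a)) * (d - c) ^ (p - 1)) := by
          rw [ENNReal.ofReal_rpow_of_nonneg (le_of_lt hdc0) (by linarith : (0:ℝ) ≤ p - 1),
            ← ENNReal.ofReal_mul hQ0,
            ← ENNReal.ofReal_mul (by positivity : (0:ℝ) ≤ Q * (|k| ^ p * (b - a)))]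
  have hreal : |U d - U c| ^ p ≤ Q * (|k| ^ p * (b - a)) * (d - c) ^ (p - 1) :=
    (ENNReal.ofReal_le_ofReal_iff (by positivity)).1 hkey
  -- algebra
  have hkabs : |k| ^ p = |U b - U a| ^ p / (b - a) ^ p := by
    rw [hk, abs_div, abs_of_pos hba0, Real.div_rpow (abs_nonneg _) (le_of_lt hba0)]
  have hpow : (b - a) * (b - a) ^ (p - 1) = (b - a) ^ p := by
    have h := Real.rpow_add hba0 1 (p - 1)
    have h1 : (1:ℝ) + (p - 1) = p := by ring
    rw [h1] at h
    rw [h, Real.rpow_one]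
  have hbp0 : (0:ℝ) < (b - a) ^ p := Real.rpow_pos_of_pos hba0 p
  have h6 := mul_le_mul_of_nonneg_right hreal (Real.rpow_nonneg (le_of_lt hba0) (p - 1))
  calc |U d - U c| ^ p * (b - a) ^ (p - 1)
      ≤ Q * (|k| ^ p * (b - a)) * (d - c) ^ (p - 1) * (b - a) ^ (p - 1) := h6
    _ = Q * (|U b - U a| ^ p / (b - a) ^ p * ((b - a) * (b - a) ^ (p - 1)) * (d - c) ^ (p - 1)) := by
        rw [hkabs]; ring
    _ = Q * (|U b - U a| ^ p * (d - c) ^ (p - 1)) := by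
        rw [hpow, div_mul_cancel₀ _ (ne_of_gt hbp0)]

/-- **Nonremovability for bounded quasiharmonic functions on unweighted `ℝ`.**
If for every constant `C` some connected component `I` of `Ω` has `I \ E`
disconnected or `|I| > C |I \ E|`, then there is a bounded function on `Ω \ E`,
affine on every connected component of `Ω \ E` (hence `p`-harmonic there), which
has no bounded `Q`-quasiharmonic extension to `Ω` for any `Q ≥ 1`. -/
theorem nonremovable_bounded_quasiharmonic_on_R
    (p : ℝ) (hp : 1 < p) (Ω E : Set ℝ) (hΩopen : IsOpen Ω) (hΩne : Ω.Nonempty)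
    (hE : E ⊂ Ω) (hEclosed : Ω ∩ closure E ⊆ E)
    (hcomp : ∀ x ∈ Ω, ¬ connectedComponentIn Ω x ⊆ E)
    (hbad : ∀ C : ℝ, ∃ x ∈ Ω,
      ¬ IsPreconnected (connectedComponentIn Ω x \ E) ∨
        ENNReal.ofReal C * volume (connectedComponentIn Ω x \ E) <
          volume (connectedComponentIn Ω x)) :
    ∃ u : ℝ → ℝ, BddOnSet u (Ω \ E) ∧
      (∀ x ∈ Ω \ E, ∃ a b : ℝ, ∀ y ∈ connectedComponentIn (Ω \ E) x,
        u y = a * y + b) ∧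
      ∀ Q : ℝ, 1 ≤ Q →
        ¬ ∃ U : ℝ → ℝ, IsQuasiharmonicOn p Q Ω U ∧ BddOnSet U Ω ∧
            ∀ x ∈ Ω \ E, U x = u x := by
  classical
  have hp0 : (0:ℝ) < p := lt_trans zero_lt_one hp
  have hp1 : (0:ℝ) < p - 1 := by linarith
  have hopen : IsOpen (Ω \ E) := by
    have hEq : Ω \ E = Ω \ closure E :=
      Subset.antisymm (fun t ht => ⟨ht.1, fun hc => ht.2 (hEclosed ⟨ht.1, hc⟩)⟩)
        (diff_subset_diff_right subset_closure)
    rw [hEq]; exact hΩopen.sdiff isClosed_closure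
  by_cases hA : ∃ x ∈ Ω, ¬ IsPreconnected (connectedComponentIn Ω x \ E)
  · -- Case A : some component has disconnected I \ E
    obtain ⟨x₀, hx₀Ω, hdisc⟩ := hA
    set I := connectedComponentIn Ω x₀ with hI
    have hIpre : IsPreconnected I := isPreconnected_connectedComponentIn
    have hIord : I.OrdConnected := hIpre.ordConnected
    have hnotord : ¬ (I \ E).OrdConnected := fun h => hdisc h.isPreconnected
    rw [ordConnected_iff] at hnotord
    push_neg at hnotord
    obtain ⟨x, hx, y, hy, hxy, hnsub⟩ := hnotord
    obtain ⟨z, hzIcc, hznot⟩ := not_subset.1 hnsub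
    have hzI : z ∈ I := hIord.out hx.1 hy.1 hzIcc
    have hzE : z ∈ E := by
      by_contra h; exact hznot ⟨hzI, h⟩
    have hxz : x < z := lt_of_le_of_ne hzIcc.1 (fun h => hznot (h ▸ hx))
    have hzy : z < y := lt_of_le_of_ne hzIcc.2 (fun h => hznot (h.symm ▸ hy))
    have hIΩ : I ⊆ Ω := connectedComponentIn_subset Ω x₀
    have hxΩE : x ∈ Ω \ E := ⟨hIΩ hx.1, hx.2⟩
    have hyΩE : y ∈ Ω \ E := ⟨hIΩ hy.1, hy.2⟩
    refine ⟨fun t => if z < t then 1 else 0, ⟨1, ?_⟩, ?_, ?_⟩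
    · intro t _
      dsimp only
      split_ifs <;> norm_num
    · -- locally constant
      intro w hw
      refine ⟨0, if z < w then 1 else 0, fun y' hy' => ?_⟩
      dsimp only
      have hJord : (connectedComponentIn (Ω \ E) w).OrdConnected :=
        (isPreconnected_connectedComponentIn).ordConnected
      have hwJ : w ∈ connectedComponentIn (Ω \ E) w := mem_connectedComponentIn hw
      have hzJ : z ∉ connectedComponentIn (Ω \ E) w := fun h =>
        (connectedComponentIn_subset (Ω \ E) w h).2 hzE
      have : (z < y') ↔ (z < w) := by
        constructor
        · intro h1
          by_contra h2
          exact hzJ (hJord.out hwJ hy' ⟨not_lt.1 h2, le_of_lt h1⟩)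
        · intro h1
          by_contra h2
          exact hzJ (hJord.out hy' hwJ ⟨not_lt.1 h2, le_of_lt h1⟩)
      simp only [this]
      ring_nf
    · -- no bounded quasiharmonic extension
      intro Q hQ hex
      obtain ⟨U, hqh, hbdd, hUu⟩ := hex
      simp only [IsQuasiharmonicOn, IsQuasiminimizerOn, IsQuasiminimizerWith] at hqh
      obtain ⟨hUcont, du, hdumeas, hUAC, hULp, hqm⟩ := hqh
      have hQ0 : (0:ℝ) < Q := by linarith
      have hUx : U x = 0 := by
        rw [hUu x hxΩE]
        dsimp only
        rw [if_neg (not_lt.2 (le_of_lt hxz))]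
      have hUy : U y = 1 := by
        rw [hUu y hyΩE]
        dsimp only
        rw [if_pos hzy]
      -- a small left neighbourhood of x inside Ω \ E
      obtain ⟨θ, hθ0, hball⟩ := Metric.isOpen_iff.1 hopen x hxΩE
      have hsx : ∀ t ∈ Icc (x - θ/2) x, t ∈ Ω \ E := by
        intro t ht
        apply hball
        rw [Metric.mem_ball, Real.dist_eq, abs_sub_lt_iff]
        constructor <;> [linarith [ht.2]; linarith [ht.1]]
      have hUs : U (x - θ/2) = 0 := by
        rw [hUu _ (hsx _ ⟨le_rfl, by linarith⟩)]
        dsimp only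
        rw [if_neg (by push_neg; linarith)]
      -- the last-zero point A
      have hxyΩ : Icc x y ⊆ Ω := fun t ht => hIΩ (hIord.out hx.1 hy.1 ht)
      set T := {r ∈ Icc x y | U r = 0} with hT
      set S := {t ∈ Icc x y | ∀ r ∈ Icc x t, U r = 0} with hS
      have hTclosed : IsClosed T :=
        (hUcont.mono hxyΩ).preimage_isClosed_of_isClosed isClosed_Icc isClosed_singleton
      have hxS : x ∈ S := by
        refine ⟨⟨le_rfl, hxy⟩, fun r hr => ?_⟩
        have : r = x := le_antisymm hr.2 hr.1
        rw [this, hUx]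
      have hSne : S.Nonempty := ⟨x, hxS⟩
      have hSbdd : BddAbove S := bddAbove_Icc.mono (sep_subset _ _)
      set A := sSup S with hA'
      have hxA : x ≤ A := le_csSup hSbdd hxS
      have hAy' : A ≤ y := csSup_le hSne (fun t ht => ht.1.2)
      have hST : S ⊆ T := fun t ht => ⟨ht.1, ht.2 t ⟨ht.1.1, le_rfl⟩⟩
      have hUA' : ∀ r ∈ Icc x A, U r = 0 := by
        intro r hr
        rcases eq_or_lt_of_le hr.2 with h | h
        · have hAT : A ∈ T :=
            hTclosed.closure_subset ((closure_mono hST) (csSup_mem_closure hSne hSbdd))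
          rw [h]; exact hAT.2
        · obtain ⟨t, htS, hrt⟩ := exists_lt_of_lt_csSup hSne h
          exact htS.2 r ⟨hr.1, le_of_lt hrt⟩
      have hUA : U A = 0 := hUA' A ⟨hxA, le_rfl⟩
      have hAy : A < y := by
        rcases eq_or_lt_of_le hAy' with h | h
        · rw [h, hUy] at hUA; norm_num at hUA
        · exact h
      -- choose ε and a point c' with U c' ≠ 0 close above A
      set r := Q ^ (p - 1)⁻¹ with hr
      have hr0 : 0 < r := Real.rpow_pos_of_pos hQ0 _
      set ε := min (y - A) ((θ/2) / (2*r)) with hε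
      have hε0 : 0 < ε := lt_min (by linarith) (by positivity)
      have hc' : ∃ c', A < c' ∧ c' ≤ A + ε ∧ U c' ≠ 0 := by
        by_contra h
        push_neg at h
        have hmem : A + ε ∈ S := by
          refine ⟨⟨by linarith, by linarith [min_le_left (y - A) ((θ/2)/(2*r))]⟩,
            fun r' hr' => ?_⟩
          rcases le_or_gt r' A with h1 | h1
          · exact hUA' r' ⟨hr'.1, h1⟩
          · exact h r' h1 hr'.2
        have := le_csSup hSbdd hmem
        linarith
      obtain ⟨c', hc1, hc2, hc3⟩ := hc'
      have hc'y : c' ≤ y := by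
        have := min_le_left (y - A) ((θ/2)/(2*r)); linarith
      -- apply the key estimate
      have hsubΩ : Icc (x - θ/2) c' ⊆ Ω := by
        intro t ht
        rcases le_total t x with h | h
        · exact (hsx t ⟨ht.1, h⟩).1
        · exact hxyΩ ⟨h, le_trans ht.2 hc'y⟩
      have hstar := star_estimate hp hQ hdumeas hUAC hULp hqm
        (a := x - θ/2) (b := c') (c := A) (d := c')
        (by linarith) (by linarith) hc1 le_rfl hsubΩ
      rw [hUA, hUs, sub_zero] at hstar
      have hUc0 : 0 < |U c'| ^ p := Real.rpow_pos_of_pos (abs_pos.2 hc3) p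
      have h1 : (c' - (x - θ/2)) ^ (p-1) ≤ Q * (c' - A) ^ (p-1) := by
        have h2 : |U c'| ^ p * (c' - (x - θ/2)) ^ (p-1)
            ≤ |U c'| ^ p * (Q * (c' - A) ^ (p-1)) := by
          calc |U c'| ^ p * (c' - (x - θ/2)) ^ (p-1)
              ≤ Q * (|U c'| ^ p * (c' - A) ^ (p-1)) := hstar
            _ = |U c'| ^ p * (Q * (c' - A) ^ (p-1)) := by ring
        exact le_of_mul_le_mul_left h2 hUc0
      have hθp : (θ/2) ^ (p-1) ≤ (c' - (x - θ/2)) ^ (p-1) :=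
        Real.rpow_le_rpow (by positivity) (by linarith) (by linarith)
      have hεp : (c' - A) ^ (p-1) ≤ ε ^ (p-1) :=
        Real.rpow_le_rpow (by linarith) (by linarith) (by linarith)
      have hεb : ε ^ (p-1) ≤ ((θ/2) / (2*r)) ^ (p-1) :=
        Real.rpow_le_rpow (le_of_lt hε0) (min_le_right _ _) (by linarith)
      have hrp : (2*r) ^ (p-1) = 2 ^ (p-1) * Q := by
        rw [Real.mul_rpow (by norm_num) (le_of_lt hr0), hr,
          Real.rpow_inv_rpow (le_of_lt hQ0) (ne_of_gt hp1)]
      have hdiv : ((θ/2) / (2*r)) ^ (p-1) = (θ/2) ^ (p-1) / (2 ^ (p-1) * Q) := by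
        rw [Real.div_rpow (by positivity) (by positivity), hrp]
      have h2p : (1:ℝ) < 2 ^ (p-1) := by
        rw [show (1:ℝ) = 2 ^ (0:ℝ) by rw [Real.rpow_zero]]
        exact Real.rpow_lt_rpow_of_exponent_lt (by norm_num) (by linarith)
      have hfinal : Q * ε ^ (p-1) < (θ/2) ^ (p-1) := by
        have hq1 : Q * ε ^ (p-1) ≤ Q * ((θ/2) ^ (p-1) / (2 ^ (p-1) * Q)) := by
          apply mul_le_mul_of_nonneg_left _ (le_of_lt hQ0)
          rw [← hdiv]; exact hεb
        have hq2 : Q * ((θ/2) ^ (p-1) / (2 ^ (p-1) * Q)) = (θ/2) ^ (p-1) / 2 ^ (p-1) := by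
          field_simp
        have hq3 : (θ/2) ^ (p-1) / 2 ^ (p-1) < (θ/2) ^ (p-1) := by
          apply div_lt_self (Real.rpow_pos_of_pos (by linarith) _) h2p
        linarith
      have : Q * (c' - A) ^ (p-1) ≤ Q * ε ^ (p-1) :=
        mul_le_mul_of_nonneg_left hεp (le_of_lt hQ0)
      linarith
  · -- Case B : every component has connected I \ E
    push_neg at hA
    refine ⟨fun t => if h : BddAbove (connectedComponentIn (Ω \ E) t) ∧
        BddBelow (connectedComponentIn (Ω \ E) t) then
        (t - sInf (connectedComponentIn (Ω \ E) t)) /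
          (sSup (connectedComponentIn (Ω \ E) t) - sInf (connectedComponentIn (Ω \ E) t))
      else 0, ⟨1, ?_⟩, ?_, ?_⟩
    · -- bounded by 1
      intro t ht
      dsimp only
      split_ifs with h
      · obtain ⟨δ, hδ0, hball⟩ := Metric.isOpen_iff.1 hopen.connectedComponentIn t
          (mem_connectedComponentIn ht)
        have hmem : ∀ s ∈ Icc (t - δ/2) (t + δ/2), s ∈ connectedComponentIn (Ω \ E) t := by
          intro s hs
          apply hball
          rw [Metric.mem_ball, Real.dist_eq, abs_sub_lt_iff]
          constructor <;> [linarith [hs.2]; linarith [hs.1]]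
        have h1 : sInf (connectedComponentIn (Ω \ E) t) ≤ t - δ/2 :=
          csInf_le h.2 (hmem _ ⟨le_rfl, by linarith⟩)
        have h2 : t + δ/2 ≤ sSup (connectedComponentIn (Ω \ E) t) :=
          le_csSup h.1 (hmem _ ⟨by linarith, le_rfl⟩)
        rw [abs_le]
        constructor
        · have : (0:ℝ) ≤ (t - sInf (connectedComponentIn (Ω \ E) t)) /
              (sSup (connectedComponentIn (Ω \ E) t) - sInf (connectedComponentIn (Ω \ E) t)) :=
            div_nonneg (by linarith) (by linarith)
          linarith
        · rw [div_le_one (by linarith)]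
          linarith
      · norm_num
    · -- affine on components
      intro w hw
      by_cases hb : BddAbove (connectedComponentIn (Ω \ E) w) ∧
          BddBelow (connectedComponentIn (Ω \ E) w)
      · refine ⟨1 / (sSup (connectedComponentIn (Ω \ E) w) - sInf (connectedComponentIn (Ω \ E) w)),
          -(sInf (connectedComponentIn (Ω \ E) w)) /
            (sSup (connectedComponentIn (Ω \ E) w) - sInf (connectedComponentIn (Ω \ E) w)),
          fun y' hy' => ?_⟩
        dsimp only
        rw [show connectedComponentIn (Ω \ E) y' = connectedComponentIn (Ω \ E) w from
          (connectedComponentIn_eq hy').symm, dif_pos hb]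
        ring
      · refine ⟨0, 0, fun y' hy' => ?_⟩
        dsimp only
        rw [show connectedComponentIn (Ω \ E) y' = connectedComponentIn (Ω \ E) w from
          (connectedComponentIn_eq hy').symm, dif_neg hb]
        ring
    · -- no bounded quasiharmonic extension
      intro Q hQ hex
      obtain ⟨U, hqh, hbdd, hUu⟩ := hex
      simp only [IsQuasiharmonicOn, IsQuasiminimizerOn, IsQuasiminimizerWith] at hqh
      obtain ⟨hUcont, du, hdumeas, hUAC, hULp, hqm⟩ := hqh
      obtain ⟨M, hM⟩ := hbdd
      have hQ0 : (0:ℝ) < Q := by linarith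
      set M' := |M| + 1 with hM'def
      have hM'0 : (0:ℝ) < M' := by positivity
      have hM' : ∀ x ∈ Ω, |U x| ≤ M' := fun x hx =>
        le_trans (hM x hx) (by rw [hM'def]; linarith [le_abs_self M])
      set W := 2 ^ p * Q * (2*M') ^ p with hWdef
      have hW0 : (0:ℝ) < W :=
        mul_pos (mul_pos (Real.rpow_pos_of_pos two_pos p) hQ0)
          (Real.rpow_pos_of_pos (by linarith) p)
      set C := 2 * (W ^ (p-1)⁻¹ + 1) with hCdef
      have hWp : (0:ℝ) ≤ W ^ (p-1)⁻¹ := Real.rpow_nonneg (le_of_lt hW0) _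
      have hC1 : (1:ℝ) ≤ C := by rw [hCdef]; linarith
      have hC0 : (0:ℝ) < C := by linarith
      obtain ⟨x₁, hx₁, hcase⟩ := hbad C
      rcases hcase with hdisc | hvol
      · exact hdisc (hA x₁ hx₁)
      set I := connectedComponentIn Ω x₁ with hI
      have hIpre : IsPreconnected I := isPreconnected_connectedComponentIn
      have hIord : I.OrdConnected := hIpre.ordConnected
      have hIΩ : I ⊆ Ω := connectedComponentIn_subset Ω x₁
      obtain ⟨t₀, ht₀I, ht₀E⟩ := not_subset.1 (hcomp x₁ hx₁)
      have ht₀IE : t₀ ∈ I \ E := ⟨ht₀I, ht₀E⟩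
      have hIEne : (I \ E).Nonempty := ⟨t₀, ht₀IE⟩
      have hIEord : (I \ E).OrdConnected := (hA x₁ hx₁).ordConnected
      have hIEsub : I \ E ⊆ Ω \ E := fun w hw => ⟨hIΩ hw.1, hw.2⟩
      -- finite volume
      have hfin : volume (I \ E) ≠ ⊤ := by
        intro h
        rw [h, ENNReal.mul_top (ne_of_gt (ENNReal.ofReal_pos.2 hC0))] at hvol
        exact not_top_lt hvol
      -- boundedness
      have hbddA : BddAbove (I \ E) := by
        by_contra h
        have hsub : Ici t₀ ⊆ I \ E := by
          intro w hw
          obtain ⟨t2, ht2, hw2⟩ := not_bddAbove_iff.1 h w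
          exact hIEord.out ht₀IE ht2 ⟨hw, le_of_lt hw2⟩
        have := measure_mono (μ := volume) hsub
        rw [Real.volume_Ici] at this
        exact hfin (top_le_iff.1 this)
      have hbddB : BddBelow (I \ E) := by
        by_contra h
        have hsub : Iic t₀ ⊆ I \ E := by
          intro w hw
          obtain ⟨t2, ht2, hw2⟩ := not_bddBelow_iff.1 h w
          exact hIEord.out ht2 ht₀IE ⟨le_of_lt hw2, hw⟩
        have := measure_mono (μ := volume) hsub
        rw [Real.volume_Iic] at this
        exact hfin (top_le_iff.1 this)
      set α := sInf (I \ E) with hαdef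
      set β := sSup (I \ E) with hβdef
      have hIEopen : IsOpen (I \ E) := by
        have heq : I \ E = I ∩ (Ω \ E) := by
          ext w
          exact ⟨fun hw => ⟨hw.1, hIΩ hw.1, hw.2⟩, fun hw => ⟨hw.1, hw.2.2⟩⟩
        rw [heq]
        exact (hΩopen.connectedComponentIn).inter hopen
      have hIE_eq : I \ E = Ioo α β := by
        refine Subset.antisymm (fun t ht => ?_) (fun w hw => ?_)
        · obtain ⟨δ, hδ0, hball⟩ := Metric.isOpen_iff.1 hIEopen t ht
          have hmem : ∀ s ∈ Icc (t - δ/2) (t + δ/2), s ∈ I \ E := by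
            intro s hs
            apply hball
            rw [Metric.mem_ball, Real.dist_eq, abs_sub_lt_iff]
            constructor <;> [linarith [hs.2]; linarith [hs.1]]
          have h1 : α ≤ t - δ/2 := csInf_le hbddB (hmem _ ⟨le_rfl, by linarith⟩)
          have h2 : t + δ/2 ≤ β := le_csSup hbddA (hmem _ ⟨by linarith, le_rfl⟩)
          exact ⟨by linarith, by linarith⟩
        · obtain ⟨t1, ht1, h1⟩ := exists_lt_of_csInf_lt hIEne hw.1
          obtain ⟨t2, ht2, h2⟩ := exists_lt_of_lt_csSup hIEne hw.2
          exact hIEord.out ht1 ht2 ⟨le_of_lt h1, le_of_lt h2⟩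
      have hαβ : α < β := by
        have ht := hIE_eq ▸ ht₀IE
        exact lt_trans ht.1 ht.2
      have hvolIE : volume (I \ E) = ENNReal.ofReal (β - α) := by
        rw [hIE_eq, Real.volume_Ioo]
      -- component identification
      have hJeq : ∀ t ∈ I \ E, connectedComponentIn (Ω \ E) t = I \ E := by
        intro t ht
        refine Subset.antisymm (fun w hw => ?_) ?_
        · have h3 : connectedComponentIn (Ω \ E) t ⊆ connectedComponentIn Ω t :=
            (isPreconnected_connectedComponentIn).subset_connectedComponentIn
              (mem_connectedComponentIn (hIEsub ht))
              ((connectedComponentIn_subset _ _).trans diff_subset)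
          have h4 : connectedComponentIn Ω t = I := (connectedComponentIn_eq ht.1).symm
          exact ⟨h4 ▸ h3 hw, (connectedComponentIn_subset (Ω \ E) t hw).2⟩
        · exact (hA x₁ hx₁).subset_connectedComponentIn ht hIEsub
      -- values of u
      set c := α + (β - α)/4 with hcdef
      set d := β - (β - α)/4 with hddef
      have hcIE : c ∈ I \ E := by rw [hIE_eq]; exact ⟨by rw [hcdef]; linarith, by rw [hcdef]; linarith⟩
      have hdIE : d ∈ I \ E := by rw [hIE_eq]; exact ⟨by rw [hddef]; linarith, by rw [hddef]; linarith⟩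
      have hcd : c < d := by rw [hcdef, hddef]; linarith
      have huval : ∀ t ∈ I \ E, U t = (t - α) / (β - α) := by
        intro t ht
        rw [hUu t (hIEsub ht)]
        dsimp only
        rw [show connectedComponentIn (Ω \ E) t = I \ E from hJeq t ht, dif_pos ⟨hbddA, hbddB⟩]
      have hUc : U c = 1/4 := by
        rw [huval c hcIE, hcdef]
        rw [div_eq_iff (by linarith : β - α ≠ 0)]
        ring
      have hUd : U d = 3/4 := by
        rw [huval d hdIE, hddef]
        rw [div_eq_iff (by linarith : β - α ≠ 0)]
        ring
      -- the numerical contradiction from the key estimate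
      have hnum : ∀ a' b' : ℝ, Icc a' b' ⊆ Ω → a' ≤ c → d ≤ b' →
          b' - a' = (C+2)*(β - α)/4 → False := by
        intro a' b' hsubΩ h1 h3 h4
        have hab' : a' < b' := by linarith
        have hstar := star_estimate hp hQ hdumeas hUAC hULp hqm hab' h1 hcd h3 hsubΩ
        rw [hUc, hUd] at hstar
        have habs : |(3:ℝ)/4 - 1/4| = 1/2 := by norm_num
        rw [habs] at hstar
        have hUba : |U b' - U a'| ≤ 2*M' := by
          have h5 := hM' a' (hsubΩ ⟨le_rfl, le_of_lt hab'⟩)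
          have h6 := hM' b' (hsubΩ ⟨le_of_lt hab', le_rfl⟩)
          calc |U b' - U a'| ≤ |U b'| + |U a'| := abs_sub _ _
            _ ≤ 2*M' := by linarith
        have hpowb : |U b' - U a'| ^ p ≤ (2*M') ^ p :=
          Real.rpow_le_rpow (abs_nonneg _) hUba (le_of_lt hp0)
        have hdc : d - c = (β - α)/2 := by rw [hcdef, hddef]; ring
        have hX0 : (0:ℝ) < ((β - α)/2) ^ (p-1) := Real.rpow_pos_of_pos (by linarith) _
        have hsplit : (b' - a') ^ (p-1) = ((C+2)/2) ^ (p-1) * ((β - α)/2) ^ (p-1) := by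
          rw [h4, show (C+2)*(β - α)/4 = ((C+2)/2) * ((β - α)/2) by ring,
            Real.mul_rpow (by linarith) (by linarith)]
        have hchain : (1/2:ℝ) ^ p * (((C+2)/2) ^ (p-1) * ((β - α)/2) ^ (p-1))
            ≤ Q * ((2*M') ^ p * ((β - α)/2) ^ (p-1)) := by
          calc (1/2:ℝ) ^ p * (((C+2)/2) ^ (p-1) * ((β - α)/2) ^ (p-1))
              = (1/2:ℝ) ^ p * (b' - a') ^ (p-1) := by rw [hsplit]
            _ ≤ Q * (|U b' - U a'| ^ p * (d - c) ^ (p-1)) := hstar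
            _ ≤ Q * ((2*M') ^ p * (d - c) ^ (p-1)) := by
                apply mul_le_mul_of_nonneg_left _ (le_of_lt hQ0)
                exact mul_le_mul_of_nonneg_right hpowb
                  (Real.rpow_nonneg (by linarith) _)
            _ = Q * ((2*M') ^ p * ((β - α)/2) ^ (p-1)) := by rw [hdc]
        have hred : (1/2:ℝ) ^ p * ((C+2)/2) ^ (p-1) ≤ Q * (2*M') ^ p := by
          have h7 : ((1/2:ℝ) ^ p * ((C+2)/2) ^ (p-1)) * ((β - α)/2) ^ (p-1)
              ≤ (Q * (2*M') ^ p) * ((β - α)/2) ^ (p-1) := by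
            calc ((1/2:ℝ) ^ p * ((C+2)/2) ^ (p-1)) * ((β - α)/2) ^ (p-1)
                = (1/2:ℝ) ^ p * (((C+2)/2) ^ (p-1) * ((β - α)/2) ^ (p-1)) := by ring
              _ ≤ Q * ((2*M') ^ p * ((β - α)/2) ^ (p-1)) := hchain
              _ = (Q * (2*M') ^ p) * ((β - α)/2) ^ (p-1) := by ring
          exact le_of_mul_le_mul_right h7 hX0
        have h2inv : (1/2:ℝ) ^ p * 2 ^ p = 1 := by
          rw [← Real.mul_rpow (by norm_num) (by norm_num)]
          norm_num
        have hle : ((C+2)/2) ^ (p-1) ≤ W := by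
          have h8 := mul_le_mul_of_nonneg_left hred
            (le_of_lt (Real.rpow_pos_of_pos two_pos p))
          calc ((C+2)/2) ^ (p-1)
              = (2:ℝ) ^ p * ((1/2:ℝ) ^ p * ((C+2)/2) ^ (p-1)) := by
                rw [show (2:ℝ) ^ p * ((1/2:ℝ) ^ p * ((C+2)/2) ^ (p-1))
                  = ((1/2:ℝ) ^ p * 2 ^ p) * ((C+2)/2) ^ (p-1) by ring, h2inv, one_mul]
            _ ≤ (2:ℝ) ^ p * (Q * (2*M') ^ p) := h8
            _ = W := by rw [hWdef]; ring
        have hgt : W < ((C+2)/2) ^ (p-1) := by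
          have hC2 : W ^ (p-1)⁻¹ < (C+2)/2 := by
            have : (C+2)/2 = W ^ (p-1)⁻¹ + 2 := by rw [hCdef]; ring
            linarith
          calc W = (W ^ (p-1)⁻¹) ^ (p-1) :=
                (Real.rpow_inv_rpow (le_of_lt hW0) (ne_of_gt hp1)).symm
            _ < ((C+2)/2) ^ (p-1) := Real.rpow_lt_rpow hWp hC2 hp1
        linarith
      -- the window fits on one side
      have hCnn : (0:ℝ) ≤ (C-1)*(β - α)/4 := by
        have := mul_nonneg (by linarith : (0:ℝ) ≤ C - 1) (by linarith : (0:ℝ) ≤ β - α)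
        linarith
      have hwindow : (β + (C-1)*(β - α)/4) ∈ I ∨ (α - (C-1)*(β - α)/4) ∈ I := by
        by_contra h
        push_neg at h
        obtain ⟨h1, h2⟩ := h
        have hcI : c ∈ I := hcIE.1
        have hIsub : I ⊆ Icc (α - (C-1)*(β - α)/4) (β + (C-1)*(β - α)/4) := by
          intro w hw
          constructor
          · by_contra h3
            push_neg at h3
            refine h2 (hIord.out hw hcI ⟨le_of_lt h3, ?_⟩)
            rw [hcdef]; linarith
          · by_contra h3
            push_neg at h3
            refine h1 (hIord.out hcI hw ⟨?_, le_of_lt h3⟩)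
            rw [hcdef]; linarith
        have hvolle : volume I ≤ ENNReal.ofReal (C * (β - α)) := by
          calc volume I ≤ volume (Icc (α - (C-1)*(β - α)/4) (β + (C-1)*(β - α)/4)) :=
              measure_mono hIsub
            _ = ENNReal.ofReal ((β + (C-1)*(β - α)/4) - (α - (C-1)*(β - α)/4)) :=
              Real.volume_Icc
            _ ≤ ENNReal.ofReal (C * (β - α)) := by
              apply ENNReal.ofReal_le_ofReal
              nlinarith [mul_nonneg (by linarith : (0:ℝ) ≤ C - 1) (by linarith : (0:ℝ) ≤ β - α)]
        rw [hvolIE, ← ENNReal.ofReal_mul (le_of_lt hC0)] at hvol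
        exact absurd hvol (not_lt.2 hvolle)
      rcases hwindow with hb' | ha'
      · refine hnum c (β + (C-1)*(β - α)/4) ?_ le_rfl ?_ ?_
        · intro t ht
          exact hIΩ (hIord.out hcIE.1 hb' ht)
        · rw [hddef]; linarith
        · rw [hcdef]; ring
      · refine hnum (α - (C-1)*(β - α)/4) d ?_ ?_ le_rfl ?_
        · intro t ht
          exact hIΩ (hIord.out ha' hdIE.1 ht)
        · rw [hcdef]; linarith
        · rw [hddef]; ring
end

section
/- Let p > 1, Q ≥ 1 and x > 1. Let U : (0,x) → ℝ be a nondecreasing continuous Q-quasiminimizer on (0,x) (with respect to unweighted ℝ and exponent p) with U(t) = t for all 0 < t ≤ 1, and suppose that a := lim_{t→x⁻} U(t) is finite. Then Q a^p ≥ x^{p-1} + (a-1)^p (1 - 1/x)^{1-p}. -/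
open MeasureTheory Set

lemma clamp_Ioc (eps b c y : ℝ) (hcy : c ≤ y) :
    Set.Ioc (max eps (min c b)) (max eps (min y b)) = Set.Ioc c y ∩ Set.Ioc eps b := by
  ext t
  simp only [Set.mem_Ioc, Set.mem_inter_iff, max_lt_iff, min_lt_iff, le_max_iff, le_min_iff]
  constructor
  · rintro ⟨⟨he, hcb⟩, hy⟩
    rcases hy with h | ⟨hy, hb⟩
    · exact absurd he (not_lt.mpr h)
    rcases hcb with h | h
    · exact ⟨⟨h, hy⟩, he, hb⟩
    · exact absurd hb (not_le.mpr h)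
  · rintro ⟨⟨h1, h2⟩, h3, h4⟩
    exact ⟨⟨h3, Or.inl h1⟩, Or.inr ⟨h2, h4⟩⟩

lemma holder_aux (p : ℝ) (hp : 1 < p) (f : ℝ → ℝ) (a b : ℝ) (hab : a ≤ b)
    (hfm : Measurable f) (hfi : IntegrableOn f (Set.Ioc a b))
    (hfpi : IntegrableOn (fun t => |f t| ^ p) (Set.Ioc a b)) :
    (∫ t in Set.Ioc a b, |f t|) ^ p ≤ (∫ t in Set.Ioc a b, |f t| ^ p) * (b - a) ^ (p - 1) := by
  have hp0 : (0:ℝ) < p := lt_trans one_pos hp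
  have hpq : Real.HolderConjugate p p.conjExponent := Real.HolderConjugate.conjExponent hp
  set μ := volume.restrict (Set.Ioc a b) with hμ
  have hmeas : AEMeasurable (fun t => ENNReal.ofReal (|f t|)) μ :=
    (ENNReal.measurable_ofReal.comp hfm.abs).aemeasurable
  have h1 : ∫⁻ t, ENNReal.ofReal (|f t|) ∂μ ≤
      (∫⁻ t, ENNReal.ofReal (|f t|) ^ p ∂μ) ^ (1/p) * (μ Set.univ) ^ (1/p.conjExponent) := by
    have := ENNReal.lintegral_mul_le_Lp_mul_Lq μ hpq hmeas (aemeasurable_const (b := (1:ENNReal)))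
    simpa using this
  have hμuniv : μ Set.univ = ENNReal.ofReal (b - a) := by
    rw [hμ, Measure.restrict_apply MeasurableSet.univ, Set.univ_inter, Real.volume_Ioc]
  have hdiv : p / p.conjExponent = p - 1 := by
    rw [div_eq_iff hpq.symm.pos.ne', hpq.sub_one_mul_conj]
  have h2 : (∫⁻ t, ENNReal.ofReal (|f t|) ∂μ) ^ p ≤
      (∫⁻ t, ENNReal.ofReal (|f t|) ^ p ∂μ) * (ENNReal.ofReal (b - a)) ^ (p - 1) := by
    calc (∫⁻ t, ENNReal.ofReal (|f t|) ∂μ) ^ p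
        ≤ ((∫⁻ t, ENNReal.ofReal (|f t|) ^ p ∂μ) ^ (1/p) * (μ Set.univ) ^ (1/p.conjExponent)) ^ p :=
          ENNReal.rpow_le_rpow h1 hp0.le
      _ = (∫⁻ t, ENNReal.ofReal (|f t|) ^ p ∂μ) * (ENNReal.ofReal (b - a)) ^ (p - 1) := by
          rw [ENNReal.mul_rpow_of_nonneg _ _ hp0.le, ← ENNReal.rpow_mul, ← ENNReal.rpow_mul,
            one_div_mul_cancel hp0.ne', ENNReal.rpow_one, hμuniv]
          congr 1
          rw [one_div, inv_mul_eq_div, hdiv]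
  -- convert to real integrals
  have e1 : ∫⁻ t, ENNReal.ofReal (|f t|) ∂μ = ENNReal.ofReal (∫ t, |f t| ∂μ) :=
    (ofReal_integral_eq_lintegral_ofReal hfi.abs (Filter.Eventually.of_forall fun t => abs_nonneg _)).symm
  have e2 : ∫⁻ t, ENNReal.ofReal (|f t|) ^ p ∂μ = ENNReal.ofReal (∫ t, |f t| ^ p ∂μ) := by
    rw [ofReal_integral_eq_lintegral_ofReal hfpi
      (Filter.Eventually.of_forall fun t => Real.rpow_nonneg (abs_nonneg _) _)]
    exact lintegral_congr fun t => ENNReal.ofReal_rpow_of_nonneg (abs_nonneg _) hp0.le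
  have hint_nonneg : 0 ≤ ∫ t, |f t| ∂μ := integral_nonneg fun t => abs_nonneg _
  have hintp_nonneg : 0 ≤ ∫ t, |f t| ^ p ∂μ :=
    integral_nonneg fun t => Real.rpow_nonneg (abs_nonneg _) _
  rw [e1, e2, ENNReal.ofReal_rpow_of_nonneg hint_nonneg hp0.le,
    ENNReal.ofReal_rpow_of_nonneg (by linarith) (by linarith),
    ← ENNReal.ofReal_mul hintp_nonneg] at h2
  exact (ENNReal.ofReal_le_ofReal_iff
    (mul_nonneg hintp_nonneg (Real.rpow_nonneg (by linarith) _))).mp h2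

lemma key_estimate (p Q x : ℝ) (hp : 1 < p) (hQ0 : 0 ≤ Q) (hx : 1 < x)
    (U du : ℝ → ℝ) (hmono : MonotoneOn U (Set.Ioo 0 x))
    (hqw : IsQuasiminimizerWith p Q (Set.Ioo 0 x) U du)
    (hid : ∀ t : ℝ, 0 < t → t ≤ 1 → U t = t)
    (a : ℝ) (hUle : ∀ t ∈ Set.Ioo 0 x, U t ≤ a)
    (ε : ℝ) (hε0 : 0 < ε) (hε1 : ε < 1) (hεx : ε < (x - 1) / 2) :
    (1 - ε) + (U (x - ε) - 1) ^ p / (x - 1) ^ (p - 1)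
      ≤ Q * a ^ p / (x - 2 * ε) ^ (p - 1) := by
  obtain ⟨hdm, hAC, hLp, hQM⟩ := hqw
  have hp0 : (0:ℝ) < p := by linarith
  set b : ℝ := x - ε with hbdef
  have hb1 : 1 < b := by rw [hbdef]; linarith
  have hbx : b < x := by rw [hbdef]; linarith
  have hεb : ε < b := by rw [hbdef]; linarith
  have hIcc : Set.Icc ε b ⊆ Set.Ioo 0 x := fun t ht =>
    ⟨lt_of_lt_of_le hε0 ht.1, lt_of_le_of_lt ht.2 hbx⟩
  have hUε : U ε = ε := hid ε hε0 hε1.le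
  have hU1 : U 1 = 1 := hid 1 one_pos le_rfl
  have hduIεb : IntegrableOn du (Set.Icc ε b) := (hAC ε b hεb.le hIcc).1
  have hFTC : ∀ y ∈ Set.Icc ε b, U y = U ε + ∫ t in ε..y, du t := (hAC ε b hεb.le hIcc).2
  have h1mem : (1:ℝ) ∈ Set.Icc ε b := ⟨hε1.le, hb1.le⟩
  have hbmem : b ∈ Set.Icc ε b := ⟨hεb.le, le_rfl⟩
  have hUb1 : 1 ≤ U b := by
    rw [← hU1]
    exact hmono (hIcc h1mem) (hIcc hbmem) hb1.le
  have hUba : U b ≤ a := hUle b (hIcc hbmem)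
  set m : ℝ := (U b - ε) / (b - ε) with hmdef
  have hm0 : 0 ≤ m := div_nonneg (by linarith) (by linarith)
  have hint_εb : ∫ t in ε..b, du t = U b - ε := by
    have := hFTC b hbmem; rw [hUε] at this; linarith
  -- the correction function
  set g : ℝ → ℝ := fun s => m - du s with hgdef
  have hconstI : ∀ (c cc dd : ℝ), IntegrableOn (fun _ : ℝ => c) (Set.Icc cc dd) :=
    fun c cc dd => integrableOn_const measure_Icc_lt_top.ne
  have hgI : IntegrableOn g (Set.Icc ε b) :=
    (hconstI m ε b).sub hduIεb
  have hgInt : ∀ s t : ℝ, s ∈ Set.Icc ε b → t ∈ Set.Icc ε b →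
      IntervalIntegrable g volume s t := fun s t hs ht =>
    (hgI.mono_set (Set.uIcc_subset_Icc hs ht)).intervalIntegrable
  have hduInt : ∀ (c d : ℝ), Set.Icc c d ⊆ Set.Ioo 0 x → ∀ s t : ℝ, s ∈ Set.Icc c d →
      t ∈ Set.Icc c d → IntervalIntegrable du volume s t := fun c d hsub s t hs ht =>
    (((hAC c d (hs.1.trans hs.2) hsub).1).mono_set (Set.uIcc_subset_Icc hs ht)).intervalIntegrable
  have hkey0 : ∫ s in ε..b, g s = 0 := by
    rw [hgdef]
    rw [intervalIntegral.integral_sub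
      (intervalIntegrable_const)
      (hduInt ε b hIcc ε b ⟨le_rfl, hεb.le⟩ hbmem)]
    rw [intervalIntegral.integral_const, hint_εb, smul_eq_mul, hmdef,
      mul_comm, div_mul_cancel₀ _ (sub_ne_zero.mpr hεb.ne'), sub_self]
  have hclmem : ∀ t : ℝ, max ε (min t b) ∈ Set.Icc ε b := fun t =>
    ⟨le_max_left _ _, max_le hεb.le (min_le_right _ _)⟩
  -- competitor
  set v : ℝ → ℝ := fun t => U t + ∫ s in ε..(max ε (min t b)), g s with hvdef
  set dv : ℝ → ℝ := fun t => if t ∈ Set.Ioc ε b then m else du t with hdvdef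
  have hdvm : Measurable dv := Measurable.ite measurableSet_Ioc measurable_const hdm
  have hdv_eq : dv = fun t => du t + (Set.Ioc ε b).indicator g t := by
    funext t
    by_cases h : t ∈ Set.Ioc ε b
    · rw [hdvdef]; simp only [if_pos h, Set.indicator_of_mem h, hgdef]; ring
    · rw [hdvdef]; simp only [if_neg h, Set.indicator_of_notMem h, add_zero]
  have hACv : LocACWith (Set.Ioo 0 x) v dv := by
    intro c d hcd hsub
    have hduI : IntegrableOn du (Set.Icc c d) := (hAC c d hcd hsub).1
    have hgIcd : IntegrableOn g (Set.Icc c d) := (hconstI m c d).sub hduI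
    constructor
    · rw [hdv_eq]
      exact hduI.add ((hgIcd.indicator measurableSet_Ioc))
    · intro y hy
      have hcy : c ≤ y := hy.1
      have hUy : U y = U c + ∫ t in c..y, du t := (hAC c d hcd hsub).2 y hy
      have hcmem : c ∈ Set.Icc c d := ⟨le_rfl, hcd⟩
      have hindI : IntervalIntegrable ((Set.Ioc ε b).indicator g) volume c y :=
        ((hgIcd.indicator measurableSet_Ioc).mono_set
          (Set.uIcc_subset_Icc hcmem hy)).intervalIntegrable
      have hsplit : ∫ t in c..y, dv t
          = (∫ t in c..y, du t) + ∫ t in c..y, (Set.Ioc ε b).indicator g t := by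
        rw [hdv_eq]
        exact intervalIntegral.integral_add
          (hduInt c d hsub c y hcmem hy) hindI
      have hcl_le : max ε (min c b) ≤ max ε (min y b) :=
        max_le_max le_rfl (min_le_min_right b hcy)
      have hind_eval : ∫ t in c..y, (Set.Ioc ε b).indicator g t
          = ∫ s in (max ε (min c b))..(max ε (min y b)), g s := by
        rw [intervalIntegral.integral_of_le hcy, intervalIntegral.integral_of_le hcl_le,
          setIntegral_indicator measurableSet_Ioc, clamp_Ioc ε b c y hcy]
      have hsub2 : (∫ s in ε..(max ε (min y b)), g s) - ∫ s in ε..(max ε (min c b)), g s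
          = ∫ s in (max ε (min c b))..(max ε (min y b)), g s :=
        intervalIntegral.integral_interval_sub_left
          (hgInt ε _ ⟨le_rfl, hεb.le⟩ (hclmem y)) (hgInt ε _ ⟨le_rfl, hεb.le⟩ (hclmem c))
      show U y + (∫ s in ε..(max ε (min y b)), g s)
          = (U c + ∫ s in ε..(max ε (min c b)), g s) + ∫ t in c..y, dv t
      rw [hsplit, hind_eval, ← hsub2, hUy]; ring
  have hLpv : LpLocOn p (Set.Ioo 0 x) dv := by
    intro c d hcd hsub
    have h1 : IntegrableOn (fun t => |du t| ^ p) (Set.Icc c d) := hLp c d hcd hsub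
    have heq : (fun t => |dv t| ^ p)
        = fun t => |du t| ^ p + (Set.Ioc ε b).indicator (fun s => |m| ^ p - |du s| ^ p) t := by
      funext t
      by_cases h : t ∈ Set.Ioc ε b
      · rw [hdvdef]; simp only [if_pos h, Set.indicator_of_mem h]; ring
      · rw [hdvdef]; simp only [if_neg h, Set.indicator_of_notMem h, add_zero]
    rw [heq]
    exact h1.add ((((hconstI (|m| ^ p) c d).sub h1)).indicator measurableSet_Ioc)
  have hbd : ∀ t ∈ Set.Ioo 0 x \ Set.Ioo ε b, v t = U t := by
    rintro t ⟨ht, htG⟩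
    rw [Set.mem_Ioo, not_and_or, not_lt, not_lt] at htG
    show U t + (∫ s in ε..(max ε (min t b)), g s) = U t
    rcases htG with h | h
    · have he : max ε (min t b) = ε := max_eq_left (le_trans (min_le_left _ _) h)
      rw [he, intervalIntegral.integral_same, add_zero]
    · have he : max ε (min t b) = b := by
        rw [min_eq_right h, max_eq_right hεb.le]
      rw [he, hkey0, add_zero]
  have hGle := hQM (Set.Ioo ε b) isOpen_Ioo
    (by rw [closure_Ioo hεb.ne]; exact isCompact_Icc)
    (by rw [closure_Ioo hεb.ne]; exact hIcc)
    v dv hdvm hACv hLpv hbd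
  have hpi : IntegrableOn (fun t => |du t| ^ p) (Set.Icc ε b) := hLp ε b hεb.le hIcc
  have hLHS : ∫⁻ t in Set.Ioo ε b, ENNReal.ofReal (|du t| ^ p)
      = ENNReal.ofReal (∫ t in Set.Ioo ε b, |du t| ^ p) :=
    (ofReal_integral_eq_lintegral_ofReal (hpi.mono_set Set.Ioo_subset_Icc_self)
      (Filter.Eventually.of_forall fun t => Real.rpow_nonneg (abs_nonneg _) _)).symm
  have hRHS : ∫⁻ t in Set.Ioo ε b, ENNReal.ofReal (|dv t| ^ p)
      = ENNReal.ofReal (m ^ p * (b - ε)) := by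
    rw [setLIntegral_congr_fun measurableSet_Ioo
      (fun t (htm : t ∈ Set.Ioo ε b) => by
        have hdvt : dv t = m := by rw [hdvdef]; exact if_pos ⟨htm.1, htm.2.le⟩
        rw [hdvt, abs_of_nonneg hm0])]
    rw [setLIntegral_const, Real.volume_Ioo, ← ENNReal.ofReal_mul (Real.rpow_nonneg hm0 _)]
  rw [hLHS, hRHS, ← ENNReal.ofReal_mul hQ0] at hGle
  have hbe : (0:ℝ) < b - ε := by linarith
  have hreal : ∫ t in Set.Ioo ε b, |du t| ^ p ≤ Q * (m ^ p * (b - ε)) :=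
    (ENNReal.ofReal_le_ofReal_iff
      (mul_nonneg hQ0 (mul_nonneg (Real.rpow_nonneg hm0 _) hbe.le))).mp hGle
  have hsub1 : Set.Ioc ε 1 ⊆ Set.Icc ε b := fun t ht => ⟨ht.1.le, ht.2.trans hb1.le⟩
  have hsub2 : Set.Ioc 1 b ⊆ Set.Icc ε b := fun t ht => ⟨hε1.le.trans ht.1.le, ht.2⟩
  have hsplit : ∫ t in Set.Ioo ε b, |du t| ^ p
      = (∫ t in Set.Ioc ε 1, |du t| ^ p) + ∫ t in Set.Ioo 1 b, |du t| ^ p := by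
    rw [← Set.Ioc_union_Ioo_eq_Ioo hε1.le hb1]
    exact setIntegral_union (by rw [Set.disjoint_left]; rintro t ⟨_, h1⟩ ⟨h2, _⟩; linarith)
      measurableSet_Ioo (hpi.mono_set hsub1)
      (hpi.mono_set (fun t ht => hsub2 ⟨ht.1, ht.2.le⟩))
  have hH1 := holder_aux p hp du ε 1 hε1.le hdm (hduIεb.mono_set hsub1) (hpi.mono_set hsub1)
  have hFTC1' : ∫ t in Set.Ioc ε 1, du t = 1 - ε := by
    have h := hFTC 1 h1mem
    rw [hUε, intervalIntegral.integral_of_le hε1.le] at h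
    linarith [hU1, h]
  have habs1 : (1 : ℝ) - ε ≤ ∫ t in Set.Ioc ε 1, |du t| := by
    rw [← hFTC1']
    exact integral_mono (hduIεb.mono_set hsub1) ((hduIεb.mono_set hsub1).abs)
      (fun t => le_abs_self _)
  have hI1 : (1 : ℝ) - ε ≤ ∫ t in Set.Ioc ε 1, |du t| ^ p := by
    have h2 : (1 - ε) ^ p ≤ (∫ t in Set.Ioc ε 1, |du t| ^ p) * (1 - ε) ^ (p - 1) :=
      le_trans (Real.rpow_le_rpow (by linarith) habs1 hp0.le) hH1
    have h3 : (1 - ε) ^ p = (1 - ε) * (1 - ε) ^ (p - 1) := by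
      nth_rewrite 1 [show p = 1 + (p - 1) by ring]
      rw [Real.rpow_add (by linarith : (0:ℝ) < 1 - ε), Real.rpow_one]
    rw [h3] at h2
    exact le_of_mul_le_mul_right h2
      (Real.rpow_pos_of_pos (by linarith : (0:ℝ) < 1 - ε) (p - 1))
  have hduI1b : IntegrableOn du (Set.Ioc 1 b) := hduIεb.mono_set hsub2
  have hpiI1b : IntegrableOn (fun t => |du t| ^ p) (Set.Ioc 1 b) := hpi.mono_set hsub2
  have hH2 := holder_aux p hp du 1 b hb1.le hdm hduI1b hpiI1b
  have hFTC2' : ∫ t in Set.Ioc 1 b, du t = U b - 1 := by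
    have h := hFTC b hbmem
    have h1 := hFTC 1 h1mem
    have hadd : (∫ t in ε..1, du t) + ∫ t in (1:ℝ)..b, du t = ∫ t in ε..b, du t :=
      intervalIntegral.integral_add_adjacent_intervals
        (hduInt ε b hIcc ε 1 ⟨le_rfl, hεb.le⟩ h1mem) (hduInt ε b hIcc 1 b h1mem hbmem)
    rw [← intervalIntegral.integral_of_le hb1.le]
    rw [hUε] at h h1
    rw [hU1] at h1
    linarith [hadd]
  have habs2 : U b - 1 ≤ ∫ t in Set.Ioc 1 b, |du t| := by
    rw [← hFTC2']
    exact integral_mono hduI1b hduI1b.abs (fun t => le_abs_self _)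
  have hI2 : (U b - 1) ^ p / (x - 1) ^ (p - 1) ≤ ∫ t in Set.Ioo 1 b, |du t| ^ p := by
    rw [← integral_Ioc_eq_integral_Ioo]
    have h2 : (U b - 1) ^ p ≤ (∫ t in Set.Ioc 1 b, |du t| ^ p) * (b - 1) ^ (p - 1) :=
      le_trans (Real.rpow_le_rpow (by linarith) habs2 hp0.le) hH2
    rw [div_le_iff₀ (Real.rpow_pos_of_pos (by linarith : (0:ℝ) < x - 1) (p - 1))]
    refine le_trans h2 (mul_le_mul_of_nonneg_left
      (Real.rpow_le_rpow (by linarith) (by linarith) (by linarith))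
      (integral_nonneg fun t => Real.rpow_nonneg (abs_nonneg _) _))
  have hmain : (1 - ε) + (U b - 1) ^ p / (x - 1) ^ (p - 1) ≤ Q * (m ^ p * (b - ε)) := by
    rw [hsplit] at hreal
    exact le_trans (add_le_add hI1 hI2) hreal
  have hbp : (b - ε) ^ p = (b - ε) * (b - ε) ^ (p - 1) := by
    nth_rewrite 1 [show p = 1 + (p - 1) by ring]
    rw [Real.rpow_add hbe, Real.rpow_one]
  have hmp : m ^ p * (b - ε) = (U b - ε) ^ p / (b - ε) ^ (p - 1) := by
    rw [hmdef, Real.div_rpow (by linarith : (0:ℝ) ≤ U b - ε) hbe.le, hbp]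
    have hne1 : b - ε ≠ 0 := hbe.ne'
    have hne2 : (b - ε) ^ (p - 1) ≠ 0 := (Real.rpow_pos_of_pos hbe _).ne'
    field_simp
  have hfinal : Q * (m ^ p * (b - ε)) ≤ Q * a ^ p / (x - 2 * ε) ^ (p - 1) := by
    have hx2 : x - 2 * ε = b - ε := by rw [hbdef]; ring
    rw [hmp, hx2, mul_div_assoc]
    exact mul_le_mul_of_nonneg_left
      ((div_le_div_iff_of_pos_right (Real.rpow_pos_of_pos hbe _)).mpr
        (Real.rpow_le_rpow (by linarith) (by linarith) hp0.le)) hQ0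
  linarith [hmain, hfinal]

/-- **Energy lower bound for quasiminimizing extensions of the identity.**
If `U` is a nondecreasing continuous `Q`-quasiminimizer on `(0,x)`, `x > 1`, with
`U(t) = t` for `0 < t ≤ 1` and `U(t) → a` as `t → x⁻`, then
`Q a^p ≥ x^{p-1} + (a-1)^p (1 - 1/x)^{1-p}`. -/
theorem quasiminimizer_extension_lower_bound
    (p Q x : ℝ) (hp : 1 < p) (hQ : 1 ≤ Q) (hx : 1 < x)
    (U : ℝ → ℝ) (hmono : MonotoneOn U (Set.Ioo 0 x))
    (hcont : ContinuousOn U (Set.Ioo 0 x))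
    (hqm : IsQuasiminimizerOn p Q (Set.Ioo 0 x) U)
    (hid : ∀ t : ℝ, 0 < t → t ≤ 1 → U t = t)
    (a : ℝ) (ha : Filter.Tendsto U (nhdsWithin x (Set.Ioo 0 x)) (nhds a)) :
    x ^ (p - 1) + (a - 1) ^ p * (1 - 1 / x) ^ (1 - p) ≤ Q * a ^ p := by
  obtain ⟨du, hqw⟩ := hqm
  have hp0 : (0:ℝ) < p := by linarith
  have hx0 : (0:ℝ) < x := by linarith
  haveI : (nhdsWithin x (Set.Ioo 0 x)).NeBot := by
    refine mem_closure_iff_nhdsWithin_neBot.mp ?_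
    rw [closure_Ioo (show (0:ℝ) ≠ x by linarith)]
    exact ⟨by linarith, le_rfl⟩
  have hUle : ∀ t ∈ Set.Ioo 0 x, U t ≤ a := by
    intro t ht
    refine ge_of_tendsto ha ?_
    filter_upwards [self_mem_nhdsWithin,
      Filter.Eventually.filter_mono nhdsWithin_le_nhds (eventually_gt_nhds ht.2)] with s hs hst
    exact hmono ht hs hst.le
  have ha1 : 1 ≤ a := by
    rw [← hid 1 one_pos le_rfl]
    exact hUle 1 ⟨one_pos, hx⟩
  have hUbt : Filter.Tendsto (fun ε => U (x - ε)) (nhdsWithin 0 (Set.Ioi 0)) (nhds a) := by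
    apply ha.comp
    rw [tendsto_nhdsWithin_iff]
    constructor
    · have h : Filter.Tendsto (fun ε : ℝ => x - ε) (nhds 0) (nhds (x - 0)) :=
        (continuous_const.sub continuous_id).tendsto 0
      simpa using h.mono_left nhdsWithin_le_nhds
    · filter_upwards [Ioo_mem_nhdsGT_of_mem
        (show (0:ℝ) ∈ Set.Ico (0:ℝ) (x - 1) from ⟨le_rfl, by linarith⟩)] with ε hε
      exact ⟨by linarith [hε.2], by linarith [hε.1]⟩
  set δ : ℝ := min 1 ((x - 1) / 2) with hδdef
  have hδ0 : 0 < δ := lt_min one_pos (by linarith)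
  have hev : ∀ᶠ ε in nhdsWithin 0 (Set.Ioi 0),
      (1 - ε) + (U (x - ε) - 1) ^ p / (x - 1) ^ (p - 1)
        ≤ Q * a ^ p / (x - 2 * ε) ^ (p - 1) := by
    filter_upwards [Ioo_mem_nhdsGT_of_mem
      (show (0:ℝ) ∈ Set.Ico (0:ℝ) δ from ⟨le_rfl, hδ0⟩)] with ε hε
    exact key_estimate p Q x hp (by linarith) hx U du hmono hqw hid a hUle ε hε.1
      (lt_of_lt_of_le hε.2 (min_le_left _ _))
      (lt_of_lt_of_le hε.2 (min_le_right _ _))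
  have hL : Filter.Tendsto (fun ε => (1 - ε) + (U (x - ε) - 1) ^ p / (x - 1) ^ (p - 1))
      (nhdsWithin 0 (Set.Ioi 0)) (nhds (1 + (a - 1) ^ p / (x - 1) ^ (p - 1))) := by
    have h1 : Filter.Tendsto (fun ε : ℝ => 1 - ε) (nhdsWithin 0 (Set.Ioi 0)) (nhds 1) := by
      have h : Filter.Tendsto (fun ε : ℝ => 1 - ε) (nhds 0) (nhds (1 - 0)) :=
        (continuous_const.sub continuous_id).tendsto 0
      simpa using h.mono_left nhdsWithin_le_nhds
    have h2 : Filter.Tendsto (fun ε => (U (x - ε) - 1) ^ p) (nhdsWithin 0 (Set.Ioi 0))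
        (nhds ((a - 1) ^ p)) :=
      (hUbt.sub_const 1).rpow_const (Or.inr hp0.le)
    exact h1.add (h2.div_const _)
  have hR : Filter.Tendsto (fun ε => Q * a ^ p / (x - 2 * ε) ^ (p - 1))
      (nhdsWithin 0 (Set.Ioi 0)) (nhds (Q * a ^ p / x ^ (p - 1))) := by
    have h1 : Filter.Tendsto (fun ε : ℝ => x - 2 * ε) (nhdsWithin 0 (Set.Ioi 0)) (nhds x) := by
      have h : Filter.Tendsto (fun ε : ℝ => x - 2 * ε) (nhds 0) (nhds (x - 2 * 0)) :=
        (continuous_const.sub (continuous_const.mul continuous_id)).tendsto 0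
      simpa using h.mono_left nhdsWithin_le_nhds
    have h2 := h1.rpow_const (p := p - 1) (Or.inl hx0.ne')
    exact Filter.Tendsto.div tendsto_const_nhds h2 (Real.rpow_pos_of_pos hx0 _).ne'
  have hlim : 1 + (a - 1) ^ p / (x - 1) ^ (p - 1) ≤ Q * a ^ p / x ^ (p - 1) :=
    le_of_tendsto_of_tendsto hL hR hev
  have hx1 : (0:ℝ) < x - 1 := by linarith
  have hX : (0:ℝ) < x ^ (p - 1) := Real.rpow_pos_of_pos hx0 _
  have hY : (0:ℝ) < (x - 1) ^ (p - 1) := Real.rpow_pos_of_pos hx1 _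
  have hrw : (1 - 1 / x) ^ (1 - p) = x ^ (p - 1) / (x - 1) ^ (p - 1) := by
    have h1 : (1:ℝ) - 1 / x = (x - 1) / x := by field_simp
    rw [h1, show (1 - p) = -(p - 1) by ring, Real.rpow_neg (by positivity),
      Real.div_rpow hx1.le hx0.le, inv_div]
  rw [hrw]
  calc x ^ (p - 1) + (a - 1) ^ p * (x ^ (p - 1) / (x - 1) ^ (p - 1))
      = x ^ (p - 1) * (1 + (a - 1) ^ p / (x - 1) ^ (p - 1)) := by
        field_simp
    _ ≤ x ^ (p - 1) * (Q * a ^ p / x ^ (p - 1)) := mul_le_mul_of_nonneg_left hlim hX.le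
    _ = Q * a ^ p := by
        field_simp
end

section
/- Let p > 1 and Q ≥ 1. For every M > 0 there exists x₀ > 1 such that for every x ≥ x₀ the following holds: every nondecreasing continuous Q-quasiminimizer U on the interval (0,x) (with respect to unweighted ℝ and exponent p) satisfying U(t) = t for all 0 < t ≤ 1 has lim_{t→x⁻} U(t) ≥ M (with the convention that the conclusion holds trivially if U is unbounded above). In other words, the infimum f_Q(x) of lim_{t→x⁻} U(t) over all such extensions U tends to ∞ as x → ∞. -/
open MeasureTheory Set

set_option maxHeartbeats 2000000 in
/-- **`f_Q(x) → ∞` as `x → ∞`.** For every `M > 0` there is `x₀ > 1` such that for all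
`x ≥ x₀`, every nondecreasing continuous `Q`-quasiminimizer `U` on `(0,x)` with
`U(t) = t` for `0 < t ≤ 1` has `lim_{t→x⁻} U(t) ≥ M` (trivially, if the limit does
not exist, i.e. `U` is unbounded above, the conclusion holds). -/
theorem quasiminimizer_extension_tendsto_infty
    (p Q : ℝ) (hp : 1 < p) (hQ : 1 ≤ Q) :
    ∀ M : ℝ, 0 < M → ∃ x₀ : ℝ, 1 < x₀ ∧ ∀ x : ℝ, x₀ ≤ x →
      ∀ U : ℝ → ℝ, MonotoneOn U (Set.Ioo 0 x) →
        ContinuousOn U (Set.Ioo 0 x) →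
        IsQuasiminimizerOn p Q (Set.Ioo 0 x) U →
        (∀ t : ℝ, 0 < t → t ≤ 1 → U t = t) →
        ∀ a : ℝ, Filter.Tendsto U (nhdsWithin x (Set.Ioo 0 x)) (nhds a) → M ≤ a := by
  classical
  intro M hM
  have hp0 : (0:ℝ) < p := lt_trans one_pos hp
  have hp1 : (0:ℝ) < p - 1 := by linarith
  have hQ0 : (0:ℝ) < Q := by linarith
  have h2p : (0:ℝ) < (2:ℝ) ^ p := Real.rpow_pos_of_pos two_pos p
  have hMp : (0:ℝ) < M ^ p := Real.rpow_pos_of_pos hM p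
  set K : ℝ := 2 ^ p * Q * M ^ p with hKdef
  have hK : 0 < K := mul_pos (mul_pos h2p hQ0) hMp
  have hKr : 0 < K ^ (1/(p-1)) := Real.rpow_pos_of_pos hK _
  refine ⟨2 + K ^ (1/(p-1)), by linarith, ?_⟩
  intro x hx U hmono hcont hqmin hinit a hlim
  obtain ⟨du, hdum, hAC, hLp, hqm⟩ := hqmin
  by_contra hcon
  push_neg at hcon
  -- basic facts
  have hx2 : 2 < x := by linarith
  set b : ℝ := x - 1/2 with hbdef
  have hb1 : (1:ℝ) < b := by rw [hbdef]; linarith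
  have hbx : b < x := by rw [hbdef]; linarith
  have hhb : (1/2:ℝ) < b := by linarith
  have hx1 : (1:ℝ) < x := by linarith
  have hUhalf : U (1/2) = 1/2 := hinit _ (by norm_num) (by norm_num)
  have hU1 : U 1 = 1 := hinit 1 one_pos le_rfl
  have h1mem : (1:ℝ) ∈ Ioo (0:ℝ) x := ⟨one_pos, hx1⟩
  have hbmem : b ∈ Ioo (0:ℝ) x := ⟨by linarith, hbx⟩
  have hUb1 : 1 ≤ U b := by
    have := hmono h1mem hbmem hb1.le
    rw [hU1] at this; exact this
  haveI hNB : (nhdsWithin x (Ioo (0:ℝ) x)).NeBot := by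
    refine mem_closure_iff_nhdsWithin_neBot.mp ?_
    rw [closure_Ioo (by linarith : (0:ℝ) ≠ x)]
    exact ⟨by linarith, le_refl x⟩
  have hUba : U b ≤ a := by
    refine ge_of_tendsto hlim ?_
    have h1 : ∀ᶠ s in nhdsWithin x (Ioo 0 x), b < s :=
      Filter.Eventually.filter_mono nhdsWithin_le_nhds (eventually_gt_nhds hbx)
    have h2 : ∀ᶠ s in nhdsWithin x (Ioo 0 x), s ∈ Ioo (0:ℝ) x := eventually_mem_nhdsWithin
    filter_upwards [h1, h2] with s hs1 hs2
    exact hmono hbmem hs2 hs1.le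
  set c : ℝ := (U b - 1/2) / (b - 1/2) with hcdef
  have hbhalf : (0:ℝ) < b - 1/2 := by linarith
  have hc0 : 0 ≤ c := div_nonneg (by linarith) hbhalf.le
  have hceq : c * (b - 1/2) = U b - 1/2 := div_mul_cancel₀ _ (ne_of_gt hbhalf)
  set v : ℝ → ℝ := fun t => if t ≤ 1/2 then U t else if t ≤ b then 1/2 + c * (t - 1/2) else U t
    with hvdef
  set dv : ℝ → ℝ := fun t => if t ≤ 1/2 then du t else if t ≤ b then c else du t with hdvdef
  have hdvm : Measurable dv := by
    rw [hdvdef]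
    exact Measurable.ite (measurableSet_le measurable_id measurable_const) hdum
      (Measurable.ite (measurableSet_le measurable_id measurable_const) measurable_const hdum)
  have hdvabs : ∀ t, |dv t| ≤ |du t| + |c| := by
    intro t
    rw [hdvdef]
    simp only
    split_ifs with h1 h2
    · nlinarith [abs_nonneg c]
    · nlinarith [abs_nonneg (du t)]
    · nlinarith [abs_nonneg c]
  -- the clamp formula for v
  have hvU : ∀ r : ℝ,
      v r = U r + (c * (max (min r b) (1/2) - 1/2) - (U (max (min r b) (1/2)) - 1/2)) := by
    intro r
    rw [hvdef]
    simp only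
    split_ifs with h1 h2
    · rw [min_eq_left (by linarith : r ≤ b), max_eq_right h1, hUhalf]; ring
    · push_neg at h1
      rw [min_eq_left h2, max_eq_left h1.le]; ring
    · push_neg at h1 h2
      rw [min_eq_right h2.le, max_eq_left hhb.le]
      linarith [hceq]
  -- FTC facts for U
  have hFTCU : ∀ s t : ℝ, s ≤ t → 0 < s → t < x →
      IntegrableOn du (Icc s t) ∧ U t = U s + ∫ r in s..t, du r := by
    intro s t hst hs ht
    have hsub : Icc s t ⊆ Ioo 0 x := fun r hr => ⟨lt_of_lt_of_le hs hr.1, lt_of_le_of_lt hr.2 ht⟩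
    obtain ⟨hint, hF⟩ := hAC s t hst hsub
    exact ⟨hint, hF t ⟨hst, le_rfl⟩⟩
  -- FTC for v
  have key : ∀ s t : ℝ, 0 < s → s ≤ t → t < x → v t - v s = ∫ r in s..t, dv r := by
    intro s t hs hst htx
    obtain ⟨hduint, hUft⟩ := hFTCU s t hst hs htx
    have hduIoc : IntegrableOn du (Ioc s t) := hduint.mono_set Ioc_subset_Icc_self
    have hdecomp : ∀ r : ℝ, dv r = du r + (Ioc (1/2:ℝ) b).indicator (fun r => c - du r) r := by
      intro r
      rw [hdvdef]
      simp only
      split_ifs with h1 h2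
      · rw [Set.indicator_of_notMem (fun hr => (not_lt.mpr h1) hr.1)]; ring
      · push_neg at h1
        rw [Set.indicator_of_mem (show r ∈ Ioc (1/2:ℝ) b from ⟨h1, h2⟩)]; ring
      · push_neg at h1 h2
        rw [Set.indicator_of_notMem (fun hr => (not_lt.mpr hr.2) h2)]; ring
    have hindint : Integrable ((Ioc (1/2:ℝ) b).indicator (fun r => c - du r))
        (volume.restrict (Ioc s t)) :=
      (((integrable_const c).sub hduIoc)).indicator measurableSet_Ioc
    have hIocEq : ∫ r in s..t, dv r = ∫ r in Ioc s t, dv r := intervalIntegral.integral_of_le hst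
    have hsplit : ∫ r in Ioc s t, dv r =
        (∫ r in Ioc s t, du r) +
          ∫ r in Ioc s t, (Ioc (1/2:ℝ) b).indicator (fun r => c - du r) r := by
      rw [← integral_add hduIoc hindint]
      exact integral_congr_ae (Filter.Eventually.of_forall hdecomp)
    have hind : ∫ r in Ioc s t, (Ioc (1/2:ℝ) b).indicator (fun r => c - du r) r
        = ∫ r in Ioc (max s (1/2)) (min t b), (c - du r) := by
      rw [setIntegral_indicator measurableSet_Ioc, Set.Ioc_inter_Ioc]
    have hdu_eq : ∫ r in Ioc s t, du r = U t - U s := by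
      rw [← intervalIntegral.integral_of_le hst]; linarith [hUft]
    by_cases hst' : max s (1/2) ≤ min t b
    · -- nonempty middle interval
      have hs'0 : (0:ℝ) < max s (1/2) := lt_of_lt_of_le (by norm_num) (le_max_right _ _)
      have ht'x : min t b < x := lt_of_le_of_lt (min_le_left _ _) htx
      obtain ⟨hi2, hF2⟩ := hFTCU (max s (1/2)) (min t b) hst' hs'0 ht'x
      have hi2' : IntervalIntegrable du volume (max s (1/2)) (min t b) := by
        rw [intervalIntegrable_iff, uIoc_of_le hst']
        exact hi2.mono_set Ioc_subset_Icc_self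
      have hmid : ∫ r in Ioc (max s (1/2)) (min t b), (c - du r)
          = c * (min t b - max s (1/2)) - (U (min t b) - U (max s (1/2))) := by
        rw [← intervalIntegral.integral_of_le hst',
          intervalIntegral.integral_sub intervalIntegrable_const hi2',
          intervalIntegral.integral_const]
        have : ∫ r in (max s (1/2))..(min t b), du r = U (min t b) - U (max s (1/2)) := by
          linarith [hF2]
        rw [this]; simp [smul_eq_mul]; ring
      have hsb : s ≤ b := le_trans (le_trans (le_max_left s (1/2)) hst') (min_le_right t b)
      have hφs : max (min s b) (1/2) = max s (1/2) := by rw [min_eq_left hsb]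
      have hth : (1/2:ℝ) ≤ min t b := le_trans (le_max_right s (1/2)) hst'
      have hφt : max (min t b) (1/2) = min t b := max_eq_left hth
      rw [hvU t, hvU s, hφt, hφs, hIocEq, hsplit, hind, hmid, hdu_eq]
      ring
    · push_neg at hst'
      have hempty : Ioc (max s (1/2)) (min t b) = (∅ : Set ℝ) :=
        Set.Ioc_eq_empty (not_lt.mpr hst'.le)
      have hzero : ∫ r in Ioc (max s (1/2)) (min t b), (c - du r) = 0 := by
        rw [hempty]; simp
      have hcase : t < 1/2 ∨ b < s := by
        rcases le_total t b with h|h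
        · rcases le_total s (1/2) with h'|h'
          · left
            have h1 : min t b = t := min_eq_left h
            have h2 : max s (1/2) = 1/2 := max_eq_right h'
            rw [h1, h2] at hst'; exact hst'
          · exfalso
            have h1 : min t b = t := min_eq_left h
            have h2 : max s (1/2) = s := max_eq_left h'
            rw [h1, h2] at hst'; linarith
        · right
          have h1 : min t b = b := min_eq_right h
          rcases le_total s (1/2) with h'|h'
          · exfalso
            have h2 : max s (1/2) = 1/2 := max_eq_right h'
            rw [h1, h2] at hst'; linarith
          · have h2 : max s (1/2) = s := max_eq_left h'
            rw [h1, h2] at hst'; exact hst'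
      have hφeq : max (min t b) (1/2) = max (min s b) (1/2) := by
        rcases hcase with h|h
        · rw [min_eq_left (by linarith : t ≤ b), min_eq_left (by linarith : s ≤ b),
            max_eq_right (by linarith : t ≤ 1/2), max_eq_right (by linarith : s ≤ 1/2)]
        · rw [min_eq_right (by linarith : b ≤ t), min_eq_right (by linarith : b ≤ s)]
      rw [hvU t, hvU s, hφeq, hIocEq, hsplit, hind, hzero, hdu_eq]
      ring
  -- v is locally AC
  have hvAC : LocACWith (Ioo 0 x) v dv := by
    intro α β hαβ hsub
    have hα0 : 0 < α := (hsub ⟨le_rfl, hαβ⟩).1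
    have hβx : β < x := (hsub ⟨hαβ, le_rfl⟩).2
    obtain ⟨hdu, _⟩ := hAC α β hαβ hsub
    constructor
    · have hgint : IntegrableOn (fun t => |du t| + |c|) (Icc α β) :=
        hdu.abs.add (integrableOn_const measure_Icc_lt_top.ne)
      refine Integrable.mono' hgint hdvm.aestronglyMeasurable ?_
      refine Filter.Eventually.of_forall fun t => ?_
      rw [Real.norm_eq_abs]
      exact hdvabs t
    · intro y hy
      have := key α y hα0 hy.1 (lt_of_le_of_lt hy.2 hβx)
      linarith
  -- dv ∈ L^p_loc
  have hvLp : LpLocOn p (Ioo 0 x) dv := by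
    intro α β hαβ hsub
    have hdup := hLp α β hαβ hsub
    have hgint : IntegrableOn (fun t => |du t| ^ p + |c| ^ p) (Icc α β) :=
      hdup.add (integrableOn_const measure_Icc_lt_top.ne)
    refine Integrable.mono' hgint ?_ ?_
    · apply Measurable.aestronglyMeasurable
      fun_prop
    · refine Filter.Eventually.of_forall fun t => ?_
      rw [Real.norm_eq_abs, abs_of_nonneg (Real.rpow_nonneg (abs_nonneg _) p)]
      rw [hdvdef]
      simp only
      split_ifs with h1 h2
      · nlinarith [Real.rpow_nonneg (abs_nonneg c) p]
      · nlinarith [Real.rpow_nonneg (abs_nonneg (du t)) p]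
      · nlinarith [Real.rpow_nonneg (abs_nonneg c) p]
  -- v = U outside G
  have hagree : ∀ t ∈ Ioo (0:ℝ) x \ Ioo (1/2:ℝ) b, v t = U t := by
    intro t ht
    rw [hvdef]
    simp only
    split_ifs with h1 h2
    · rfl
    · push_neg at h1
      have hbt : b ≤ t := by
        by_contra hbt
        push_neg at hbt
        exact ht.2 ⟨h1, hbt⟩
      have ht_eq : t = b := le_antisymm h2 hbt
      rw [ht_eq]
      linarith [hceq]
    · rfl
  -- apply quasiminimality
  have hclos : closure (Ioo (1/2:ℝ) b) = Icc (1/2:ℝ) b := closure_Ioo (ne_of_lt hhb)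
  have hmain := hqm (Ioo (1/2) b) isOpen_Ioo
    (by rw [hclos]; exact isCompact_Icc)
    (by rw [hclos]; intro t ht; exact ⟨lt_of_lt_of_le (by norm_num) ht.1, lt_of_le_of_lt ht.2 hbx⟩)
    v dv hdvm hvAC hvLp hagree
  -- lower bound on LHS
  obtain ⟨hdui, hduF⟩ := hFTCU (1/2) 1 (by norm_num) (by norm_num) hx1
  have hdui' : IntegrableOn du (Ioc (1/2:ℝ) 1) := hdui.mono_set Ioc_subset_Icc_self
  have hint_du : ∫ r in Ioc (1/2:ℝ) 1, du r = 1/2 := by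
    rw [← intervalIntegral.integral_of_le (by norm_num : (1/2:ℝ) ≤ 1)]
    rw [hU1, hUhalf] at hduF; linarith
  have habs : (1/2:ℝ) ≤ ∫ r in Ioc (1/2:ℝ) 1, |du r| := by
    have h1 := norm_integral_le_integral_norm (μ := volume.restrict (Ioc (1/2:ℝ) 1)) du
    rw [hint_du] at h1
    simp only [Real.norm_eq_abs] at h1
    calc (1/2:ℝ) ≤ |1/2| := le_abs_self _
    _ ≤ _ := h1
  have hofReal : ENNReal.ofReal (1/2:ℝ) ≤ ∫⁻ r in Ioc (1/2:ℝ) 1, ENNReal.ofReal |du r| := by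
    rw [← ofReal_integral_eq_lintegral_ofReal hdui'.abs
      (Filter.Eventually.of_forall fun t => abs_nonneg _)]
    exact ENNReal.ofReal_le_ofReal habs
  have hpq : p.HolderConjugate (p / (p-1)) := (Real.holderConjugate_iff_eq_conjExponent hp).mpr rfl
  have hFmeas : Measurable fun t => ENNReal.ofReal |du t| := hdum.abs.ennreal_ofReal
  have hhold := ENNReal.lintegral_mul_le_Lp_mul_Lq (volume.restrict (Ioc (1/2:ℝ) 1)) hpq
    hFmeas.aemeasurable (aemeasurable_const (b := (1:ENNReal)))
  simp only [Pi.mul_apply, mul_one, ENNReal.one_rpow, lintegral_one,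
    Measure.restrict_apply_univ, Real.volume_Ioc] at hhold
  have hXle : ENNReal.ofReal (1/2:ℝ) ≤
      (∫⁻ r in Ioc (1/2:ℝ) 1, (ENNReal.ofReal |du r|) ^ p) ^ (1/p) := by
    refine le_trans hofReal (le_trans hhold ?_)
    have hc1 : (ENNReal.ofReal (1 - 1/2)) ^ (1/(p/(p-1))) ≤ 1 :=
      ENNReal.rpow_le_one (ENNReal.ofReal_le_one.mpr (by norm_num)) (by positivity)
    calc _ ≤ (∫⁻ r in Ioc (1/2:ℝ) 1, (ENNReal.ofReal |du r|) ^ p) ^ (1/p) * 1 :=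
      mul_le_mul_right hc1 _
    _ = _ := mul_one _
  have hL1 : ENNReal.ofReal ((1/2:ℝ)^p) ≤
      ∫⁻ r in Ioc (1/2:ℝ) 1, ENNReal.ofReal (|du r|^p) := by
    have h2 := ENNReal.rpow_le_rpow hXle hp0.le
    rw [← ENNReal.rpow_mul, one_div_mul_cancel hp0.ne', ENNReal.rpow_one,
      ENNReal.ofReal_rpow_of_nonneg (by norm_num) hp0.le] at h2
    refine le_trans h2 (le_of_eq (lintegral_congr fun r => ?_))
    rw [ENNReal.ofReal_rpow_of_nonneg (abs_nonneg _) hp0.le]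
  have hIoc1 : Ioc (1/2:ℝ) 1 ⊆ Ioo (1/2:ℝ) b := fun t ht => ⟨ht.1, lt_of_le_of_lt ht.2 hb1⟩
  have hL : ENNReal.ofReal ((1/2:ℝ)^p) ≤ ∫⁻ r in Ioo (1/2:ℝ) b, ENNReal.ofReal (|du r|^p) :=
    le_trans hL1 (lintegral_mono_set hIoc1)
  -- RHS computation
  have hRHS : ∫⁻ r in Ioo (1/2:ℝ) b, ENNReal.ofReal (|dv r|^p)
      = ENNReal.ofReal (c^p) * ENNReal.ofReal (b - 1/2) := by
    have hcongr : ∀ r ∈ Ioo (1/2:ℝ) b,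
        ENNReal.ofReal (|dv r|^p) = ENNReal.ofReal (c^p) := by
      intro r hr
      have : dv r = c := by
        rw [hdvdef]; simp only; rw [if_neg (not_le.mpr hr.1), if_pos hr.2.le]
      rw [this, abs_of_nonneg hc0]
    rw [setLIntegral_congr_fun measurableSet_Ioo hcongr,
      setLIntegral_const, Real.volume_Ioo]
  have hchain : ENNReal.ofReal ((1/2:ℝ)^p) ≤ ENNReal.ofReal (Q * (c^p * (b - 1/2))) := by
    calc ENNReal.ofReal ((1/2:ℝ)^p) ≤ _ := hL
    _ ≤ ENNReal.ofReal Q * ∫⁻ r in Ioo (1/2:ℝ) b, ENNReal.ofReal (|dv r|^p) := hmain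
    _ = ENNReal.ofReal (Q * (c^p * (b - 1/2))) := by
        rw [hRHS, ← ENNReal.ofReal_mul (Real.rpow_nonneg hc0 p), ← ENNReal.ofReal_mul hQ0.le]
  have hreal : (1/2:ℝ)^p ≤ Q * (c^p * (b - 1/2)) :=
    (ENNReal.ofReal_le_ofReal_iff
      (mul_nonneg hQ0.le (mul_nonneg (Real.rpow_nonneg hc0 p) hbhalf.le))).mp hchain
  -- final arithmetic contradiction
  have hcM : c < M / (b - 1/2) := by
    rw [hcdef]
    exact (div_lt_div_iff_of_pos_right hbhalf).mpr (by linarith)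
  have hcp : c ^ p < (M / (b-1/2)) ^ p := Real.rpow_lt_rpow hc0 hcM hp0
  have hD : 0 < (b-1/2)^(p-1) := Real.rpow_pos_of_pos hbhalf _
  have hMb : (M / (b-1/2))^p * (b-1/2) = M^p / (b-1/2)^(p-1) := by
    rw [Real.div_rpow hM.le hbhalf.le]
    have h1 : (b-1/2:ℝ)^p = (b-1/2)^(p-1) * (b-1/2) := by
      calc (b-1/2:ℝ)^p = (b-1/2)^(p-1+1) := by norm_num
      _ = (b-1/2)^(p-1) * (b-1/2)^(1:ℝ) := Real.rpow_add hbhalf _ _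
      _ = (b-1/2)^(p-1) * (b-1/2) := by rw [Real.rpow_one]
    rw [h1, ← div_div, div_mul_cancel₀ _ (ne_of_gt hbhalf)]
  have hfinal : Q * (c^p * (b-1/2)) < Q * (M^p / (b-1/2)^(p-1)) := by
    refine mul_lt_mul_of_pos_left ?_ hQ0
    calc c^p * (b-1/2) < (M/(b-1/2))^p * (b-1/2) := mul_lt_mul_of_pos_right hcp hbhalf
    _ = M^p/(b-1/2)^(p-1) := hMb
  have hbK : K ≤ (b - 1/2)^(p-1) := by
    have hx1b : K^(1/(p-1)) ≤ b - 1/2 := by rw [hbdef]; linarith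
    calc K = K ^ ((1/(p-1)) * (p-1)) := by
          rw [one_div_mul_cancel (ne_of_gt hp1), Real.rpow_one]
    _ = (K^(1/(p-1)))^(p-1) := Real.rpow_mul hK.le _ _
    _ ≤ (b-1/2)^(p-1) := Real.rpow_le_rpow hKr.le hx1b hp1.le
  have hhp : (0:ℝ) < (1/2:ℝ)^p := Real.rpow_pos_of_pos (by norm_num) p
  have hhalf2 : (1/2:ℝ)^p * 2^p = 1 := by
    rw [← Real.mul_rpow (by norm_num) (by norm_num)]
    norm_num
  have h5 : Q * M ^ p ≤ (1/2:ℝ)^p * (b-1/2)^(p-1) := by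
    have h6 := mul_le_mul_of_nonneg_left hbK hhp.le
    have h7 : Q * M^p = (1/2:ℝ)^p * K := by
      rw [hKdef]; linear_combination (-(Q * M^p)) * hhalf2
    linarith
  have hlast : Q * (M^p / (b-1/2)^(p-1)) ≤ (1/2:ℝ)^p := by
    rw [← mul_div_assoc, div_le_iff₀ hD]
    linarith
  linarith
end

section
/- Let n ≥ 2 and C ≥ 1. Let F ⊂ ℝⁿ be a bounded closed set and let u : ℝⁿ \ F → ℝ be continuous, bounded, and satisfy the translate-Harnack property with constant C on ℝⁿ \ F. Then lim_{|x|→∞} u(x) exists (as a finite real number). -/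
open MeasureTheory Set

/-- `u` satisfies the translate-Harnack property with constant `C` on `D ⊆ ℝⁿ`:
for every `c ∈ ℝ` and every ball `B(y,r)` with `B(y,6r) ⊆ D` on which `u + c ≥ 0`,
one has `sup_{B(y,r)} (u + c) ≤ C inf_{B(y,r)} (u + c)`. -/
def TranslateHarnack {n : ℕ} (C : ℝ) (D : Set (EuclideanSpace ℝ (Fin n)))
    (u : EuclideanSpace ℝ (Fin n) → ℝ) : Prop :=
  ∀ c : ℝ, ∀ y : EuclideanSpace ℝ (Fin n), ∀ r : ℝ, 0 < r →
    Metric.ball y (6 * r) ⊆ D → (∀ z ∈ Metric.ball y (6 * r), 0 ≤ u z + c) →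
    ∀ z₁ ∈ Metric.ball y r, ∀ z₂ ∈ Metric.ball y r, u z₁ + c ≤ C * (u z₂ + c)

open Metric
open Metric Set

/-- A chain of `m` steps of size `< 1/24` along the unit sphere. -/
def ChainP {n : ℕ} (m : ℕ) (x y : EuclideanSpace ℝ (Fin n)) : Prop :=
  ∃ z : ℕ → EuclideanSpace ℝ (Fin n), z 0 = x ∧ z m = y ∧ (∀ i, i ≤ m → ‖z i‖ = 1) ∧
    ∀ i, i < m → dist (z i) (z (i + 1)) < 1 / 24

namespace ChainP

variable {n : ℕ} {m k : ℕ} {x y w : EuclideanSpace ℝ (Fin n)}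

lemma refl (hx : ‖x‖ = 1) : ChainP m x x :=
  ⟨fun _ => x, rfl, rfl, fun _ _ => hx, fun _ _ => by simp⟩

lemma norm_left (h : ChainP m x y) : ‖x‖ = 1 := by
  obtain ⟨z, h0, -, hn, -⟩ := h; rw [← h0]; exact hn 0 (Nat.zero_le _)

lemma norm_right (h : ChainP m x y) : ‖y‖ = 1 := by
  obtain ⟨z, -, h1, hn, -⟩ := h; rw [← h1]; exact hn m le_rfl

lemma step (h : ChainP m x y) (hw : ‖w‖ = 1) (hd : dist y w < 1 / 24) :
    ChainP (m + 1) x w := by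
  obtain ⟨z, h0, h1, hn, hd'⟩ := h
  refine ⟨fun i => if i ≤ m then z i else w, by simp [h0], by simp, ?_, ?_⟩
  · intro i hi
    by_cases h : i ≤ m <;> simp [h, hn, hw]
  · intro i hi
    rcases Nat.lt_or_ge i m with h | h
    · have h1' : i ≤ m := h.le
      have h2' : i + 1 ≤ m := h
      simp only [h1', h2', if_true]
      exact hd' i h
    · have : i = m := by omega
      subst this
      simpa [h1] using hd

lemma symm (h : ChainP m x y) : ChainP m y x := by
  obtain ⟨z, h0, h1, hn, hd⟩ := h
  refine ⟨fun i => z (m - i), by simp [h1], by simp [h0], fun i hi => hn _ (by omega), ?_⟩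
  intro i hi
  have e : m - i = (m - (i + 1)) + 1 := by omega
  simp only []
  rw [e, dist_comm]
  exact hd _ (by omega)

lemma trans (h : ChainP m x y) (h' : ChainP k y w) : ChainP (m + k) x w := by
  obtain ⟨z, h0, h1, hn, hd⟩ := h
  obtain ⟨z', h0', h1', hn', hd'⟩ := h'
  refine ⟨fun i => if i ≤ m then z i else z' (i - m), by simp [h0], ?_, ?_, ?_⟩
  · by_cases hk : k = 0
    · subst hk; simp only [Nat.add_zero, le_rfl, if_true, h1]
      rw [← h0']; exact h1'
    · have : ¬ (m + k ≤ m) := by omega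
      simp only [this, if_false, Nat.add_sub_cancel_left, h1']
  · intro i hi
    by_cases h : i ≤ m
    · simp [h, hn i h]
    · simp only [h, if_false]; exact hn' _ (by omega)
  · intro i hi
    rcases Nat.lt_or_ge i m with h | h
    · have h1' : i ≤ m := h.le
      have h2' : i + 1 ≤ m := h
      simpa [h1', h2'] using hd i h
    · have e1 : (if i ≤ m then z i else z' (i - m)) = z' (i - m) := by
        by_cases h' : i ≤ m
        · have : i = m := by omega
          subst this; simp [h1, h0']
        · simp [h']
      have e2 : ¬ (i + 1 ≤ m) := by omega
      simp only [e1, e2, if_false]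
      have e3 : i + 1 - m = (i - m) + 1 := by omega
      rw [e3]
      exact hd' _ (by omega)

lemma mono (h : ChainP m x y) (hmk : m ≤ k) : ChainP k x y := by
  have := h.trans (ChainP.refl (m := k - m) h.norm_right)
  rwa [Nat.add_sub_cancel' hmk] at this

end ChainP

lemma rank_fact (n : ℕ) (hn : 2 ≤ n) : 1 < Module.rank ℝ (EuclideanSpace ℝ (Fin n)) := by
  have h1 : (Module.finrank ℝ (EuclideanSpace ℝ (Fin n)) : Cardinal) =
      Module.rank ℝ (EuclideanSpace ℝ (Fin n)) := Module.finrank_eq_rank ℝ _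
  rw [← h1, finrank_euclideanSpace, Fintype.card_fin]
  exact_mod_cast hn

lemma exists_uniform_chain (n : ℕ) (hn : 2 ≤ n) :
    ∃ N : ℕ, ∀ x y : EuclideanSpace ℝ (Fin n), ‖x‖ = 1 → ‖y‖ = 1 → ChainP N x y := by
  haveI : NeZero n := ⟨by omega⟩
  set E := EuclideanSpace ℝ (Fin n)
  set b : E := EuclideanSpace.single (0 : Fin n) (1 : ℝ) with hbdef
  have hb : ‖b‖ = 1 := by rw [hbdef, EuclideanSpace.norm_single]; norm_num
  set S : Set E := sphere 0 1 with hSdef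
  have hSmem : ∀ x : E, x ∈ S ↔ ‖x‖ = 1 := fun x => mem_sphere_zero_iff_norm
  have hbS : b ∈ S := (hSmem b).2 hb
  have hScon : IsPreconnected S := isPreconnected_sphere (rank_fact n hn) 0 1
  have hScomp : IsCompact S := isCompact_sphere 0 1
  -- step 1: every point is chainable from b
  have step1 : ∀ y ∈ S, ∃ m, ChainP m b y := by
    by_contra hcon
    push_neg at hcon
    obtain ⟨y₂, hy₂S, hy₂⟩ := hcon
    set V : Set E := {v | ‖v‖ = 1 ∧ ∃ m, ChainP m b v} with hV
    set U : Set E := ⋃ v ∈ V, ball v (1/24) with hU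
    set W : Set E := ⋃ v ∈ S \ V, ball v (1/24) with hW
    have hUo : IsOpen U := isOpen_biUnion fun _ _ => isOpen_ball
    have hWo : IsOpen W := isOpen_biUnion fun _ _ => isOpen_ball
    have hSsub : S ⊆ U ∪ W := by
      intro v hv
      by_cases h : v ∈ V
      · exact Or.inl (mem_biUnion h (mem_ball_self (by norm_num)))
      · exact Or.inr (mem_biUnion ⟨hv, h⟩ (mem_ball_self (by norm_num)))
    have hbV : b ∈ V := ⟨hb, 0, ChainP.refl hb⟩
    have hSU : (S ∩ U).Nonempty := ⟨b, hbS, mem_biUnion hbV (mem_ball_self (by norm_num))⟩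
    have hSW : (S ∩ W).Nonempty := by
      refine ⟨y₂, hy₂S, mem_biUnion ⟨hy₂S, fun hmem => ?_⟩ (mem_ball_self (by norm_num))⟩
      exact absurd hmem.2 (not_exists.2 hy₂)
    obtain ⟨p, hpS, hpU, hpW⟩ := hScon U W hUo hWo hSsub hSU hSW
    obtain ⟨v₁, hv₁V, hpv₁⟩ := mem_iUnion₂.1 hpU
    obtain ⟨v₂, hv₂, hpv₂⟩ := mem_iUnion₂.1 hpW
    obtain ⟨m, hchain⟩ := hv₁V.2
    have hp1 : ‖p‖ = 1 := (hSmem p).1 hpS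
    have c2 : ChainP (m + 1) b p := hchain.step hp1 (by rw [dist_comm]; exact hpv₁)
    have c3 : ChainP (m + 2) b v₂ := c2.step ((hSmem v₂).1 hv₂.1) hpv₂
    exact hv₂.2 ⟨(hSmem v₂).1 hv₂.1, m + 2, c3⟩
  -- step 2: uniform bound via compactness
  have step2 : ∃ N, ∀ y ∈ S, ChainP N b y := by
    set O : ℕ → Set E := fun m => ⋃ v ∈ {v : E | ChainP m b v}, ball v (1/24) with hO
    have hOopen : ∀ m, IsOpen (O m) := fun m => isOpen_biUnion fun _ _ => isOpen_ball
    have hcover : S ⊆ ⋃ m, O m := by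
      intro y hy
      obtain ⟨m, hm⟩ := step1 y hy
      exact mem_iUnion.2 ⟨m, mem_biUnion hm (mem_ball_self (by norm_num))⟩
    obtain ⟨t, ht⟩ := hScomp.elim_finite_subcover O hOopen hcover
    refine ⟨t.sup id + 1, fun y hy => ?_⟩
    obtain ⟨m, hmt, hyO⟩ := mem_iUnion₂.1 (ht hy)
    obtain ⟨v, hv, hyv⟩ := mem_iUnion₂.1 hyO
    have : ChainP (m + 1) b y := ChainP.step hv ((hSmem y).1 hy) (by rw [dist_comm]; exact hyv)
    exact this.mono (by have h := Finset.le_sup (f := id) hmt; simp only [id] at h; omega)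
  obtain ⟨N, hN⟩ := step2
  refine ⟨N + N, fun x y hx hy => ?_⟩
  exact ((hN x ((hSmem x).2 hx)).symm).trans (hN y ((hSmem y).2 hy))

lemma chain_harnack {n : ℕ} {C : ℝ} (hC : 1 ≤ C) {F : Set (EuclideanSpace ℝ (Fin n))}
    {u : EuclideanSpace ℝ (Fin n) → ℝ} (hharnack : TranslateHarnack C Fᶜ u)
    {r₁ : ℝ} (hr₁ : 0 < r₁) (hFsub : ∀ w : EuclideanSpace ℝ (Fin n), r₁ < ‖w‖ → w ∈ Fᶜ)
    {μ : ℝ} (hμ : ∀ w : EuclideanSpace ℝ (Fin n), r₁ < ‖w‖ → μ ≤ u w)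
    {s : ℝ} (hs : 24 * r₁ ≤ s) {m : ℕ} {x y : EuclideanSpace ℝ (Fin n)}
    (hxy : ChainP m x y) :
    u (s • x) - μ ≤ C ^ m * (u (s • y) - μ) := by
  have hspos : 0 < s := lt_of_lt_of_le (by linarith) hs
  obtain ⟨z, h0, h1, hn, hd⟩ := hxy
  have key : ∀ i, i ≤ m → u (s • x) - μ ≤ C ^ i * (u (s • z i) - μ) := by
    intro i
    induction i with
    | zero => intro _; simp [h0]
    | succ i ih =>
      intro hi
      have hi' : i ≤ m := by omega
      have him : i < m := by omega
      have hnormzi : ‖s • z i‖ = s := by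
        rw [norm_smul, hn i hi', Real.norm_eq_abs, abs_of_pos hspos, mul_one]
      have hball : ∀ w ∈ ball (s • z i) (6 * (s / 12)), r₁ < ‖w‖ := by
        intro w hw
        have : dist w (s • z i) < s / 2 := by rw [mem_ball] at hw; linarith
        have h2 : ‖s • z i‖ - ‖w‖ ≤ dist w (s • z i) := by
          rw [dist_eq_norm]
          calc ‖s • z i‖ - ‖w‖ ≤ ‖s • z i - w‖ := by
                have := norm_sub_norm_le (s • z i) w; linarith [abs_le.1 (abs_norm_sub_norm_le (s • z i) w)]
          _ = ‖w - s • z i‖ := by rw [norm_sub_rev]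
        rw [hnormzi] at h2
        linarith
      have happ := hharnack (-μ) (s • z i) (s / 12) (by linarith)
        (fun w hw => hFsub w (hball w hw))
        (fun w hw => by have := hμ w (hball w hw); linarith)
        (s • z i) (mem_ball_self (by linarith))
        (s • z (i + 1)) ?_
      · have hstep : u (s • z i) - μ ≤ C * (u (s • z (i + 1)) - μ) := by
          have := happ; simp only [← sub_eq_add_neg] at this; linarith
        calc u (s • x) - μ ≤ C ^ i * (u (s • z i) - μ) := ih hi'
          _ ≤ C ^ i * (C * (u (s • z (i + 1)) - μ)) := by
              apply mul_le_mul_of_nonneg_left hstep (pow_nonneg (by linarith) i)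
          _ = C ^ (i + 1) * (u (s • z (i + 1)) - μ) := by ring
      · rw [mem_ball, dist_eq_norm, ← smul_sub, norm_smul, Real.norm_eq_abs,
          abs_of_pos hspos]
        have hd' : ‖z (i + 1) - z i‖ < 1 / 24 := by
          rw [← dist_eq_norm, dist_comm]; exact hd i him
        calc s * ‖z (i + 1) - z i‖ ≤ s * (1 / 24) := by nlinarith
          _ < s / 12 := by linarith
  have := key m le_rfl
  rwa [h1] at this

lemma isPreconnected_annulus {n : ℕ} (hn : 2 ≤ n) {a b : ℝ} (ha : 0 ≤ a) :
    IsPreconnected {x : EuclideanSpace ℝ (Fin n) | a < ‖x‖ ∧ ‖x‖ < b} := by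
  have hrank := rank_fact n hn
  have hsph : IsPreconnected (sphere (0 : EuclideanSpace ℝ (Fin n)) 1) :=
    isPreconnected_sphere hrank 0 1
  have hprod : IsPreconnected ((Ioo a b) ×ˢ (sphere (0 : EuclideanSpace ℝ (Fin n)) 1)) :=
    isPreconnected_Ioo.prod hsph
  have hcont : Continuous (fun p : ℝ × EuclideanSpace ℝ (Fin n) => p.1 • p.2) :=
    continuous_fst.smul continuous_snd
  have himg := hprod.image _ hcont.continuousOn
  convert himg using 1
  ext x
  constructor
  · rintro ⟨hax, hxb⟩
    have hx0 : (0:ℝ) < ‖x‖ := lt_of_le_of_lt ha hax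
    refine ⟨(‖x‖, ‖x‖⁻¹ • x), ⟨⟨hax, hxb⟩, ?_⟩, ?_⟩
    · rw [mem_sphere_zero_iff_norm, norm_smul, Real.norm_eq_abs, abs_of_pos (by positivity),
        inv_mul_cancel₀ hx0.ne']
    · simp only [smul_smul, mul_inv_cancel₀ hx0.ne', one_smul]
  · rintro ⟨⟨t, v⟩, ⟨⟨hat, htb⟩, hv⟩, rfl⟩
    have hv1 : ‖v‖ = 1 := mem_sphere_zero_iff_norm.1 hv
    have ht0 : 0 < t := lt_of_le_of_lt ha hat
    constructor <;> simp only [norm_smul, Real.norm_eq_abs, abs_of_pos ht0, hv1, mul_one] <;>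
      assumption

lemma annulus_min {n : ℕ} (hn : 2 ≤ n) {C : ℝ} (hC : 1 ≤ C)
    {F : Set (EuclideanSpace ℝ (Fin n))} {u : EuclideanSpace ℝ (Fin n) → ℝ}
    (hcont : ContinuousOn u Fᶜ) (hharnack : TranslateHarnack C Fᶜ u)
    {a b' b : ℝ} (ha : 0 < a) (hab' : a < b') (hb'b : b' < b)
    (hFsub : ∀ w : EuclideanSpace ℝ (Fin n), a ≤ ‖w‖ → w ∈ Fᶜ)
    {t : ℝ}
    (hbl_a : ∀ y : EuclideanSpace ℝ (Fin n), ‖y‖ = a → t < u y)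
    (hbl_b : ∀ y : EuclideanSpace ℝ (Fin n), ‖y‖ = b → t < u y)
    (hbl_m : ∀ y : EuclideanSpace ℝ (Fin n), ‖y‖ = b' → t < u y) :
    ∀ x : EuclideanSpace ℝ (Fin n), a ≤ ‖x‖ → ‖x‖ ≤ b → t < u x := by
  haveI : NeZero n := ⟨by omega⟩
  set A : Set (EuclideanSpace ℝ (Fin n)) := {x | a ≤ ‖x‖ ∧ ‖x‖ ≤ b} with hA
  have hAcl : IsClosed A := by
    have : A = (fun x : EuclideanSpace ℝ (Fin n) => ‖x‖) ⁻¹' (Icc a b) := by ext x; simp [hA, mem_Icc]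
    rw [this]; exact isClosed_Icc.preimage continuous_norm
  have hAsub : A ⊆ Fᶜ := fun x hx => hFsub x hx.1
  have hAcomp : IsCompact A := by
    refine (isCompact_closedBall (0 : EuclideanSpace ℝ (Fin n)) b).of_isClosed_subset hAcl ?_
    intro x hx; rw [mem_closedBall, dist_zero_right]; exact hx.2
  have hmid : ∃ y₀ : EuclideanSpace ℝ (Fin n), ‖y₀‖ = b' := by
    refine ⟨EuclideanSpace.single (0 : Fin n) b', ?_⟩
    rw [EuclideanSpace.norm_single, Real.norm_eq_abs, abs_of_pos (by linarith)]
  obtain ⟨y₀, hy₀⟩ := hmid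
  have hAne : A.Nonempty := ⟨y₀, by constructor <;> rw [hy₀] <;> linarith⟩
  obtain ⟨x₀, hx₀A, hx₀min⟩ := hAcomp.exists_isMinOn hAne (hcont.mono hAsub)
  set μ₀ := u x₀ with hμ₀
  by_cases hcase : t < μ₀
  · intro x hx1 hx2
    exact lt_of_lt_of_le hcase (hx₀min ⟨hx1, hx2⟩)
  · exfalso
    push_neg at hcase
    -- x₀ is in the open annulus
    have hx₀a : ‖x₀‖ ≠ a := fun h => absurd (hbl_a x₀ h) (not_lt.2 hcase)
    have hx₀b : ‖x₀‖ ≠ b := fun h => absurd (hbl_b x₀ h) (not_lt.2 hcase)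
    set Ao : Set (EuclideanSpace ℝ (Fin n)) := {x | a < ‖x‖ ∧ ‖x‖ < b} with hAo
    have hx₀Ao : x₀ ∈ Ao := ⟨lt_of_le_of_ne hx₀A.1 (Ne.symm hx₀a), lt_of_le_of_ne hx₀A.2 hx₀b⟩
    have hAoopen : IsOpen Ao := by
      have : Ao = (fun x : EuclideanSpace ℝ (Fin n) => ‖x‖) ⁻¹' (Ioo a b) := by ext x; simp [hAo, mem_Ioo]
      rw [this]; exact isOpen_Ioo.preimage continuous_norm
    have hAoA : Ao ⊆ A := fun x hx => ⟨hx.1.le, hx.2.le⟩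
    set T : Set (EuclideanSpace ℝ (Fin n)) := {x | x ∈ Ao ∧ u x = μ₀} with hT
    set W : Set (EuclideanSpace ℝ (Fin n)) := Ao ∩ u ⁻¹' ({μ₀}ᶜ) with hW
    have hTopen : IsOpen T := by
      rw [isOpen_iff_mem_nhds]
      intro x hxT
      set ρ : ℝ := min (‖x‖ - a) (b - ‖x‖) / 6 with hρ
      have hρ1 : 6 * ρ ≤ ‖x‖ - a := by
        have := min_le_left (‖x‖ - a) (b - ‖x‖); rw [hρ]; linarith
      have hρ2 : 6 * ρ ≤ b - ‖x‖ := by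
        have := min_le_right (‖x‖ - a) (b - ‖x‖); rw [hρ]; linarith
      have hρpos : 0 < ρ := by
        rw [hρ]
        have h1 : 0 < ‖x‖ - a := by linarith [hxT.1.1]
        have h2 : 0 < b - ‖x‖ := by linarith [hxT.1.2]
        positivity
      have hball6 : ball x (6 * ρ) ⊆ Ao := by
        intro w hw
        rw [mem_ball, dist_eq_norm] at hw
        have h1 := norm_sub_norm_le w x
        have h2 := norm_sub_norm_le x w
        rw [norm_sub_rev x w] at h2
        constructor
        · have : ‖x‖ - ‖w‖ < 6 * ρ := by linarith
          linarith
        · have : ‖w‖ - ‖x‖ < 6 * ρ := by linarith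
          linarith
      have hmin' : ∀ w ∈ A, μ₀ ≤ u w := fun w hw => hx₀min hw
      have happ := hharnack (-μ₀) x ρ hρpos
        (fun w hw => hAsub (hAoA (hball6 hw)))
        (fun w hw => by have := hmin' w (hAoA (hball6 hw)); linarith)
      refine Filter.mem_of_superset (ball_mem_nhds x hρpos) ?_
      intro w hw
      have h1 : u w + -μ₀ ≤ C * (u x + -μ₀) :=
        happ w hw x (mem_ball_self hρpos)
      have h2 : u x = μ₀ := hxT.2
      have h3 : μ₀ ≤ u w := hmin' w (hAoA (hball6 (by
        rw [mem_ball] at hw ⊢; linarith [hρpos])))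
      have hwAo : w ∈ Ao := hball6 (by rw [mem_ball] at hw ⊢; linarith [hρpos])
      exact ⟨hwAo, by rw [h2] at h1; linarith⟩
    have hWopen : IsOpen W := by
      refine ContinuousOn.isOpen_inter_preimage (hcont.mono ?_) hAoopen isOpen_compl_singleton
      exact fun x hx => hAsub (hAoA hx)
    have hAoPre : IsPreconnected Ao := isPreconnected_annulus hn ha.le
    have hsub : Ao ⊆ T ∪ W := by
      intro x hx
      by_cases h : u x = μ₀
      · exact Or.inl ⟨hx, h⟩
      · exact Or.inr ⟨hx, h⟩
    have hTne : (Ao ∩ T).Nonempty := ⟨x₀, hx₀Ao, hx₀Ao, rfl⟩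
    have hmidlt : t < u y₀ := hbl_m y₀ hy₀
    have hy₀Ao : y₀ ∈ Ao := by constructor <;> rw [hy₀] <;> linarith
    have hWne : (Ao ∩ W).Nonempty := by
      refine ⟨y₀, hy₀Ao, hy₀Ao, ?_⟩
      simp only [mem_preimage, mem_compl_iff, mem_singleton_iff]
      intro h
      rw [h] at hmidlt
      linarith
    obtain ⟨p, -, hpT, hpW⟩ := hAoPre T W hTopen hWopen hsub hTne hWne
    exact hpW.2 hpT.2
/-- **Limit at infinity for bounded functions with the Harnack property.**
If `F ⊂ ℝⁿ`, `n ≥ 2`, is bounded and closed, and `u` is continuous, bounded and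
satisfies the translate-Harnack property with constant `C` on `ℝⁿ \ F`, then
`lim_{x→∞} u(x)` exists. -/
theorem limit_at_infinity_of_translateHarnack
    (n : ℕ) (hn : 2 ≤ n) (C : ℝ) (hC : 1 ≤ C)
    (F : Set (EuclideanSpace ℝ (Fin n)))
    (hFbdd : Bornology.IsBounded F) (hFcl : IsClosed F)
    (u : EuclideanSpace ℝ (Fin n) → ℝ)
    (hcont : ContinuousOn u Fᶜ) (hbdd : ∃ M : ℝ, ∀ z ∈ Fᶜ, |u z| ≤ M)
    (hharnack : TranslateHarnack C Fᶜ u) :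
    ∃ L : ℝ, Filter.Tendsto u (Filter.cocompact (EuclideanSpace ℝ (Fin n))) (nhds L) := by
  haveI : NeZero n := ⟨by omega⟩
  obtain ⟨M, hM⟩ := hbdd
  obtain ⟨r₀, hr₀⟩ := hFbdd.subset_closedBall 0
  set ρ : ℝ := max r₀ 1 with hρdef
  have hρ1 : 1 ≤ ρ := le_max_right _ _
  have hρpos : 0 < ρ := lt_of_lt_of_le one_pos hρ1
  have hFsub : ∀ w : EuclideanSpace ℝ (Fin n), ρ < ‖w‖ → w ∈ Fᶜ := by
    intro w hw hwF
    have h1 := hr₀ hwF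
    rw [mem_closedBall, dist_zero_right] at h1
    have h2 : ‖w‖ ≤ ρ := le_trans h1 (le_max_left _ _)
    linarith
  have hexnorm : ∀ s : ℝ, 0 ≤ s → ∃ y : EuclideanSpace ℝ (Fin n), ‖y‖ = s := fun s hs =>
    ⟨EuclideanSpace.single (0 : Fin n) s, by
      rw [EuclideanSpace.norm_single, Real.norm_eq_abs, abs_of_nonneg hs]⟩
  set φ : ℝ → ℝ := fun r => sInf (u '' {x | r < ‖x‖}) with hφ
  have hne : ∀ r : ℝ, (u '' {x | r < ‖x‖}).Nonempty := by
    intro r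
    obtain ⟨y, hy⟩ := hexnorm (max r 0 + 1) (by positivity)
    exact ⟨u y, y, by rw [mem_setOf_eq, hy]; have := le_max_left r 0; linarith, rfl⟩
  have hbdd' : ∀ r, ρ ≤ r → BddBelow (u '' {x | r < ‖x‖}) := by
    intro r hr
    refine ⟨-M, ?_⟩
    rintro v ⟨x, hx, rfl⟩
    have := hM x (hFsub x (lt_of_le_of_lt hr hx))
    linarith [abs_le.1 this |>.1]
  have hφle : ∀ r, ρ ≤ r → ∀ x : EuclideanSpace ℝ (Fin n), r < ‖x‖ → φ r ≤ u x :=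
    fun r hr x hx => csInf_le (hbdd' r hr) ⟨x, hx, rfl⟩
  have hφleM : ∀ r, ρ ≤ r → φ r ≤ M := by
    intro r hr
    obtain ⟨v, hv⟩ := hne r
    obtain ⟨x, hx, rfl⟩ := hv
    refine le_trans (hφle r hr x hx) ?_
    have := hM x (hFsub x (lt_of_le_of_lt hr hx))
    linarith [abs_le.1 this |>.2]
  set L : ℝ := sSup (φ '' Ici ρ) with hL
  have himgne : (φ '' Ici ρ).Nonempty := ⟨φ ρ, ρ, mem_Ici.2 le_rfl, rfl⟩
  have himgbdd : BddAbove (φ '' Ici ρ) := by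
    refine ⟨M, ?_⟩
    rintro v ⟨r, hr, rfl⟩
    exact hφleM r hr
  have hφL : ∀ r, ρ ≤ r → φ r ≤ L := fun r hr => le_csSup himgbdd ⟨r, mem_Ici.2 hr, rfl⟩
  refine ⟨L, Metric.tendsto_nhds.2 ?_⟩
  intro ε0 hε0
  obtain ⟨N, hN⟩ := exists_uniform_chain n hn
  set K : ℝ := C ^ N with hK
  have hK1 : 1 ≤ K := one_le_pow₀ hC
  set ε : ℝ := ε0 / (4 * K) with hε
  have hKpos : 0 < K := lt_of_lt_of_le one_pos hK1
  have hεpos : 0 < ε := by rw [hε]; positivity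
  have hr₁ex : ∃ r₁, ρ ≤ r₁ ∧ L - ε < φ r₁ := by
    by_contra h
    push_neg at h
    have : L ≤ L - ε := by
      refine csSup_le himgne ?_
      rintro v ⟨r, hr, rfl⟩
      exact h r hr
    linarith
  obtain ⟨r₁, hr₁ρ, hr₁⟩ := hr₁ex
  have hr₁pos : 0 < r₁ := lt_of_lt_of_le hρpos hr₁ρ
  set μ : ℝ := L - ε with hμdef
  have hμ : ∀ w : EuclideanSpace ℝ (Fin n), r₁ < ‖w‖ → μ ≤ u w :=
    fun w hw => le_trans hr₁.le (hφle r₁ hr₁ρ w hw)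
  have hFsub₁ : ∀ w : EuclideanSpace ℝ (Fin n), r₁ < ‖w‖ → w ∈ Fᶜ :=
    fun w hw => hFsub w (lt_of_le_of_lt hr₁ρ hw)
  -- Step B: every large enough sphere carries a point with small value
  have stepB : ∃ S₀, 24 * r₁ + 1 ≤ S₀ ∧
      ∀ s, S₀ ≤ s → ∃ y : EuclideanSpace ℝ (Fin n), ‖y‖ = s ∧ u y ≤ L + ε := by
    by_contra hcon
    push_neg at hcon
    have hbl : ∀ S : ℝ, ∃ s, max S (24 * r₁ + 1) ≤ s ∧
        ∀ y : EuclideanSpace ℝ (Fin n), ‖y‖ = s → L + ε < u y := by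
      intro S
      obtain ⟨s, hs1, hs2⟩ := hcon (max S (24 * r₁ + 1)) (le_max_right _ _)
      exact ⟨s, hs1, fun y hy => hs2 y hy⟩
    obtain ⟨s₁, hs₁ge, hs₁bl⟩ := hbl 0
    have hs₁pos : 0 < s₁ :=
      lt_of_lt_of_le (by linarith) (le_trans (le_max_right _ _) hs₁ge)
    have main : ∀ x : EuclideanSpace ℝ (Fin n), s₁ ≤ ‖x‖ → L + ε < u x := by
      intro x hx
      obtain ⟨s₂, hs₂ge, hs₂bl⟩ := hbl (‖x‖ + 1)
      obtain ⟨s₃, hs₃ge, hs₃bl⟩ := hbl (s₂ + 1)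
      have h12 : ‖x‖ < s₂ := by
        have := le_trans (le_max_left _ _) hs₂ge; linarith
      have h23 : s₂ < s₃ := by
        have := le_trans (le_max_left _ _) hs₃ge; linarith
      have hFsubA : ∀ w : EuclideanSpace ℝ (Fin n), s₁ ≤ ‖w‖ → w ∈ Fᶜ := by
        intro w hw
        refine hFsub w ?_
        have h1 : 24 * r₁ + 1 ≤ s₁ := le_trans (le_max_right _ _) hs₁ge
        have : ρ ≤ r₁ := hr₁ρ
        linarith
      exact annulus_min hn hC hcont hharnack hs₁pos (lt_of_le_of_lt hx h12) h23
        hFsubA hs₁bl hs₃bl hs₂bl x hx (by linarith)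
    have hup : L + ε ≤ φ s₁ := by
      refine le_csInf (hne s₁) ?_
      rintro v ⟨x, hx, rfl⟩
      exact (main x (le_of_lt hx)).le
    have hρs₁ : ρ ≤ s₁ := by
      have h1 : 24 * r₁ + 1 ≤ s₁ := le_trans (le_max_right _ _) hs₁ge
      linarith
    have := hφL s₁ hρs₁
    linarith
  obtain ⟨S₀, hS₀ge, hS₀⟩ := stepB
  rw [Filter.hasBasis_cocompact.eventually_iff]
  refine ⟨Metric.closedBall 0 S₀, isCompact_closedBall _ _, ?_⟩
  intro x hx
  have hxnorm : S₀ < ‖x‖ := by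
    rw [mem_compl_iff, mem_closedBall, dist_zero_right, not_le] at hx
    exact hx
  set s : ℝ := ‖x‖ with hsdef
  have hspos : 0 < s := by
    have : 0 < S₀ := by linarith
    linarith
  obtain ⟨y, hy, hylow⟩ := hS₀ s hxnorm.le
  have hxu : ‖s⁻¹ • x‖ = 1 := by
    rw [norm_smul, Real.norm_eq_abs, abs_of_pos (by positivity), ← hsdef,
      inv_mul_cancel₀ hspos.ne']
  have hyu : ‖s⁻¹ • y‖ = 1 := by
    rw [norm_smul, Real.norm_eq_abs, abs_of_pos (by positivity), hy,
      inv_mul_cancel₀ hspos.ne']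
  have hchain := hN (s⁻¹ • x) (s⁻¹ • y) hxu hyu
  have hs24 : 24 * r₁ ≤ s := by linarith
  have hineq := chain_harnack hC hharnack hr₁pos hFsub₁ hμ hs24 hchain
  rw [smul_smul, mul_inv_cancel₀ hspos.ne', one_smul, smul_smul,
    mul_inv_cancel₀ hspos.ne', one_smul] at hineq
  -- hineq : u x - μ ≤ K * (u y - μ)
  have h1 : u y - μ ≤ 2 * ε := by rw [hμdef]; linarith
  have hineq' : u x - μ ≤ K * (u y - μ) := by rw [hK, hμdef]; exact hineq
  have hub : u x - L ≤ -ε + K * (2 * ε) := by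
    have h2 : K * (u y - μ) ≤ K * (2 * ε) := by
      apply mul_le_mul_of_nonneg_left h1 (by linarith)
    rw [hμdef] at hineq'
    linarith
  have hlb : -ε ≤ u x - L := by
    have : μ ≤ u x := hμ x (by rw [← hsdef]; linarith)
    rw [hμdef] at this
    linarith
  rw [Real.dist_eq, abs_lt]
  constructor
  · have : ε ≤ ε0 / 4 := by
      rw [hε]
      rw [div_le_div_iff₀ (by positivity) (by norm_num)]
      nlinarith
    linarith
  · have h2 : K * (2 * ε) = ε0 / 2 := by
      rw [hε]; field_simp; ring
    rw [h2] at hub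
    linarith
end

section
/- Let n ≥ 2 and C ≥ 1. Let Ω ⊆ ℝⁿ be open, let x₀ ∈ Ω, and let u : Ω \ {x₀} → ℝ be continuous, bounded, and satisfy the translate-Harnack property with constant C on Ω \ {x₀}. Then lim_{x→x₀} u(x) exists (as a finite real number). -/
open MeasureTheory Set

open RealInnerProductSpace Metric Filter

lemma exists_orthogonal {n : ℕ} (hn : 2 ≤ n) (a : EuclideanSpace ℝ (Fin n)) :
    ∃ w : EuclideanSpace ℝ (Fin n), w ≠ 0 ∧ ⟪a, w⟫ = 0 := by
  have h0 : (0:ℕ) < n := by omega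
  have h1 : (1:ℕ) < n := by omega
  set i0 : Fin n := ⟨0, h0⟩
  set i1 : Fin n := ⟨1, h1⟩
  have hne : i1 ≠ i0 := by simp [i0, i1, Fin.ext_iff]
  by_cases h : a i0 = 0
  · refine ⟨EuclideanSpace.single i0 (1:ℝ), ?_, ?_⟩
    · intro hw
      have := congrFun (congrArg (fun v : EuclideanSpace ℝ (Fin n) => (v : Fin n → ℝ)) hw) i0
      simp [EuclideanSpace.single_apply] at this
    · rw [EuclideanSpace.inner_single_right]
      simp [h]
  · refine ⟨(a i1) • EuclideanSpace.single i0 (1:ℝ) - (a i0) • EuclideanSpace.single i1 (1:ℝ),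
      ?_, ?_⟩
    · intro hw
      have := congrFun (congrArg (fun v : EuclideanSpace ℝ (Fin n) => (v : Fin n → ℝ)) hw) i1
      simp [EuclideanSpace.single_apply, hne] at this
      exact h this
    · rw [inner_sub_right, real_inner_smul_right, real_inner_smul_right,
        EuclideanSpace.inner_single_right, EuclideanSpace.inner_single_right]
      simp; ring

lemma seg_chain {n : ℕ} {C : ℝ} (hC : 1 ≤ C) {D : Set (EuclideanSpace ℝ (Fin n))}
    {u : EuclideanSpace ℝ (Fin n) → ℝ} (hh : TranslateHarnack C D u)
    {x₀ : EuclideanSpace ℝ (Fin n)} {σ : ℝ} (hσ : 0 < σ)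
    (hD : Metric.ball x₀ (2*σ) \ {x₀} ⊆ D) {c : ℝ}
    (hpos : ∀ z ∈ Metric.ball x₀ (2*σ) \ {x₀}, 0 ≤ u z + c)
    {a b : EuclideanSpace ℝ (Fin n)} (ha : dist a x₀ = σ) (hb : dist b x₀ = σ)
    (hab : 0 ≤ ⟪a - x₀, b - x₀⟫) :
    u a + c ≤ C ^ 100 * (u b + c) := by
  have hC0 : (0:ℝ) ≤ C := le_trans zero_le_one hC
  set a' := a - x₀ with ha'
  set b' := b - x₀ with hb'
  have hna : ‖a'‖ = σ := by rw [ha', ← dist_eq_norm]; exact ha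
  have hnb : ‖b'‖ = σ := by rw [hb', ← dist_eq_norm]; exact hb
  -- norm bounds along the segment
  have hnorm : ∀ t : ℝ, 0 ≤ t → t ≤ 1 →
      σ/2 ≤ ‖(1-t) • a' + t • b'‖ ∧ ‖(1-t) • a' + t • b'‖ ≤ σ := by
    intro t ht0 ht1
    constructor
    · have hsq : ‖(1-t) • a' + t • b'‖^2
          = (1-t)^2 * σ^2 + 2*((1-t)*t*⟪a', b'⟫) + t^2 * σ^2 := by
        rw [norm_add_sq_real, real_inner_smul_left, real_inner_smul_right,
          norm_smul, norm_smul]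
        simp [Real.norm_eq_abs, abs_of_nonneg, ht0, abs_of_nonneg (by linarith : (0:ℝ) ≤ 1 - t),
          hna, hnb]
        ring
      nlinarith [norm_nonneg ((1-t) • a' + t • b'), sq_nonneg (1 - 2*t),
        mul_nonneg (mul_nonneg (by linarith : (0:ℝ) ≤ 1-t) ht0) hab]
    · calc ‖(1-t) • a' + t • b'‖ ≤ ‖(1-t) • a'‖ + ‖t • b'‖ := norm_add_le _ _
        _ = (1-t) * σ + t * σ := by
            rw [norm_smul, norm_smul, hna, hnb, Real.norm_eq_abs, Real.norm_eq_abs,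
              abs_of_nonneg ht0, abs_of_nonneg (by linarith : (0:ℝ) ≤ 1 - t)]
        _ = σ := by ring
  -- the chain of points
  set q : ℕ → EuclideanSpace ℝ (Fin n) :=
    fun i => x₀ + ((1 - (i:ℝ)/100) • a' + ((i:ℝ)/100) • b') with hq
  have hqdist : ∀ i : ℕ, i ≤ 100 → σ/2 ≤ dist (q i) x₀ ∧ dist (q i) x₀ ≤ σ := by
    intro i hi
    have h0 : (0:ℝ) ≤ (i:ℝ)/100 := by positivity
    have h1 : (i:ℝ)/100 ≤ 1 := by
      rw [div_le_one (by norm_num)]; exact_mod_cast (by omega : i ≤ 100)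
    have : dist (q i) x₀ = ‖(1 - (i:ℝ)/100) • a' + ((i:ℝ)/100) • b'‖ := by
      rw [hq, dist_eq_norm]; congr 1; exact add_sub_cancel_left _ _
    rw [this]
    exact hnorm _ h0 h1
  have hstepdist : ∀ i : ℕ, dist (q (i+1)) (q i) ≤ σ/50 := by
    intro i
    have hdiff : q (i+1) - q i = (1/100 : ℝ) • (b' - a') := by
      rw [hq]
      push_cast
      module
    rw [dist_eq_norm, hdiff, norm_smul]
    have := norm_sub_le b' a'
    rw [Real.norm_eq_abs]
    rw [abs_of_nonneg (by norm_num : (0:ℝ) ≤ 1/100)]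
    nlinarith [norm_nonneg (b' - a')]
  -- single Harnack step
  have step : ∀ p p' : EuclideanSpace ℝ (Fin n), σ/2 ≤ dist p x₀ → dist p x₀ ≤ σ →
      dist p' p ≤ σ/50 → u p + c ≤ C * (u p' + c) := by
    intro p p' hp1 hp2 hp'
    have hsub : Metric.ball p (6*(σ/20)) ⊆ Metric.ball x₀ (2*σ) \ {x₀} := by
      intro z hz
      rw [Metric.mem_ball] at hz
      constructor
      · rw [Metric.mem_ball]
        have := dist_triangle z p x₀
        linarith
      · simp only [mem_singleton_iff]
        intro hzx
        rw [hzx] at hz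
        rw [dist_comm] at hz
        linarith
    refine hh c p (σ/20) (by linarith) (hsub.trans hD) (fun z hz => hpos z (hsub hz))
      p (Metric.mem_ball_self (by linarith)) p' (Metric.mem_ball.2 (by linarith))
  -- induction along the chain
  have key : ∀ i : ℕ, i ≤ 100 → u a + c ≤ C ^ i * (u (q i) + c) := by
    intro i
    induction i with
    | zero =>
      intro _
      have hq0 : q 0 = a := by
        rw [hq]; simp [ha']
      rw [hq0, pow_zero, one_mul]
    | succ i ih =>
      intro hi
      have hi' : i ≤ 100 := by omega
      obtain ⟨hd1, hd2⟩ := hqdist i hi'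
      have hstep := step (q i) (q (i+1)) hd1 hd2 (hstepdist i)
      calc u a + c ≤ C ^ i * (u (q i) + c) := ih hi'
        _ ≤ C ^ i * (C * (u (q (i+1)) + c)) :=
            mul_le_mul_of_nonneg_left hstep (pow_nonneg hC0 i)
        _ = C ^ (i+1) * (u (q (i+1)) + c) := by ring
  have h100 := key 100 le_rfl
  have hq100 : q 100 = b := by
    rw [hq]; norm_num [hb']
  rwa [hq100] at h100

lemma sphere_chain {n : ℕ} (hn : 2 ≤ n) {C : ℝ} (hC : 1 ≤ C)
    {D : Set (EuclideanSpace ℝ (Fin n))}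
    {u : EuclideanSpace ℝ (Fin n) → ℝ} (hh : TranslateHarnack C D u)
    {x₀ : EuclideanSpace ℝ (Fin n)} {σ : ℝ} (hσ : 0 < σ)
    (hD : Metric.ball x₀ (2*σ) \ {x₀} ⊆ D) {c : ℝ}
    (hpos : ∀ z ∈ Metric.ball x₀ (2*σ) \ {x₀}, 0 ≤ u z + c)
    {y z : EuclideanSpace ℝ (Fin n)} (hy : dist y x₀ = σ) (hz : dist z x₀ = σ) :
    u y + c ≤ C ^ 200 * (u z + c) := by
  have hC0 : (0:ℝ) ≤ C := le_trans zero_le_one hC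
  set a' := y - x₀ with ha'
  set b' := z - x₀ with hb'
  have hna : ‖a'‖ = σ := by rw [ha', ← dist_eq_norm]; exact hy
  have hnb : ‖b'‖ = σ := by rw [hb', ← dist_eq_norm]; exact hz
  set ip : ℝ := ⟪a', b'⟫ with hip
  -- find a midpoint m on the sphere with nonneg inner products to both
  obtain ⟨m, hm, h1, h2⟩ : ∃ m : EuclideanSpace ℝ (Fin n), dist m x₀ = σ ∧
      0 ≤ ⟪y - x₀, m - x₀⟫ ∧ 0 ≤ ⟪m - x₀, z - x₀⟫ := by
    by_cases hv : σ^2 • b' - ip • a' = 0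
    · obtain ⟨w, hw0, hwo⟩ := exists_orthogonal hn a'
      have hnw : (0:ℝ) < ‖w‖ := norm_pos_iff.2 hw0
      refine ⟨x₀ + (σ/‖w‖) • w, ?_, ?_, ?_⟩
      · rw [dist_eq_norm, add_sub_cancel_left, norm_smul, Real.norm_eq_abs,
          abs_of_pos (div_pos hσ hnw), div_mul_cancel₀ _ (ne_of_gt hnw)]
      · rw [add_sub_cancel_left, real_inner_smul_right, ← ha', hwo, mul_zero]
      · rw [add_sub_cancel_left, ← hb']
        have hwb : ⟪w, b'⟫ = 0 := by
          have h3 : σ^2 • b' = ip • a' := by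
            have := sub_eq_zero.1 hv; exact this
          have h4 : ⟪w, σ^2 • b'⟫ = ⟪w, ip • a'⟫ := by rw [h3]
          have hwo' : ⟪w, a'⟫ = 0 := by rw [real_inner_comm]; exact hwo
          rw [real_inner_smul_right, real_inner_smul_right, hwo', mul_zero] at h4
          have hσ2 : σ^2 ≠ 0 := by positivity
          exact (mul_eq_zero.1 h4).resolve_left hσ2
        rw [real_inner_smul_left, hwb, mul_zero]
    · set v := σ^2 • b' - ip • a' with hvdef
      have hnv : (0:ℝ) < ‖v‖ := norm_pos_iff.2 hv
      refine ⟨x₀ + (σ/‖v‖) • v, ?_, ?_, ?_⟩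
      · rw [dist_eq_norm, add_sub_cancel_left, norm_smul, Real.norm_eq_abs,
          abs_of_pos (div_pos hσ hnv), div_mul_cancel₀ _ (ne_of_gt hnv)]
      · rw [add_sub_cancel_left, real_inner_smul_right, ← ha', hvdef,
          inner_sub_right, real_inner_smul_right, real_inner_smul_right,
          real_inner_self_eq_norm_sq, hna, ← hip]
        have : ip * σ ^ 2 - ip * σ ^ 2 = 0 := by ring
        nlinarith [div_pos hσ hnv]
      · rw [add_sub_cancel_left, real_inner_smul_left, ← hb', hvdef,
          inner_sub_left, real_inner_smul_left, real_inner_smul_left,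
          real_inner_self_eq_norm_sq, hnb, ← hip]
        have hcs : |ip| ≤ σ * σ := by
          have := abs_real_inner_le_norm a' b'
          rw [hna, hnb] at this; exact this
        have h5 : ip * ip ≤ σ^2 * σ^2 := by nlinarith [abs_nonneg ip, le_abs_self ip, neg_abs_le ip]
        have : (0:ℝ) ≤ σ^2 * σ^2 - ip * ip := by linarith
        have hpos' : (0:ℝ) < σ/‖v‖ := div_pos hσ hnv
        nlinarith [real_inner_comm a' b']
  have e1 := seg_chain hC hh hσ hD hpos hy hm h1
  have e2 := seg_chain hC hh hσ hD hpos hm hz h2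
  calc u y + c ≤ C ^ 100 * (u m + c) := e1
    _ ≤ C ^ 100 * (C ^ 100 * (u z + c)) :=
        mul_le_mul_of_nonneg_left e2 (pow_nonneg hC0 100)
    _ = C ^ 200 * (u z + c) := by ring


set_option maxHeartbeats 1000000 in
/-- **Limit at an isolated singularity for bounded functions with the Harnack
property.** If `Ω ⊆ ℝⁿ`, `n ≥ 2`, is open, `x₀ ∈ Ω`, and `u` is continuous, bounded
and satisfies the translate-Harnack property with constant `C` on `Ω \ {x₀}`, then
`lim_{x→x₀} u(x)` exists. -/
theorem limit_at_puncture_of_translateHarnack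
    (n : ℕ) (hn : 2 ≤ n) (C : ℝ) (hC : 1 ≤ C)
    (Ω : Set (EuclideanSpace ℝ (Fin n))) (hΩ : IsOpen Ω)
    (x₀ : EuclideanSpace ℝ (Fin n)) (hx₀ : x₀ ∈ Ω)
    (u : EuclideanSpace ℝ (Fin n) → ℝ)
    (hcont : ContinuousOn u (Ω \ {x₀})) (hbdd : ∃ M : ℝ, ∀ z ∈ Ω \ {x₀}, |u z| ≤ M)
    (hharnack : TranslateHarnack C (Ω \ {x₀}) u) :
    ∃ L : ℝ, Filter.Tendsto u (nhdsWithin x₀ (Ω \ {x₀})) (nhds L) := by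
  classical
  obtain ⟨M, hM⟩ := hbdd
  set D : Set (EuclideanSpace ℝ (Fin n)) := Ω \ {x₀} with hDdef
  set l : Filter (EuclideanSpace ℝ (Fin n)) := nhdsWithin x₀ D with hldef
  have hC0 : (0:ℝ) ≤ C := le_trans zero_le_one hC
  -- basic geometry of Ω
  obtain ⟨R₀, hR₀pos, hR₀⟩ := Metric.isOpen_iff.1 hΩ x₀ hx₀
  -- the filter is nontrivial
  haveI : Nontrivial (EuclideanSpace ℝ (Fin n)) := by
    refine ⟨EuclideanSpace.single ⟨0, by omega⟩ (1:ℝ), 0, ?_⟩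
    intro h
    have := congrFun (congrArg (fun v : EuclideanSpace ℝ (Fin n) => (v : Fin n → ℝ)) h) ⟨0, by omega⟩
    simp [EuclideanSpace.single_apply] at this
  haveI hpunct : Filter.NeBot (nhdsWithin x₀ {x₀}ᶜ) := Module.punctured_nhds_neBot ℝ (EuclideanSpace ℝ (Fin n)) x₀
  haveI hlne : l.NeBot := by
    have h1 : nhdsWithin x₀ (Metric.ball x₀ R₀ ∩ {x₀}ᶜ) = nhdsWithin x₀ {x₀}ᶜ :=
      nhdsWithin_inter_of_mem (mem_nhdsWithin_of_mem_nhds (Metric.ball_mem_nhds x₀ hR₀pos))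
    have h2 : nhdsWithin x₀ (Metric.ball x₀ R₀ ∩ {x₀}ᶜ) ≤ l := by
      apply nhdsWithin_mono
      intro x hx
      exact ⟨hR₀ hx.1, hx.2⟩
    rw [h1] at h2
    exact Filter.neBot_of_le h2
  -- boundedness of u along l
  have hmemD : ∀ᶠ x in l, x ∈ D := self_mem_nhdsWithin
  have hbdd_le : l.IsBoundedUnder (· ≤ ·) u :=
    ⟨M, Filter.eventually_map.2 (hmemD.mono fun x hx => (abs_le.1 (hM x hx)).2)⟩
  have hbdd_ge : l.IsBoundedUnder (· ≥ ·) u :=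
    ⟨-M, Filter.eventually_map.2 (hmemD.mono fun x hx => (abs_le.1 (hM x hx)).1)⟩
  set α := Filter.liminf u l with hαdef
  set β := Filter.limsup u l with hβdef
  have hαβ : α ≤ β := Filter.liminf_le_limsup hbdd_le hbdd_ge
  rcases eq_or_lt_of_le hαβ with heq | hlt
  · exact ⟨α, tendsto_of_liminf_eq_limsup rfl heq.symm hbdd_le hbdd_ge⟩
  exfalso
  have hCpow : (0:ℝ) < C ^ 200 := by positivity
  have hCpow1 : (1:ℝ) ≤ C ^ 200 := by
    have := pow_le_pow_left₀ (by norm_num : (0:ℝ) ≤ 1) hC 200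
    simpa using this
  set ε : ℝ := (β - α) / (4 * C ^ 200) with hεdef
  have hε : 0 < ε := div_pos (by linarith) (by positivity)
  have hkey : β - α = 4 * C ^ 200 * ε := by
    rw [hεdef]; field_simp
  -- eventual lower bound near x₀
  have hev : ∀ᶠ x in l, α - ε < u x :=
    Filter.eventually_lt_of_lt_liminf (by linarith) hbdd_ge
  obtain ⟨r₂, hr₂pos, hr₂⟩ := Metric.mem_nhdsWithin_iff.1 hev
  set r₁ : ℝ := min r₂ R₀ with hr₁def
  have hr₁pos : 0 < r₁ := lt_min hr₂pos hR₀pos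
  have hr₁Ω : Metric.ball x₀ r₁ ⊆ Ω := fun x hx =>
    hR₀ (Metric.ball_subset_ball (min_le_right _ _) hx)
  have hlow : ∀ x, x ∈ Metric.ball x₀ r₁ → x ∈ D → α - ε < u x := by
    intro x hx hxD
    exact hr₂ ⟨Metric.ball_subset_ball (min_le_left _ _) hx, hxD⟩
  have hDσ : ∀ σ : ℝ, 2*σ ≤ r₁ → Metric.ball x₀ (2*σ) \ {x₀} ⊆ D := by
    intro σ hs w hw
    have h1 : dist w x₀ < 2*σ := Metric.mem_ball.1 hw.1
    exact ⟨hr₁Ω (Metric.mem_ball.2 (by linarith)), hw.2⟩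
  have hposσ : ∀ σ : ℝ, 2*σ ≤ r₁ → ∀ w ∈ Metric.ball x₀ (2*σ) \ {x₀}, 0 ≤ u w + (ε - α) := by
    intro σ hs w hw
    have hwD : w ∈ D := hDσ σ hs hw
    have hwb : w ∈ Metric.ball x₀ r₁ := by
      have h1 : dist w x₀ < 2*σ := Metric.mem_ball.1 hw.1
      exact Metric.mem_ball.2 (by linarith)
    have := hlow w hwb hwD
    linarith
  -- frequent high and low points
  have hfr_high : ∃ᶠ x in l, β - ε < u x :=
    Filter.frequently_lt_of_lt_limsup hbdd_ge.isCoboundedUnder_le (by linarith)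
  have hfr_low : ∃ᶠ x in l, u x < α + ε :=
    Filter.frequently_lt_of_liminf_lt hbdd_le.isCoboundedUnder_ge (by linarith)
  have hnear : ∀ δ : ℝ, 0 < δ → ∀ᶠ x in l, x ∈ D ∧ dist x x₀ < δ := by
    intro δ hδ
    refine hmemD.and ?_
    apply eventually_nhdsWithin_of_eventually_nhds
    filter_upwards [Metric.ball_mem_nhds x₀ hδ] with x hx
    exact Metric.mem_ball.1 hx
  -- the two high points and the low point in between
  obtain ⟨y₁, hy₁u, hy₁D, hy₁d⟩ :=
    (hfr_high.and_eventually (hnear (r₁/2) (by linarith))).exists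
  set σ₁ : ℝ := dist y₁ x₀ with hσ₁def
  have hσ₁pos : 0 < σ₁ := dist_pos.2 fun h => hy₁D.2 (by simp [h])
  obtain ⟨w, hwu, hwD, hwd⟩ := (hfr_low.and_eventually (hnear σ₁ hσ₁pos)).exists
  have hwpos : 0 < dist w x₀ := dist_pos.2 fun h => hwD.2 (by simp [h])
  obtain ⟨y₂, hy₂u, hy₂D, hy₂d⟩ :=
    (hfr_high.and_eventually (hnear (dist w x₀) hwpos)).exists
  set σ₂ : ℝ := dist y₂ x₀ with hσ₂def
  have hσ₂pos : 0 < σ₂ := dist_pos.2 fun h => hy₂D.2 (by simp [h])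
  have hσ₂w : σ₂ < dist w x₀ := hy₂d
  have hwσ₁ : dist w x₀ < σ₁ := hwd
  have hσ₂₁ : σ₂ < σ₁ := lt_trans hσ₂w hwσ₁
  -- high spheres
  have hsphere : ∀ y : EuclideanSpace ℝ (Fin n), y ∈ D → β - ε < u y → dist y x₀ < r₁/2 →
      ∀ z : EuclideanSpace ℝ (Fin n), dist z x₀ = dist y x₀ → α + 3*ε < u z := by
    intro y hyD hyu hyd z hzd
    have hσpos : 0 < dist y x₀ := dist_pos.2 fun h => hyD.2 (by simp [h])
    have h2σ : 2 * dist y x₀ ≤ r₁ := by linarith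
    have hchain := sphere_chain hn hC hharnack hσpos (hDσ _ h2σ) (hposσ _ h2σ)
      (rfl : dist y x₀ = dist y x₀) hzd
    by_contra hcon
    push_neg at hcon
    have hmul : C ^ 200 * (u z + (ε - α)) ≤ C ^ 200 * (4 * ε) :=
      mul_le_mul_of_nonneg_left (by linarith) (le_of_lt hCpow)
    have h2 : C ^ 200 * (4 * ε) = β - α := by rw [hkey]; ring
    linarith
  have hs₁ : ∀ z : EuclideanSpace ℝ (Fin n), dist z x₀ = σ₁ → α + 3*ε < u z :=
    hsphere y₁ hy₁D hy₁u hy₁d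
  have hs₂ : ∀ z : EuclideanSpace ℝ (Fin n), dist z x₀ = σ₂ → α + 3*ε < u z := by
    intro z hz
    exact hsphere y₂ hy₂D hy₂u (by linarith) z hz
  -- the compact annulus and its minimum
  set R : Set (EuclideanSpace ℝ (Fin n)) := Metric.closedBall x₀ σ₁ \ Metric.ball x₀ σ₂ with hRdef
  set U : Set (EuclideanSpace ℝ (Fin n)) := Metric.ball x₀ σ₁ \ Metric.closedBall x₀ σ₂ with hUdef
  have hRD : R ⊆ D := by
    intro x hx
    rw [hRdef, mem_diff, Metric.mem_closedBall, Metric.mem_ball, not_lt] at hx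
    refine ⟨hr₁Ω (Metric.mem_ball.2 (by linarith)), ?_⟩
    simp only [mem_singleton_iff]
    intro h
    rw [h, dist_self] at hx
    linarith [hx.2]
  have hUR : U ⊆ R := by
    intro x hx
    rw [hUdef, mem_diff] at hx
    exact ⟨Metric.ball_subset_closedBall hx.1, fun h => hx.2 (Metric.ball_subset_closedBall h)⟩
  have hcomp : IsCompact R := (isCompact_closedBall x₀ σ₁).diff Metric.isOpen_ball
  have hwR : w ∈ R := by
    rw [hRdef, mem_diff, Metric.mem_closedBall, Metric.mem_ball, not_lt]
    exact ⟨le_of_lt hwσ₁, le_of_lt hσ₂w⟩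
  obtain ⟨z₀, hz₀R, hz₀min⟩ := hcomp.exists_isMinOn ⟨w, hwR⟩ (hcont.mono hRD)
  rw [isMinOn_iff] at hz₀min
  set m : ℝ := u z₀ with hmdef
  have hm_lt : m < α + ε := lt_of_le_of_lt (hz₀min w hwR) hwu
  have hz₀U : z₀ ∈ U := by
    rw [hRdef, mem_diff, Metric.mem_closedBall, Metric.mem_ball, not_lt] at hz₀R
    have h1 : dist z₀ x₀ < σ₁ :=
      lt_of_le_of_ne hz₀R.1 (fun h => absurd (hs₁ z₀ h) (by rw [← hmdef]; linarith))
    have h2 : σ₂ < dist z₀ x₀ :=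
      lt_of_le_of_ne hz₀R.2 (fun h => absurd (hs₂ z₀ h.symm) (by rw [← hmdef]; linarith))
    rw [hUdef, mem_diff, Metric.mem_ball, Metric.mem_closedBall, not_le]
    exact ⟨h1, h2⟩
  have hUopen : IsOpen U := Metric.isOpen_ball.sdiff Metric.isClosed_closedBall
  -- the level set {u = m} is clopen in U
  have hUD : U ⊆ D := hUR.trans hRD
  have hV₁ : IsOpen (U ∩ u ⁻¹' {m}ᶜ) :=
    (hcont.mono hUD).isOpen_inter_preimage hUopen isOpen_compl_singleton
  have hV₂ : IsOpen (U ∩ u ⁻¹' {m}) := by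
    rw [Metric.isOpen_iff]
    rintro x ⟨hxU, hxm⟩
    obtain ⟨ρ', hρ'pos, hρ'⟩ := Metric.isOpen_iff.1 hUopen x hxU
    refine ⟨ρ'/7, by linarith, ?_⟩
    intro z hz
    have hsub : Metric.ball x (6*(ρ'/7)) ⊆ U := by
      apply Subset.trans _ hρ'
      apply Metric.ball_subset_ball
      linarith
    have hzU : z ∈ U := hsub (Metric.mem_ball.2 (by
      rw [Metric.mem_ball] at hz; linarith))
    refine ⟨hzU, ?_⟩
    have hineq := hharnack (-m) x (ρ'/7) (by linarith) (hsub.trans hUD)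
      (fun z' hz' => by
        have := hz₀min z' (hUR (hsub hz'))
        linarith)
      z hz x (Metric.mem_ball_self (by linarith))
    have hxm' : u x = m := hxm
    have hzm : m ≤ u z := by
      exact hz₀min z (hUR hzU)
    simp only [mem_preimage, mem_singleton_iff]
    rw [hxm'] at hineq
    have : u z + -m ≤ 0 := by
      calc u z + -m ≤ C * (m + -m) := hineq
        _ = 0 := by ring
    linarith
  -- U is preconnected
  have hfr : 1 < Module.finrank ℝ (EuclideanSpace ℝ (Fin n)) := by
    rw [finrank_euclideanSpace_fin]
    omega
  have hrank : 1 < Module.rank ℝ (EuclideanSpace ℝ (Fin n)) := by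
    rw [← Module.finrank_eq_rank ℝ (EuclideanSpace ℝ (Fin n))]
    exact_mod_cast hfr
  have hUconn : IsPreconnected U := by
    have himg : U = (fun p : ℝ × EuclideanSpace ℝ (Fin n) => x₀ + p.1 • p.2) ''
        (Set.Ioo σ₂ σ₁ ×ˢ Metric.sphere (0:EuclideanSpace ℝ (Fin n)) 1) := by
      ext x
      constructor
      · intro hx
        rw [hUdef, mem_diff, Metric.mem_ball, Metric.mem_closedBall, not_le] at hx
        have hxpos : 0 < dist x x₀ := lt_trans hσ₂pos hx.2
        have hnx : ‖x - x₀‖ = dist x x₀ := (dist_eq_norm x x₀).symm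
        refine ⟨⟨dist x x₀, ‖x - x₀‖⁻¹ • (x - x₀)⟩, ⟨⟨hx.2, hx.1⟩, ?_⟩, ?_⟩
        · rw [mem_sphere_zero_iff_norm, norm_smul, Real.norm_eq_abs, abs_inv,
            abs_of_pos (by rw [hnx]; exact hxpos)]
          field_simp [hnx]
          exact div_self (by rw [hnx]; exact ne_of_gt hxpos)
        · simp only
          rw [smul_smul, ← hnx, mul_inv_cancel₀ (by rw [hnx]; exact ne_of_gt hxpos), one_smul]
          abel
      · rintro ⟨⟨t, v⟩, ⟨⟨ht1, ht2⟩, hv⟩, rfl⟩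
        rw [mem_sphere_zero_iff_norm] at hv
        have htpos : 0 < t := lt_trans hσ₂pos ht1
        have hd : dist (x₀ + t • v) x₀ = t := by
          rw [dist_eq_norm, add_sub_cancel_left, norm_smul, Real.norm_eq_abs,
            abs_of_pos htpos, hv, mul_one]
        rw [hUdef, mem_diff, Metric.mem_ball, Metric.mem_closedBall, not_le, hd]
        exact ⟨ht2, ht1⟩
    rw [himg]
    apply IsPreconnected.image
    · exact ((isConnected_Ioo hσ₂₁).prod (isConnected_sphere hrank (0:EuclideanSpace ℝ (Fin n)) zero_le_one)).isPreconnected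
    · apply Continuous.continuousOn
      exact continuous_const.add (continuous_fst.smul continuous_snd)
  -- u is constant equal to m on U
  have hdisj : Disjoint (U ∩ u ⁻¹' {m}) (U ∩ u ⁻¹' {m}ᶜ) := by
    rw [Set.disjoint_left]
    rintro x ⟨_, hx1⟩ ⟨_, hx2⟩
    exact hx2 hx1
  have hcover : U ⊆ (U ∩ u ⁻¹' {m}) ∪ (U ∩ u ⁻¹' {m}ᶜ) := by
    intro x hx
    by_cases h : u x = m
    · exact Or.inl ⟨hx, h⟩
    · exact Or.inr ⟨hx, h⟩
  have hexists : (U ∩ (U ∩ u ⁻¹' {m})).Nonempty := ⟨z₀, hz₀U, hz₀U, rfl⟩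
  have hUsub : U ⊆ U ∩ u ⁻¹' {m} :=
    hUconn.subset_left_of_subset_union hV₂ hV₁ hdisj hcover hexists
  have hUconst : ∀ x ∈ U, u x = m := fun x hx => (hUsub hx).2
  -- take the limit along the segment towards y₁
  have hy₁cl : y₁ ∈ closure U := by
    have hcontseg : Continuous fun t : ℝ => x₀ + t • (y₁ - x₀) :=
      continuous_const.add (continuous_id.smul continuous_const)
    have hval : x₀ + (1:ℝ) • (y₁ - x₀) = y₁ := by
      rw [one_smul]; abel
    have htend : Filter.Tendsto (fun t : ℝ => x₀ + t • (y₁ - x₀))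
        (nhdsWithin 1 (Set.Iio 1)) (nhds y₁) := by
      have h := (hcontseg.tendsto 1).mono_left
        (nhdsWithin_le_nhds : nhdsWithin (1:ℝ) (Set.Iio 1) ≤ nhds 1)
      rw [hval] at h
      exact h
    apply mem_closure_of_frequently_of_tendsto _ htend
    have hIoo : Set.Ioo (σ₂/σ₁) 1 ∈ nhdsWithin (1:ℝ) (Set.Iio 1) :=
      Ioo_mem_nhdsLT_of_mem ⟨(div_lt_one hσ₁pos).2 hσ₂₁, le_refl 1⟩
    apply Filter.Eventually.frequently
    filter_upwards [hIoo] with t ht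
    have ht1 : σ₂/σ₁ < t := ht.1
    have ht2 : t < 1 := ht.2
    have htpos : 0 < t := lt_of_le_of_lt (le_of_lt (div_pos hσ₂pos hσ₁pos)) ht1
    have hd : dist (x₀ + t • (y₁ - x₀)) x₀ = t * σ₁ := by
      rw [dist_eq_norm, add_sub_cancel_left, norm_smul, Real.norm_eq_abs,
        abs_of_pos htpos, ← dist_eq_norm]
    rw [hUdef, mem_diff, Metric.mem_ball, Metric.mem_closedBall, not_le, hd]
    constructor
    · nlinarith
    · rw [div_lt_iff₀ hσ₁pos] at ht1
      linarith
  have hNeBot : (nhdsWithin y₁ U).NeBot := mem_closure_iff_nhdsWithin_neBot.1 hy₁cl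
  have ht1 : Filter.Tendsto u (nhdsWithin y₁ U) (nhds (u y₁)) :=
    (hcont y₁ hy₁D).mono_left (nhdsWithin_mono y₁ hUD)
  have ht2 : Filter.Tendsto u (nhdsWithin y₁ U) (nhds m) := by
    apply Filter.Tendsto.congr' _ (tendsto_const_nhds : Filter.Tendsto (fun _ => m) _ _)
    filter_upwards [self_mem_nhdsWithin] with x hx
    exact (hUconst x hx).symm
  have huy₁ : u y₁ = m := tendsto_nhds_unique ht1 ht2
  have : β - ε < m := by rw [← huy₁]; exact hy₁u
  have h4ε : 4 * ε ≤ β - α := by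
    rw [hkey]
    nlinarith
  linarith
end

section
/- Let μ be a Borel measure on ℝⁿ that is positive and finite on all open balls, let Ω ⊆ ℝⁿ be open, and let u : Ω → (-∞, ∞] be lower semicontinuous. Suppose there exist σ > 0 and c > 0 such that the following weak Harnack property holds: for every open ball B(y,r) with B(y,5r) ⊆ Ω and every κ ∈ ℝ with u + κ > 0 on B(y,5r), one has ((1/μ(B(y,r))) ∫_{B(y,r)} (u+κ)^σ dμ)^{1/σ} ≤ c · inf_{B(y,3r)} (u + κ). Let x ∈ Ω and α ∈ ℝ, and assume that limsup_{r→0} μ({y ∈ B(x,r) : u(y) ≥ α}) / μ(B(x,r)) > 0. Then u(x) ≥ α. -/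
open MeasureTheory Set

/-- The canonical map `EReal → ℝ≥0∞` (sending `⊤` to `⊤` and negative values to `0`). -/
noncomputable def erealToENNReal (x : EReal) : ENNReal :=
  if x = ⊤ then ⊤ else ENNReal.ofReal x.toReal

lemma erealToENNReal_coe (x : ℝ) : erealToENNReal x = ENNReal.ofReal x := by
  simp [erealToENNReal]

lemma erealToENNReal_mono {a b : EReal} (h : a ≤ b) :
    erealToENNReal a ≤ erealToENNReal b := by
  unfold erealToENNReal
  rcases eq_or_ne b ⊤ with hb | hb
  · simp [hb]
  · have ha : a ≠ ⊤ := fun h' => hb (top_le_iff.1 (h' ▸ h))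
    rw [if_neg ha, if_neg hb]
    rcases eq_or_ne a ⊥ with hab | hab
    · simp [hab]
    · exact ENNReal.ofReal_le_ofReal (EReal.toReal_le_toReal h hab hb)

/-- **Density point lemma for functions with a weak Harnack property.**
Let `μ` be a Borel measure on `ℝⁿ`, positive and finite on open balls, `Ω ⊆ ℝⁿ` open
and `u : Ω → (-∞,∞]` lower semicontinuous, satisfying the weak Harnack inequality:
for all balls `B(y,r)` with `B(y,5r) ⊆ Ω` and all `κ ∈ ℝ` with `u + κ > 0` on
`B(y,5r)`,
`((1/μ(B(y,r))) ∫_{B(y,r)} (u+κ)^σ dμ)^{1/σ} ≤ c · inf_{B(y,3r)} (u+κ)`.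
If `x ∈ Ω`, `α ∈ ℝ` and `limsup_{r→0} μ({y ∈ B(x,r) : u(y) ≥ α})/μ(B(x,r)) > 0`,
then `u(x) ≥ α`. -/
theorem ge_of_density_of_weak_harnack
    (n : ℕ) (μ : Measure (EuclideanSpace ℝ (Fin n)))
    (hμ : ∀ (y : EuclideanSpace ℝ (Fin n)) (r : ℝ), 0 < r →
      0 < μ (Metric.ball y r) ∧ μ (Metric.ball y r) < ⊤)
    (Ω : Set (EuclideanSpace ℝ (Fin n))) (hΩ : IsOpen Ω)
    (u : EuclideanSpace ℝ (Fin n) → EReal)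
    (hlsc : LowerSemicontinuousOn u Ω) (hnb : ∀ z ∈ Ω, u z ≠ ⊥)
    (σ c : ℝ) (hσ : 0 < σ) (hc : 0 < c)
    (hwh : ∀ (y : EuclideanSpace ℝ (Fin n)) (r : ℝ) (κ : ℝ), 0 < r →
      Metric.ball y (5 * r) ⊆ Ω →
      (∀ z ∈ Metric.ball y (5 * r), 0 < u z + (κ : EReal)) →
      ((∫⁻ z in Metric.ball y r, (erealToENNReal (u z + (κ : EReal))) ^ σ ∂μ) /
          μ (Metric.ball y r)) ^ (1 / σ) ≤
        ENNReal.ofReal c *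
          erealToENNReal (⨅ z ∈ Metric.ball y (3 * r), (u z + (κ : EReal))))
    (x : EuclideanSpace ℝ (Fin n)) (hx : x ∈ Ω) (α : ℝ)
    (hdens : 0 < Filter.limsup
      (fun r : ℝ => μ {y ∈ Metric.ball x r | (α : EReal) ≤ u y} / μ (Metric.ball x r))
      (nhdsWithin 0 (Set.Ioi 0))) :
    (α : EReal) ≤ u x := by
  by_contra hcon
  rw [not_le] at hcon
  have hbot : u x ≠ ⊥ := hnb x hx
  have htop : u x ≠ ⊤ := ne_top_of_lt hcon
  set b := (u x).toReal with hbdef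
  have hub : u x = (b : EReal) := (EReal.coe_toReal htop hbot).symm
  have hba : b < α := by
    have h := hcon
    rw [hub] at h
    exact_mod_cast h
  -- a positive density value δ0 below the limsup
  obtain ⟨δ0, hδ0pos, hδ0lt⟩ := exists_between hdens
  have hδ0top : δ0 ≠ ⊤ := ne_top_of_lt hδ0lt
  have hfreq : ∃ᶠ r in nhdsWithin (0:ℝ) (Set.Ioi 0),
      δ0 < μ {y ∈ Metric.ball x r | (α : EReal) ≤ u y} / μ (Metric.ball x r) :=
    Filter.frequently_lt_of_lt_limsup (by isBoundedDefault) hδ0lt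
  -- the key positive constant and the choice of ε
  set K := ENNReal.ofReal (α - b) * δ0 ^ (1/σ) with hKdef
  have hK0 : K ≠ 0 := by
    apply mul_ne_zero
    · simpa using sub_pos.2 hba
    · exact (ENNReal.rpow_pos hδ0pos hδ0top).ne'
  have hKtop : K ≠ ⊤ :=
    ENNReal.mul_ne_top ENNReal.ofReal_ne_top
      (ENNReal.rpow_lt_top_of_nonneg (by positivity) hδ0top).ne
  set ε := K.toReal / (2 * c) with hεdef
  have hεpos : 0 < ε := div_pos (ENNReal.toReal_pos hK0 hKtop) (by linarith)
  -- lower semicontinuity at x gives a ball on which u > b - ε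
  have hnhd : {z | ((b - ε : ℝ) : EReal) < u z} ∩ Ω ∈ nhds x := by
    have h1 : ∀ᶠ z in nhdsWithin x Ω, ((b - ε : ℝ) : EReal) < u z := by
      apply hlsc x hx
      rw [hub]
      exact_mod_cast sub_lt_self b hεpos
    rw [nhdsWithin_eq_nhds.2 (hΩ.mem_nhds hx)] at h1
    exact Filter.inter_mem h1 (hΩ.mem_nhds hx)
  obtain ⟨r1, hr1pos, hr1sub⟩ := Metric.mem_nhds_iff.1 hnhd
  -- choose a small radius with large density
  obtain ⟨r, hr, hrI⟩ :=
    (hfreq.and_eventually (Ioo_mem_nhdsGT_of_mem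
      (show (0:ℝ) ∈ Ico 0 (r1/5) from ⟨le_refl _, by positivity⟩))).exists
  obtain ⟨hr0, hr5⟩ := hrI
  have hball5 : Metric.ball x (5*r) ⊆ Metric.ball x r1 :=
    Metric.ball_subset_ball (by nlinarith)
  set κ := ε - b with hκdef
  have hposball : ∀ z ∈ Metric.ball x (5*r), (0:EReal) < u z + (κ : EReal) := by
    intro z hz
    have h2 : ((b - ε : ℝ) : EReal) < u z := (hr1sub (hball5 hz)).1
    have h3 := EReal.add_lt_add_right_coe h2 κ
    have h0 : ((b - ε : ℝ) : EReal) + (κ : EReal) = 0 := by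
      rw [← EReal.coe_add]
      norm_num [hκdef]
    rwa [h0] at h3
  have hsubΩ : Metric.ball x (5*r) ⊆ Ω := fun z hz => (hr1sub (hball5 hz)).2
  have hmain := hwh x r κ hr0 hsubΩ hposball
  -- bound the right-hand side: the infimum is at most u x + κ = ε
  have hinf : (⨅ z ∈ Metric.ball x (3*r), (u z + (κ:EReal))) ≤ ((ε:ℝ) : EReal) := by
    have hx3 : x ∈ Metric.ball x (3*r) := Metric.mem_ball_self (by linarith)
    refine le_trans (iInf₂_le x hx3) (le_of_eq ?_)
    rw [hub, ← EReal.coe_add]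
    norm_num [hκdef]
  have hRHS : ENNReal.ofReal c *
      erealToENNReal (⨅ z ∈ Metric.ball x (3*r), (u z + (κ:EReal))) ≤
      ENNReal.ofReal c * ENNReal.ofReal ε :=
    mul_le_mul_right (le_trans (erealToENNReal_mono hinf)
      (le_of_eq (erealToENNReal_coe ε))) _
  -- the measurable superlevel set
  set M := {y | y ∈ Ω ∧ (α : EReal) ≤ u y} with hMdef
  have hM : MeasurableSet M := by
    have heq : M = ⋂ m : ℕ, {y | y ∈ Ω ∧ ((α - 1/(m+1) : ℝ) : EReal) < u y} := by
      ext y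
      simp only [hMdef, mem_setOf_eq, mem_iInter]
      constructor
      · rintro ⟨hy, hle⟩ m
        refine ⟨hy, lt_of_lt_of_le ?_ hle⟩
        exact_mod_cast sub_lt_self α (by positivity)
      · intro h
        refine ⟨(h 0).1, ?_⟩
        by_contra hlt
        rw [not_le] at hlt
        have hne := hnb y (h 0).1
        have hnt : u y ≠ ⊤ := ne_top_of_lt hlt
        have hut : u y = ((u y).toReal : EReal) := (EReal.coe_toReal hnt hne).symm
        have htα : (u y).toReal < α := by
          rw [hut] at hlt
          exact_mod_cast hlt
        obtain ⟨m, hm⟩ := exists_nat_one_div_lt (sub_pos.2 htα)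
        have h2 := (h m).2
        rw [hut] at h2
        have h3 : (α - 1/(m+1) : ℝ) < (u y).toReal := by exact_mod_cast h2
        linarith
    rw [heq]
    refine MeasurableSet.iInter fun m => IsOpen.measurableSet ?_
    rw [isOpen_iff_mem_nhds]
    rintro y ⟨hyΩ, hyu⟩
    have h1 := hlsc y hyΩ _ hyu
    rw [nhdsWithin_eq_nhds.2 (hΩ.mem_nhds hyΩ)] at h1
    filter_upwards [h1, hΩ.mem_nhds hyΩ] with z hz1 hz2
    exact ⟨hz2, hz1⟩
  -- the density set equals M ∩ B
  have hBΩ : Metric.ball x r ⊆ Ω :=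
    fun z hz => hsubΩ (Metric.ball_subset_ball (by linarith) hz)
  have hEM : {y ∈ Metric.ball x r | (α : EReal) ≤ u y} = M ∩ Metric.ball x r := by
    ext y
    simp only [hMdef, mem_setOf_eq, mem_inter_iff]
    exact ⟨fun ⟨h1, h2⟩ => ⟨⟨hBΩ h1, h2⟩, h1⟩, fun ⟨⟨_, h2⟩, h1⟩ => ⟨h1, h2⟩⟩
  -- lower bound for the integral
  have hαb : ((α : ℝ) : EReal) + (κ : EReal) = ((α + κ : ℝ) : EReal) := by
    rw [← EReal.coe_add]
  have hint : ENNReal.ofReal (α + κ) ^ σ * μ {y ∈ Metric.ball x r | (α : EReal) ≤ u y} ≤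
      ∫⁻ z in Metric.ball x r, (erealToENNReal (u z + (κ : EReal))) ^ σ ∂μ := by
    have hstep : ∀ z, M.indicator (fun _ => ENNReal.ofReal (α + κ) ^ σ) z ≤
        (erealToENNReal (u z + (κ : EReal))) ^ σ := by
      intro z
      rcases em (z ∈ M) with hz | hz
      · rw [indicator_of_mem hz]
        refine ENNReal.rpow_le_rpow ?_ hσ.le
        rw [← erealToENNReal_coe (α + κ)]
        refine erealToENNReal_mono ?_
        rw [← hαb]
        exact add_le_add_left hz.2 _
      · rw [indicator_of_notMem hz]
        exact zero_le
    calc ENNReal.ofReal (α + κ) ^ σ * μ {y ∈ Metric.ball x r | (α : EReal) ≤ u y}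
        = ∫⁻ z in Metric.ball x r,
            M.indicator (fun _ => ENNReal.ofReal (α + κ) ^ σ) z ∂μ := by
          rw [lintegral_indicator_const hM, Measure.restrict_apply hM, ← hEM]
      _ ≤ _ := lintegral_mono hstep
  have hdiv : ENNReal.ofReal (α + κ) ^ σ *
      (μ {y ∈ Metric.ball x r | (α : EReal) ≤ u y} / μ (Metric.ball x r)) ≤
      (∫⁻ z in Metric.ball x r, (erealToENNReal (u z + (κ : EReal))) ^ σ ∂μ) /
        μ (Metric.ball x r) := by
    rw [← mul_div_assoc]
    exact ENNReal.div_le_div_right hint _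
  have hLHS : ENNReal.ofReal (α + κ) *
      (μ {y ∈ Metric.ball x r | (α : EReal) ≤ u y} / μ (Metric.ball x r)) ^ (1/σ) ≤
      ((∫⁻ z in Metric.ball x r, (erealToENNReal (u z + (κ : EReal))) ^ σ ∂μ) /
        μ (Metric.ball x r)) ^ (1/σ) := by
    have h1 := ENNReal.rpow_le_rpow hdiv (by positivity : (0:ℝ) ≤ 1/σ)
    rwa [ENNReal.mul_rpow_of_nonneg _ _ (by positivity : (0:ℝ) ≤ 1/σ),
      ← ENNReal.rpow_mul, mul_one_div_cancel hσ.ne', ENNReal.rpow_one] at h1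
  -- assemble the chain of inequalities
  have hchain : K ≤ ENNReal.ofReal c * ENNReal.ofReal ε := by
    calc K = ENNReal.ofReal (α - b) * δ0 ^ (1/σ) := hKdef
      _ ≤ ENNReal.ofReal (α + κ) *
            (μ {y ∈ Metric.ball x r | (α : EReal) ≤ u y} / μ (Metric.ball x r)) ^ (1/σ) := by
          refine mul_le_mul' (ENNReal.ofReal_le_ofReal (by rw [hκdef]; linarith)) ?_
          exact ENNReal.rpow_le_rpow hr.le (by positivity)
      _ ≤ _ := hLHS
      _ ≤ _ := hmain
      _ ≤ _ := hRHS
  have hlt : ENNReal.ofReal c * ENNReal.ofReal ε < K := by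
    rw [← ENNReal.ofReal_mul hc.le]
    have hce : c * ε = K.toReal / 2 := by
      rw [hεdef]
      field_simp
    rw [hce]
    calc ENNReal.ofReal (K.toReal/2) < ENNReal.ofReal K.toReal := by
          rw [ENNReal.ofReal_lt_ofReal_iff (ENNReal.toReal_pos hK0 hKtop)]
          exact half_lt_self (ENNReal.toReal_pos hK0 hKtop)
      _ = K := ENNReal.ofReal_toReal hKtop
  exact absurd hchain (not_le.2 hlt)
end
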